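/- arXiv:1710.11314 — 13 statements merged into one kernel-verified Lean document; each statement's English description precedes it below -/
import Mathlib

section
/- Let K = 𝔽_q be a finite field with q elements and let 𝒢 be a simple graph with n vertices and m connected components, of which ε are non-bipartite. Then the cardinality of the affine algebraic toric set X*_𝒢 parameterized by the edges of 𝒢 equals (q−1)^{n−m+ε} if 2 does not divide q−1, and equals (q−1)^{n−m+ε}/2^ε if 2 divides q−1. -/
/-- The affine algebraic toric set parameterized by the edges of a simple graph `G`:
the set of tuples `(x^{e₁}, …, x^{e_s})` where `x : V → K` has all coordinates nonzero and
`x^{e}` is the product of the values of `x` at the two endpoints of the edge `e`. -/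
def graphToricSet {V : Type} (G : SimpleGraph V) (K : Type) [Field K] :
    Set (G.edgeSet → K) :=
  {y | ∃ x : V → K, (∀ v, x v ≠ 0) ∧
    ∀ e : G.edgeSet,
      y e = Sym2.lift ⟨fun a b => x a * x b, fun a b => mul_comm (x a) (x b)⟩ (e : Sym2 V)}

variable {V : Type} (G : SimpleGraph V) (K : Type) [Field K]

noncomputable def phi : (V → Kˣ) →* (G.edgeSet → Kˣ) where
  toFun x e := Sym2.lift ⟨fun a b => x a * x b, fun a b => mul_comm (x a) (x b)⟩ (e : Sym2 V)
  map_one' := by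
    funext e
    obtain ⟨e, he⟩ := e
    induction e using Sym2.inductionOn with
    | hf a b => simp
  map_mul' x y := by
    funext e
    obtain ⟨e, he⟩ := e
    induction e using Sym2.inductionOn with
    | hf a b =>
      simp only [Pi.mul_apply, Sym2.lift_mk]
      exact mul_mul_mul_comm _ _ _ _

theorem mem_ker_iff (x : V → Kˣ) :
    x ∈ (phi G K).ker ↔ ∀ ⦃a b⦄, G.Adj a b → x a * x b = 1 := by
  constructor
  · intro h a b hab
    have := congrFun h ⟨s(a, b), hab⟩
    simpa [phi] using this
  · intro h
    funext e
    obtain ⟨e, he⟩ := e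
    induction e using Sym2.inductionOn with
    | hf a b => simpa [phi] using h he

theorem toricSet_eq_image :
    graphToricSet G K =
      (fun y : G.edgeSet → Kˣ => fun e => (y e : K)) '' Set.range (phi G K) := by
  ext y
  constructor
  · rintro ⟨x, hx, hy⟩
    refine ⟨phi G K (fun v => Units.mk0 (x v) (hx v)), ⟨_, rfl⟩, ?_⟩
    funext e
    rw [hy e]
    obtain ⟨e, he⟩ := e
    induction e using Sym2.inductionOn with
    | hf a b => simp [phi]
  · rintro ⟨z, ⟨x, rfl⟩, rfl⟩
    refine ⟨fun v => (x v : K), fun v => (x v).ne_zero, fun e => ?_⟩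
    obtain ⟨e, he⟩ := e
    induction e using Sym2.inductionOn with
    | hf a b => simp [phi]

theorem ncard_toricSet_eq :
    (graphToricSet G K).ncard = Nat.card (Set.range (phi G K)) := by
  rw [toricSet_eq_image, Set.ncard_image_of_injective, Nat.card_coe_set_eq]
  intro a b hab
  funext e
  exact Units.ext (congrFun hab e)

theorem card_mul_card [Fintype K] :
    Nat.card (Set.range (phi G K)) * Nat.card (phi G K).ker = Nat.card (V → Kˣ) := by
  rw [Subgroup.card_eq_card_quotient_mul_card_subgroup (phi G K).ker]
  congr 1
  rw [Nat.card_congr (QuotientGroup.quotientKerEquivRange (phi G K)).toEquiv]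
  rfl

variable {G K}

theorem ker_pair {x : V → Kˣ} (hx : ∀ ⦃a b⦄, G.Adj a b → x a * x b = 1)
    {u v : V} (h : G.Reachable u v) : x v = x u ∨ x v = (x u)⁻¹ := by
  obtain ⟨p⟩ := h
  induction p with
  | nil => exact Or.inl rfl
  | cons h p ih =>
    rename_i a b c
    have hb : x b = (x a)⁻¹ := eq_inv_of_mul_eq_one_right (hx h)
    rcases ih with h1 | h1
    · exact Or.inr (h1.trans hb)
    · exact Or.inl (by rw [h1, hb, inv_inv])

theorem ker_eq_on {x y : V → Kˣ} (hx : ∀ ⦃a b⦄, G.Adj a b → x a * x b = 1)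
    (hy : ∀ ⦃a b⦄, G.Adj a b → y a * y b = 1)
    {u v : V} (h : G.Reachable u v) (huv : x u = y u) : x v = y v := by
  obtain ⟨p⟩ := h
  induction p with
  | nil => exact huv
  | cons h p ih =>
    rename_i a b c
    apply ih
    have h1 : x b = (x a)⁻¹ := eq_inv_of_mul_eq_one_right (hx h)
    have h2 : y b = (y a)⁻¹ := eq_inv_of_mul_eq_one_right (hy h)
    rw [h1, h2, huv]

theorem sq_eq_one_of_nonbipartite {x : V → Kˣ} (hx : ∀ ⦃a b⦄, G.Adj a b → x a * x b = 1)
    {c : G.ConnectedComponent} (hc : ¬ (G.induce c.supp).Colorable 2)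
    {v : V} (hv : v ∈ c.supp) : (x v) ^ 2 = 1 := by
  classical
  by_contra hsq
  apply hc
  refine ⟨SimpleGraph.Coloring.mk (fun w => if x w.val = x v then 0 else 1) ?_⟩
  intro a b hab hcol
  have hadj : G.Adj a.val b.val := hab
  rw [SimpleGraph.ConnectedComponent.mem_supp_iff] at hv
  have hra : G.Reachable v a.val := SimpleGraph.ConnectedComponent.eq.mp
      (hv.trans ((SimpleGraph.ConnectedComponent.mem_supp_iff c a.val).mp a.prop).symm)
  have hrb : G.Reachable v b.val := SimpleGraph.ConnectedComponent.eq.mp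
      (hv.trans ((SimpleGraph.ConnectedComponent.mem_supp_iff c b.val).mp b.prop).symm)
  have hne : x v ≠ (x v)⁻¹ := fun h => hsq (by rw [sq]; nth_rewrite 2 [h]; simp)
  have hab2 : x b.val = (x a.val)⁻¹ := eq_inv_of_mul_eq_one_right (hx hadj)
  rcases ker_pair hx hra with h1 | h1 <;> rcases ker_pair hx hrb with h2 | h2
  · rw [h1, h2] at hab2; exact hne hab2
  · simp only [h1, h2, if_pos rfl, if_neg (fun h : (x v)⁻¹ = x v => hne h.symm)] at hcol
    exact absurd hcol (by decide)
  · simp only [h1, h2, if_pos rfl, if_neg (fun h : (x v)⁻¹ = x v => hne h.symm)] at hcol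
    exact absurd hcol (by decide)
  · rw [h1, h2, inv_inv] at hab2; exact hne hab2.symm

open scoped Classical in
open SimpleGraph in
noncomputable def pick (f : G.ConnectedComponent → Kˣ) (c : G.ConnectedComponent)
    (v : V) (hv : v ∈ c.supp) : Kˣ :=
  if hc : (G.induce c.supp).Colorable 2 then
    (if hc.some ⟨v, hv⟩ = hc.some ⟨Quot.out c, (ConnectedComponent.mem_supp_iff c _).mpr c.out_eq⟩
      then f c else (f c)⁻¹)
  else f c

theorem pick_congr (f : G.ConnectedComponent → Kˣ) {c c' : G.ConnectedComponent}
    (h : c = c') (v : V) (hv : v ∈ c.supp) (hv' : v ∈ c'.supp) :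
    pick f c v hv = pick f c' v hv' := by subst h; rfl

theorem pick_out (f : G.ConnectedComponent → Kˣ) (c : G.ConnectedComponent) :
    pick f c (Quot.out c) ((SimpleGraph.ConnectedComponent.mem_supp_iff c _).mpr c.out_eq) = f c := by
  unfold pick
  split
  · rw [if_pos rfl]
  · rfl

theorem pick_mul (f : G.ConnectedComponent → Kˣ)
    (hf : ∀ c, ¬ (G.induce c.supp).Colorable 2 → (f c) ^ 2 = 1)
    (c : G.ConnectedComponent) {a b : V} (ha : a ∈ c.supp) (hb : b ∈ c.supp)
    (hab : G.Adj a b) : pick f c a ha * pick f c b hb = 1 := by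
  unfold pick
  split
  · rename_i hc
    have hvalid : hc.some ⟨a, ha⟩ ≠ hc.some ⟨b, hb⟩ :=
      hc.some.valid (by exact hab : (G.induce c.supp).Adj ⟨a, ha⟩ ⟨b, hb⟩)
    have key : ∀ u v r : Fin 2, u ≠ v → ((u = r) ↔ ¬ (v = r)) := by decide
    by_cases h1 : hc.some ⟨a, ha⟩ = hc.some ⟨Quot.out c, (SimpleGraph.ConnectedComponent.mem_supp_iff c _).mpr c.out_eq⟩
    · rw [if_pos h1, if_neg ((key _ _ _ hvalid).mp h1), mul_inv_cancel]
    · rw [if_neg h1, if_pos (not_not.mp (fun h2 => h1 ((key _ _ _ hvalid).mpr h2))), inv_mul_cancel]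
  · rename_i hc
    rw [← sq]
    exact hf c hc

theorem card_ker :
    Nat.card (phi G K).ker =
      Nat.card {f : G.ConnectedComponent → Kˣ //
        ∀ c, ¬ (G.induce c.supp).Colorable 2 → (f c) ^ 2 = 1} := by
  apply Nat.card_congr
  refine Equiv.ofBijective (fun x => ⟨fun c => x.val (Quot.out c), fun c hc =>
    sq_eq_one_of_nonbipartite ((mem_ker_iff G K x.val).mp x.prop) hc
      ((SimpleGraph.ConnectedComponent.mem_supp_iff c _).mpr c.out_eq)⟩) ⟨?_, ?_⟩
  · intro x y hxy
    have hx := (mem_ker_iff G K x.val).mp x.prop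
    have hy := (mem_ker_iff G K y.val).mp y.prop
    apply Subtype.ext; funext v
    have h := congrFun (congrArg Subtype.val hxy) (G.connectedComponentMk v)
    exact ker_eq_on hx hy
      (SimpleGraph.ConnectedComponent.eq.mp ((G.connectedComponentMk v).out_eq)) h
  · rintro ⟨f, hf⟩
    refine ⟨⟨fun v => pick f (G.connectedComponentMk v) v
      ((SimpleGraph.ConnectedComponent.mem_supp_iff _ _).mpr rfl), ?_⟩, ?_⟩
    · rw [mem_ker_iff]
      intro a b hab
      have hmk : G.connectedComponentMk b = G.connectedComponentMk a :=
        SimpleGraph.ConnectedComponent.eq.mpr hab.symm.reachable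
      rw [pick_congr f hmk b ((SimpleGraph.ConnectedComponent.mem_supp_iff _ _).mpr rfl)
        ((SimpleGraph.ConnectedComponent.mem_supp_iff _ _).mpr hmk)]
      exact pick_mul f hf (G.connectedComponentMk a) _ _ hab
    · apply Subtype.ext; funext c
      simp only
      exact (pick_congr f (c.out_eq) (Quot.out c)
        ((SimpleGraph.ConnectedComponent.mem_supp_iff _ _).mpr rfl)
        ((SimpleGraph.ConnectedComponent.mem_supp_iff _ _).mpr c.out_eq)).trans (pick_out f c)


theorem card_sqrt_one (K : Type) [Field K] [Fintype K] :
    Nat.card {t : Kˣ // t ^ 2 = 1} =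
      if 2 ∣ Fintype.card K - 1 then 2 else 1 := by
  have hchar : 2 ∣ Fintype.card K - 1 ↔ ringChar K ≠ 2 := by
    have h1 : 1 ≤ Fintype.card K := Fintype.card_pos
    constructor
    · intro h h2
      have := FiniteField.even_card_iff_char_two.mp h2
      omega
    · intro h2
      have := FiniteField.odd_card_of_char_ne_two h2
      omega
  by_cases h2 : ringChar K = 2
  · rw [if_neg (fun h => (hchar.mp h) h2)]
    haveI : Unique {t : Kˣ // t ^ 2 = 1} := by
      refine ⟨⟨⟨1, one_pow 2⟩⟩, ?_⟩
      rintro ⟨t, ht⟩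
      apply Subtype.ext
      apply Units.ext
      have ht' : (t : K) ^ 2 = 1 := by
        have := congrArg (Units.val) ht
        push_cast at this
        simpa using this
      rcases sq_eq_one_iff.mp ht' with h | h
      · exact h
      · rw [h]
        haveI : CharP K 2 := h2 ▸ ringChar.charP K
        simpa using (CharTwo.neg_eq (1 : K))
    exact Nat.card_unique
  · rw [if_pos (hchar.mpr h2)]
    have hne : (-1 : Kˣ) ≠ (1 : Kˣ) := by
      intro h
      have : (-1 : K) = 1 := by
        have := congrArg Units.val h
        push_cast at this
        simpa using this
      exact (Ring.neg_one_ne_one_of_char_ne_two h2) this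
    have hset : {t : Kˣ | t ^ 2 = 1} = {1, -1} := by
      ext t
      simp only [Set.mem_setOf_eq, Set.mem_insert_iff, Set.mem_singleton_iff]
      constructor
      · intro ht
        have ht' : (t : K) ^ 2 = 1 := by
          have := congrArg (Units.val) ht
          push_cast at this
          simpa using this
        rcases sq_eq_one_iff.mp ht' with h | h
        · exact Or.inl (Units.ext h)
        · exact Or.inr (Units.ext (by rw [h]; simp))
      · rintro (rfl | rfl) <;> simp
    calc Nat.card {t : Kˣ // t ^ 2 = 1} = ({1, -1} : Set Kˣ).ncard := by
          rw [← hset, ← Nat.card_coe_set_eq]; rfl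
      _ = 2 := Set.ncard_pair hne.symm

theorem card_constraint {ι A : Type} [Fintype ι] [Finite A] (P : ι → Prop) (Q : A → Prop) :
    Nat.card {f : ι → A // ∀ i, P i → Q (f i)} =
      (Nat.card {a : A // Q a}) ^ (Nat.card {i : ι // P i}) *
        (Nat.card A) ^ (Fintype.card ι - Nat.card {i : ι // P i}) := by
  classical
  rw [Nat.card_congr (Equiv.subtypePiEquivPi (p := fun i a => P i → Q a)), Nat.card_pi]
  have key : ∀ i, Nat.card {a : A // P i → Q a} =
      if P i then Nat.card {a : A // Q a} else Nat.card A := by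
    intro i
    by_cases h : P i
    · rw [if_pos h]
      exact Nat.card_congr (Equiv.subtypeEquivRight (fun a => ⟨fun g => g h, fun g _ => g⟩))
    · rw [if_neg h]
      exact Nat.card_congr (Equiv.subtypeUnivEquiv (fun a ha => absurd ha h))
  rw [Finset.prod_congr rfl (fun i _ => key i), Finset.prod_ite, Finset.prod_const,
    Finset.prod_const]
  have h1 : (Finset.univ.filter P).card = Nat.card {i : ι // P i} := by
    rw [Nat.card_eq_fintype_card, Fintype.card_subtype]
  have h2 : (Finset.univ.filter (fun i => ¬ P i)).card =
      Fintype.card ι - Nat.card {i : ι // P i} := by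
    have := Finset.card_filter_add_card_filter_not (s := Finset.univ) (p := P)
    rw [Finset.card_univ] at this
    omega
  rw [h1, h2]

/-- Let `K = 𝔽_q` and let `G` be a simple graph with `n` vertices and `m`
connected components, of which `ε` are non-bipartite. Then the cardinality of the affine
algebraic toric set `X*_G` equals `(q−1)^(n−m+ε)` if `2 ∤ q−1`, and `(q−1)^(n−m+ε)/2^ε`
if `2 ∣ q−1`. -/
theorem card_graphToricSet (q n m ε : ℕ) (K : Type) [Field K] [Fintype K]
    (hq : Fintype.card K = q)
    (V : Type) [Fintype V] (G : SimpleGraph V)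
    (hn : Fintype.card V = n)
    (hm : Nat.card G.ConnectedComponent = m)
    (hε : Nat.card {c : G.ConnectedComponent // ¬ (G.induce c.supp).Colorable 2} = ε) :
    (graphToricSet G K).ncard =
      if 2 ∣ q - 1 then (q - 1) ^ (n - m + ε) / 2 ^ ε else (q - 1) ^ (n - m + ε) := by
  classical
  haveI : Fintype G.ConnectedComponent := Fintype.ofFinite _
  have hq2 : 2 ≤ q := hq ▸ Fintype.one_lt_card
  have hu : Fintype.card Kˣ = q - 1 := by rw [Fintype.card_units, hq]
  -- domain cardinality
  have hdom : Nat.card (V → Kˣ) = (q - 1) ^ n := by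
    rw [Nat.card_fun, Nat.card_eq_fintype_card, Nat.card_eq_fintype_card, hu, hn]
  -- kernel cardinality
  have hεm : ε ≤ m := by
    rw [← hε, ← hm]
    exact Nat.card_le_card_of_injective _ Subtype.val_injective
  have hmn : m ≤ n := by
    rw [← hm, ← hn, ← Nat.card_eq_fintype_card]
    exact Nat.card_le_card_of_surjective _ (Quot.exists_rep)
  have hker : Nat.card (phi G K).ker =
      (Nat.card {t : Kˣ // t ^ 2 = 1}) ^ ε * (q - 1) ^ (m - ε) := by
    have hcc := card_constraint (ι := G.ConnectedComponent) (A := Kˣ)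
      (fun c => ¬ (G.induce c.supp).Colorable 2) (fun t => t ^ 2 = 1)
    rw [card_ker, hcc, hε, Nat.card_eq_fintype_card (α := Kˣ), hu,
      ← Nat.card_eq_fintype_card, hm]
  have hmul := card_mul_card G K
  rw [← ncard_toricSet_eq G K, hdom, hker] at hmul
  have hsplit : (q - 1) ^ n = (q - 1) ^ (n - m + ε) * (q - 1) ^ (m - ε) := by
    rw [← pow_add]
    congr 1
    omega
  have hpos : 0 < (q - 1) ^ (m - ε) := Nat.pow_pos (by omega)
  have hμ := card_sqrt_one K
  rw [hq] at hμ
  by_cases hdvd : 2 ∣ q - 1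
  · rw [if_pos hdvd]
    rw [if_pos hdvd] at hμ
    rw [hμ] at hmul
    have h2 : (graphToricSet G K).ncard * 2 ^ ε = (q - 1) ^ (n - m + ε) := by
      have := hmul.trans hsplit
      rw [← mul_assoc] at this
      exact Nat.eq_of_mul_eq_mul_right hpos this
    rw [← h2]
    rw [Nat.mul_div_cancel _ (Nat.pow_pos (by norm_num))]
  · rw [if_neg hdvd]
    rw [if_neg hdvd] at hμ
    rw [hμ, one_pow, one_mul] at hmul
    have := hmul.trans hsplit
    exact Nat.eq_of_mul_eq_mul_right hpos this
end

section
/- Let K = 𝔽_q be a finite field with q elements and let 𝒢 be a graph with m connected components, each of which is a cycle of odd length k. Then the cardinality of the affine algebraic toric set X*_𝒢 equals (q−1)^{km} if 2 does not divide q−1, and equals (q−1)^{km}/2^m if 2 divides q−1. -/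
/-- The affine algebraic toric set parameterized by the disjoint union of `m` cycles of
length `k`: points of `K^{km}` indexed by `Fin m × Fin k`, where the coordinate `(i, j)`
(the `j`-th edge of the `i`-th cycle) is `x (i, j) * x (i, j+1)`, the indices of the
vertices of the `i`-th cycle being taken cyclically. -/
def cyclesToricSet (K : Type) [Field K] (k m : ℕ) : Set (Fin m × Fin k → K) :=
  {y | ∃ x : Fin m × Fin k → K, (∀ p, x p ≠ 0) ∧
    ∀ p : Fin m × Fin k, y p = x p * x (p.1, finRotate k p.2)}

/-- The edge map as a monoid hom on units. -/
def cycF (K : Type) [Field K] (k m : ℕ) : (Fin m × Fin k → Kˣ) →* (Fin m × Fin k → Kˣ) where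
  toFun x := fun p => x p * x (p.1, finRotate k p.2)
  map_one' := by ext p; simp
  map_mul' a b := by
    ext p
    simp [mul_mul_mul_comm]

lemma cycles_eq_image (K : Type) [Field K] (k m : ℕ) :
    cyclesToricSet K k m = (fun u : Fin m × Fin k → Kˣ => fun p => (u p : K)) ''
      Set.range (cycF K k m) := by
  ext y
  constructor
  · rintro ⟨x, hx, hy⟩
    refine ⟨cycF K k m (fun p => Units.mk0 (x p) (hx p)), ⟨_, rfl⟩, ?_⟩
    funext p
    simp [cycF, hy p]
  · rintro ⟨-, ⟨u, rfl⟩, rfl⟩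
    exact ⟨fun p => (u p : K), fun p => (u p).ne_zero, fun p => by simp [cycF]⟩

section ker

variable {K : Type} [Field K] {k m : ℕ}

open Fin.NatCast

lemma ker_pow [NeZero k] (hk : Odd k) {x : Fin m × Fin k → Kˣ}
    (hx : ∀ p : Fin m × Fin k, x p * x (p.1, finRotate k p.2) = 1) (i : Fin m) (j : Fin k) :
    (∀ n : ℕ, x (i, j + (n : Fin k)) = x (i, j) ^ ((-1 : ℤ) ^ n)) ∧ x (i, j) ^ 2 = 1 := by
  obtain ⟨k', rfl⟩ : ∃ k', k = k' + 1 := ⟨k - 1, by have := Nat.pos_of_ne_zero (NeZero.ne k); omega⟩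
  have key : ∀ n : ℕ, x (i, j + (n : Fin (k' + 1))) = x (i, j) ^ ((-1 : ℤ) ^ n) := by
    intro n
    induction n with
    | zero => simp
    | succ n ih =>
      have h1 : (((n : ℕ) + 1 : ℕ) : Fin (k' + 1)) = (n : Fin (k' + 1)) + 1 := by push_cast; ring
      have h2 : x (i, finRotate (k' + 1) (j + (n : Fin (k' + 1))))
          = (x (i, j + (n : Fin (k' + 1))))⁻¹ :=
        eq_inv_of_mul_eq_one_left (by rw [mul_comm]; exact hx (i, j + (n : Fin (k' + 1))))
      rw [h1, ← add_assoc, ← finRotate_succ_apply, h2, ih, ← zpow_neg, pow_succ, mul_neg_one]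
  refine ⟨key, ?_⟩
  have hkey := key (k' + 1)
  rw [Fin.natCast_self, add_zero, Odd.neg_one_pow hk, zpow_neg_one] at hkey
  have h : x (i, j) * x (i, j) = 1 := by
    nth_rewrite 1 [hkey]; exact inv_mul_cancel _
  rw [sq]; exact h

lemma ker_const [NeZero k] (hk : Odd k) (hk3 : 3 ≤ k) {x : Fin m × Fin k → Kˣ}
    (hx : ∀ p : Fin m × Fin k, x p * x (p.1, finRotate k p.2) = 1) (p : Fin m × Fin k) :
    x p = x (p.1, 0) := by
  haveI : NeZero k := ⟨by omega⟩
  obtain ⟨i, j⟩ := p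
  have h0 := ker_pow hk hx i 0
  have h := h0.1 j.val
  rw [zero_add, Fin.cast_val_eq_self] at h
  have hsq : (x (i, (0 : Fin k)))⁻¹ = x (i, 0) := by
    have h2 := h0.2
    rw [sq] at h2
    exact inv_eq_of_mul_eq_one_right h2
  rcases Nat.even_or_odd j.val with he | ho
  · rw [h, Even.neg_one_pow he, zpow_one]
  · rw [h, Odd.neg_one_pow ho, zpow_neg_one, hsq]

/-- Kernel of `cycF` is equivalent to `m` copies of the set of square roots of unity. -/
noncomputable def kerEquiv [NeZero k] (hk : Odd k) (hk3 : 3 ≤ k) :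
    (cycF K k m).ker ≃ (Fin m → {u : Kˣ // u ^ 2 = 1}) where
  toFun x := fun i => ⟨x.1 (i, 0), by
    have hx : ∀ p : Fin m × Fin k, x.1 p * x.1 (p.1, finRotate k p.2) = 1 := by
      intro p
      have := x.2
      rw [MonoidHom.mem_ker] at this
      exact congrFun this p
    exact (ker_pow hk hx i 0).2⟩
  invFun c := ⟨fun p => (c p.1).1, by
    rw [MonoidHom.mem_ker]
    funext p
    show (c p.1).1 * (c p.1).1 = 1
    rw [← sq]; exact (c p.1).2⟩
  left_inv x := by
    have hx : ∀ p : Fin m × Fin k, x.1 p * x.1 (p.1, finRotate k p.2) = 1 := by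
      intro p
      have h2 := x.2
      rw [MonoidHom.mem_ker] at h2
      exact congrFun h2 p
    exact Subtype.ext (funext fun p => (ker_const hk hk3 hx p).symm)
  right_inv c := by ext i; rfl

end ker

lemma sqrt_one_card (K : Type) [Field K] [Fintype K] (q : ℕ) (hq : Fintype.card K = q) :
    Nat.card {u : Kˣ // u ^ 2 = 1} = if 2 ∣ q - 1 then 2 else 1 := by
  classical
  have hset : {u : Kˣ | u ^ 2 = 1} = {1, -1} := by
    ext u
    simp only [Set.mem_setOf_eq, Set.mem_insert_iff, Set.mem_singleton_iff]
    constructor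
    · intro h
      have hK : (u : K) ^ 2 = 1 := by
        have := congrArg Units.val h
        push_cast at this
        exact this
      have h' : ((u : K) - 1) * ((u : K) + 1) = 0 := by ring_nf; linear_combination hK
      rcases mul_eq_zero.1 h' with h'' | h''
      · left; ext; simpa [sub_eq_zero] using h''
      · right; ext; rw [Units.val_neg, Units.val_one]; linear_combination h''
    · rintro (rfl | rfl) <;> simp
  have hcard : Nat.card {u : Kˣ // u ^ 2 = 1} = ({1, -1} : Set Kˣ).ncard := by
    rw [← Nat.card_coe_set_eq, ← hset]; rfl
  rw [hcard]
  -- char analysis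
  haveI : CharP K (ringChar K) := ringChar.charP K
  obtain ⟨n, hp, hcardK⟩ := FiniteField.card K (ringChar K)
  by_cases h2 : ringChar K = 2
  · have hq2 : 2 ∣ q := by
      rw [← hq, hcardK, h2]
      exact dvd_pow_self 2 n.ne_zero
    have hnd : ¬ 2 ∣ q - 1 := by
      intro hd
      have hq1 : 1 ≤ q := by rw [← hq]; exact Fintype.card_pos
      omega
    rw [if_neg hnd]
    have hne : (-1 : Kˣ) = 1 := by
      ext
      push_cast
      have : (2 : K) = 0 := by
        have := CharP.cast_eq_zero K (ringChar K)
        rwa [h2] at this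
      linear_combination -this
    rw [hne, Set.pair_eq_singleton, Set.ncard_singleton]
  · have hodd : Odd q := by
      rw [← hq, hcardK]
      exact Odd.pow (hp.odd_of_ne_two h2)
    have hd : 2 ∣ q - 1 := by
      obtain ⟨t, rfl⟩ := hodd
      omega
    rw [if_pos hd]
    refine Set.ncard_pair ?_
    intro hne
    have hv : (1 : K) = -1 := by
      have := congrArg Units.val hne
      simpa using this
    have h2' : (2 : K) = 0 := by linear_combination hv
    have hdvd := (CharP.cast_eq_zero_iff K (ringChar K) 2).1 h2'
    exact h2 ((Nat.prime_dvd_prime_iff_eq hp Nat.prime_two).1 hdvd)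

/-- Let `K = 𝔽_q` and let `G` be a graph with `m` connected components,
each an odd cycle of length `k`. Then `|X*_G| = (q−1)^(km)` if `2 ∤ q−1`, and
`|X*_G| = (q−1)^(km)/2^m` if `2 ∣ q−1`. -/
theorem card_cyclesToricSet (q k m : ℕ) (hk : Odd k) (hk3 : 3 ≤ k) (hm : 1 ≤ m)
    (K : Type) [Field K] [Fintype K] (hq : Fintype.card K = q) :
    (cyclesToricSet K k m).ncard =
      if 2 ∣ q - 1 then (q - 1) ^ (k * m) / 2 ^ m else (q - 1) ^ (k * m) := by
  classical
  haveI : NeZero k := ⟨by omega⟩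
  rw [cycles_eq_image, Set.ncard_image_of_injective _ (by
    intro a b hab
    funext p
    exact Units.ext (congrFun hab p))]
  have h1 : (Set.range (cycF K k m)).ncard = Nat.card (cycF K k m).range := by
    rw [← MonoidHom.coe_range]
    exact (Nat.card_coe_set_eq _).symm
  rw [h1]
  have hGcard : Nat.card (Fin m × Fin k → Kˣ) = (q - 1) ^ (k * m) := by
    rw [Nat.card_fun, Nat.card_eq_fintype_card, Fintype.card_units, hq,
      Nat.card_eq_fintype_card, Fintype.card_prod, Fintype.card_fin, Fintype.card_fin,
      mul_comm m k]
  have hkercard : Nat.card (cycF K k m).ker = (if 2 ∣ q - 1 then 2 else 1) ^ m := by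
    rw [Nat.card_congr (kerEquiv hk hk3), Nat.card_fun, sqrt_one_card K q hq,
      Nat.card_eq_fintype_card, Fintype.card_fin]
  have hmain : Nat.card (Fin m × Fin k → Kˣ)
      = Nat.card (cycF K k m).range * Nat.card (cycF K k m).ker := by
    rw [Subgroup.card_eq_card_quotient_mul_card_subgroup (cycF K k m).ker,
      Nat.card_congr (QuotientGroup.quotientKerEquivRange (cycF K k m)).toEquiv]
  rw [hGcard, hkercard] at hmain
  by_cases hd : 2 ∣ q - 1
  · rw [if_pos hd] at hmain ⊢
    exact (Nat.div_eq_of_eq_mul_left (Nat.pow_pos (n := m) (by norm_num)) hmain).symm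
  · rw [if_neg hd] at hmain ⊢
    rw [one_pow, mul_one] at hmain
    exact hmain.symm
end

section
/- For each i ∈ {1,…,m}, every binomial in the set A_i vanishes at every point of X*_𝒢; that is, A_i ⊆ I(X*_𝒢). -/
open MvPolynomial

/-- The set `A_i` of binomials attached to the `i`-th cycle:
`t_{α₁}^{(q−1)/2} ⋯ t_{α_γ}^{(q−1)/2} − t_{w₁}^{(q−1)/2} ⋯ t_{w_{γ+1}}^{(q−1)/2}`,
where `{α₁,…,α_γ}` runs over the `γ`-element subsets of the indices of the `i`-th block and
`{w₁,…,w_{γ+1}}` is its complement inside that block. -/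
def cycleBinomials (K : Type) [Field K] (q k m γ : ℕ) (i : Fin m) :
    Set (MvPolynomial (Fin m × Fin k) K) :=
  {f | ∃ s : Finset (Fin k), s.card = γ ∧
    f = (∏ α ∈ s, X ((i, α) : Fin m × Fin k) ^ ((q - 1) / 2)) -
        ∏ w ∈ sᶜ, X ((i, w) : Fin m × Fin k) ^ ((q - 1) / 2)}


/-- For each `i`, every binomial in `A_i` vanishes on `X*_G`, i.e.
`A_i ⊆ I(X*_G)`. -/
theorem cycleBinomials_subset_vanishingIdeal (q k m γ : ℕ) (hγ : 1 ≤ γ) (hk : k = 2 * γ + 1)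
    (hm : 1 ≤ m) (K : Type) [Field K] [Fintype K] (hq : Fintype.card K = q)
    (hq2 : 2 ∣ q - 1) (i : Fin m) :
    cycleBinomials K q k m γ i ⊆
      (MvPolynomial.vanishingIdeal K (cyclesToricSet K k m) : Set (MvPolynomial (Fin m × Fin k) K)) := by
  rintro f ⟨s, hs, rfl⟩
  rw [SetLike.mem_coe, mem_vanishingIdeal_iff]
  rintro y ⟨x, hx, hyx⟩
  set d := (q - 1) / 2 with hd
  have h2d : 2 * d = q - 1 := Nat.mul_div_cancel' hq2
  have hyne : ∀ p, y p ≠ 0 := fun p => by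
    rw [hyx p]; exact mul_ne_zero (hx _) (hx _)
  have hysq : ∀ p : Fin m × Fin k, ((y p) ^ d) ^ 2 = 1 := fun p => by
    rw [← pow_mul, mul_comm, h2d, ← hq]
    exact FiniteField.pow_card_sub_one_eq_one _ (hyne p)
  simp only [map_sub, map_prod, map_pow, eval_X, aeval_X]
  set A := ∏ α ∈ s, (y (i, α)) ^ d with hA
  set B := ∏ w ∈ sᶜ, (y (i, w)) ^ d with hB
  have hA2 : A ^ 2 = 1 := by
    rw [hA, ← Finset.prod_pow]
    exact Finset.prod_eq_one fun p _ => hysq _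
  have hAB : A * B = 1 := by
    rw [hA, hB, Finset.prod_mul_prod_compl]
    have hrot : ∏ j : Fin k, x (i, finRotate k j) = ∏ j : Fin k, x (i, j) :=
      Equiv.prod_comp (finRotate k) (fun j => x (i, j))
    calc ∏ j : Fin k, (y (i, j)) ^ d
        = ∏ j : Fin k, (x (i, j) * x (i, finRotate k j)) ^ d :=
          Finset.prod_congr rfl fun j _ => by rw [hyx (i, j)]
      _ = (∏ j : Fin k, x (i, j)) ^ d * (∏ j : Fin k, x (i, finRotate k j)) ^ d := by
          simp [mul_pow, Finset.prod_mul_distrib, Finset.prod_pow]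
      _ = (∏ j : Fin k, x (i, j)) ^ (q - 1) := by
          rw [hrot, ← pow_add, ← two_mul, h2d]
      _ = 1 := by
          rw [← hq]
          exact FiniteField.pow_card_sub_one_eq_one _
            (Finset.prod_ne_zero_iff.mpr fun j _ => hx _)
  have hABeq : A = B := by
    calc A = A * (A * B) := by rw [hAB, mul_one]
    _ = A ^ 2 * B := by ring
    _ = B := by rw [hA2, one_mul]
  rw [hABeq, sub_self]
end

section
/- If f ∈ I(X*_𝒢), then f(a_1^2,…,a_{km}^2) = 0 for every (a_1,…,a_{km}) ∈ (K*)^{km}; equivalently, the point (a_1^2,…,a_{km}^2) belongs to X*_𝒢 for every (a_1,…,a_{km}) ∈ (K*)^{km}. -/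
open MvPolynomial

lemma cycle_key {K : Type} [Field K] {n : ℕ} (hn : Odd (n + 1))
    (b : Fin (n + 1) → K) (hb : ∀ i, b i ≠ 0) (j : Fin (n + 1)) :
    (∏ i : Fin (n + 1), (if Even (i : ℕ) then b (j + i) else (b (j + i))⁻¹)) *
      (∏ i : Fin (n + 1), (if Even (i : ℕ) then b (j + 1 + i) else (b (j + 1 + i))⁻¹)) =
      b j ^ 2 := by
  have hshift :
      (∏ i : Fin (n + 1), (if Even (i : ℕ) then b (j + 1 + i) else (b (j + 1 + i))⁻¹)) =
      ∏ i : Fin (n + 1),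
        (if Even ((i - 1 : Fin (n + 1)) : ℕ) then b (j + i) else (b (j + i))⁻¹) := by
    rw [← Equiv.prod_comp (Equiv.subRight (1 : Fin (n + 1)))
      (fun i => if Even ((i : ℕ)) then b (j + 1 + i) else (b (j + 1 + i))⁻¹)]
    refine Finset.prod_congr rfl fun i _ => ?_
    have h : j + 1 + (i - 1) = j + i := by rw [add_assoc, add_sub_cancel]
    simp only [Equiv.subRight_apply, h]
  rw [hshift, ← Finset.prod_mul_distrib]
  rw [Fintype.prod_eq_single (0 : Fin (n + 1))]
  · have h0 : ((0 : Fin (n + 1)) - 1 : Fin (n + 1)) = Fin.last n := by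
      simp [Fin.ext_iff, Fin.coe_sub_one]
    have hne : Even n := by
      rcases hn with ⟨c, hc⟩
      exact ⟨c, by omega⟩
    simp [h0, hne, sq]
  · intro i hi
    have hval : ((i - 1 : Fin (n + 1)) : ℕ) = (i : ℕ) - 1 := by
      rw [Fin.coe_sub_one, if_neg hi]
    have hpos : 0 < (i : ℕ) := by
      rcases Nat.eq_zero_or_pos (i : ℕ) with h | h
      · exact absurd (Fin.ext h) hi
      · exact h
    have hsucc : (i : ℕ) - 1 + 1 = (i : ℕ) := Nat.succ_pred_eq_of_pos hpos
    have hb' := hb (j + i)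
    by_cases he : Even ((i : ℕ))
    · have : ¬ Even ((i : ℕ) - 1) := by
        intro hcon
        have := hcon.add_one
        rw [hsucc] at this
        exact (Nat.not_odd_iff_even.mpr he) this
      simp [he, hval, this, mul_inv_cancel₀ hb']
    · have : Even ((i : ℕ) - 1) := by
        rcases Nat.even_or_odd ((i : ℕ) - 1) with h | h
        · exact h
        · exfalso
          have := h.add_one
          rw [hsucc] at this
          exact he this
      simp [he, hval, this, inv_mul_cancel₀ hb']

/-- If `f ∈ I(X*_G)` then `f(a₁²,…,a_{km}²) = 0` for every tuple of nonzero
`a_i`; equivalently, the point `(a₁²,…,a_{km}²)` belongs to `X*_G` for every such tuple. -/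
theorem squares_mem_cyclesToricSet (q k m : ℕ) (hk : Odd k) (hk3 : 3 ≤ k) (hm : 1 ≤ m)
    (K : Type) [Field K] [Fintype K] (hq : Fintype.card K = q)
    (a : Fin m × Fin k → K) (ha : ∀ p, a p ≠ 0) :
    (fun p => a p ^ 2) ∈ cyclesToricSet K k m ∧
      ∀ f ∈ MvPolynomial.vanishingIdeal K (cyclesToricSet K k m),
        MvPolynomial.eval (fun p => a p ^ 2) f = 0 := by
  obtain ⟨n, rfl⟩ : ∃ n, k = n + 1 := ⟨k - 1, by omega⟩
  have hmem : (fun p => a p ^ 2) ∈ cyclesToricSet K (n + 1) m := by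
    refine ⟨fun p => ∏ i : Fin (n + 1),
      (if Even (i : ℕ) then a (p.1, p.2 + i) else (a (p.1, p.2 + i))⁻¹), ?_, ?_⟩
    · intro p
      refine Finset.prod_ne_zero_iff.mpr fun i _ => ?_
      by_cases he : Even ((i : ℕ))
      · simpa [he] using ha (p.1, p.2 + i)
      · simpa [he] using inv_ne_zero (ha (p.1, p.2 + i))
    · intro p
      have := cycle_key hk (fun i => a (p.1, i)) (fun i => ha (p.1, i)) p.2
      simp only [finRotate_succ_apply]
      exact this.symm
  refine ⟨hmem, fun f hf => ?_⟩
  exact (MvPolynomial.mem_vanishingIdeal_iff.mp hf) _ hmem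
end

section
/- Let f = t^a − t^b be a nonzero binomial in I(X*_C) with supp(a) ∩ supp(b) = ∅, such that the degree of f in each variable t_i is strictly less than q−1. If ∅ ≠ supp(a) ⊊ {1,…,k}, then supp(b) ≠ ∅. -/
open MvPolynomial

/-- The affine algebraic toric set parameterized by a cycle of length `k`:
`X*_C = {(x₁x₂, x₂x₃, …, x_{k−1}x_k, x_kx₁) : x_j ∈ K*} ⊆ K^k`. -/
def cycleToricSet (K : Type) [Field K] (k : ℕ) : Set (Fin k → K) :=
  {y | ∃ x : Fin k → K, (∀ j, x j ≠ 0) ∧ ∀ j : Fin k, y j = x j * x (finRotate k j)}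

/-- Let `f = t^a − t^b` be a nonzero binomial in `I(X*_C)` with
`supp(a) ∩ supp(b) = ∅` whose degree in each variable is strictly less than `q−1`.
If `∅ ≠ supp(a) ⊊ {1,…,k}`, then `supp(b) ≠ ∅`. -/
theorem support_b_nonempty (q k γ : ℕ) (hγ : 1 ≤ γ) (hk : k = 2 * γ + 1)
    (K : Type) [Field K] [Fintype K] (hq : Fintype.card K = q) (hq2 : 2 ∣ q - 1)
    (a b : Fin k →₀ ℕ) (hdisj : Disjoint a.support b.support)
    (f : MvPolynomial (Fin k) K)
    (hf : f = (monomial a (1 : K)) - monomial b 1)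
    (hf0 : f ≠ 0)
    (hmem : f ∈ MvPolynomial.vanishingIdeal K (cycleToricSet K k))
    (hdeg : ∀ i : Fin k, MvPolynomial.degreeOf i f < q - 1)
    (hane : a.support.Nonempty)
    (haproper : a.support ⊂ Finset.univ) :
    b.support.Nonempty := by
  classical
  by_contra hb
  rw [Finset.not_nonempty_iff_eq_empty, Finsupp.support_eq_empty] at hb
  subst hb hf hk
  -- basic facts
  have hq1 : 1 < q := by
    rw [← hq]; exact Fintype.one_lt_card
  have hqpos : 0 < q - 1 := by omega
  have ha0 : a ≠ 0 := by
    intro h; rw [h] at hane; simp at hane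
  -- each a j < q - 1
  have hlt : ∀ j : Fin (2*γ+1), a j < q - 1 := by
    intro j
    have hd := hdeg j
    rw [MvPolynomial.degreeOf_lt_iff hqpos] at hd
    apply hd
    rw [MvPolynomial.mem_support_iff]
    simp [MvPolynomial.coeff_monomial, MvPolynomial.coeff_one, ha0, Ne.symm ha0]
  -- divisibility
  have hdvd : ∀ j : Fin (2*γ+1), (q - 1) ∣ (a j + a (j - 1)) := by
    intro j
    obtain ⟨g, hg⟩ := IsCyclic.exists_generator (α := Kˣ)
    have hcard : orderOf g = q - 1 := by
      rw [orderOf_eq_card_of_forall_mem_zpowers hg, Nat.card_eq_fintype_card, Fintype.card_units, hq]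
    rw [← hcard]
    apply orderOf_dvd_of_pow_eq_one
    -- evaluate at x = (1,…,g at j,…,1)
    set x : Fin (2*γ+1) → K := fun i => if i = j then (g : K) else 1 with hx
    have hxne : ∀ i, x i ≠ 0 := by
      intro i; rw [hx]; dsimp; split <;> simp
    have hy : (fun i => x i * x (finRotate (2*γ+1) i)) ∈ cycleToricSet K (2*γ+1) :=
      ⟨x, hxne, fun _ => rfl⟩
    have hev := hmem _ hy
    rw [map_sub, MvPolynomial.aeval_monomial, MvPolynomial.aeval_monomial, map_one] at hev
    simp only [Finsupp.prod, Finsupp.support_zero, Finsupp.coe_zero,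
      Finset.prod_empty, one_mul, mul_one, sub_eq_zero] at hev
    have hev' : (∏ i : Fin (2*γ+1), (x i * x (finRotate (2*γ+1) i)) ^ a i) = 1 := by
      rw [← Finset.prod_subset (Finset.subset_univ a.support)
        (fun i _ hi => by rw [Finsupp.notMem_support_iff.mp hi, pow_zero])]
      exact hev
    -- split the product
    have hsplit : (∏ i : Fin (2*γ+1), (x i * x (finRotate (2*γ+1) i)) ^ a i)
        = ∏ i : Fin (2*γ+1), x i ^ (a i + a (i - 1)) := by
      simp only [mul_pow, pow_add, Finset.prod_mul_distrib]
      congr 1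
      calc ∏ i : Fin (2*γ+1), x (finRotate (2*γ+1) i) ^ a i
          = ∏ i : Fin (2*γ+1), x (finRotate (2*γ+1) (i-1)) ^ a (i-1) :=
            (Fintype.prod_equiv (Equiv.subRight (1 : Fin (2*γ+1))) _ _ (fun i => rfl)).symm
        _ = ∏ i : Fin (2*γ+1), x i ^ a (i - 1) := by
            apply Finset.prod_congr rfl
            intro i _
            congr 1
            rw [finRotate_succ_apply, sub_add_cancel]
    rw [hsplit] at hev'
    have hcollapse : (∏ i : Fin (2*γ+1), x i ^ (a i + a (i - 1)))
        = (g : K) ^ (a j + a (j - 1)) := by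
      rw [Finset.prod_eq_single j]
      · simp [hx]
      · intro i _ hij; simp [hx, hij]
      · simp
    rw [hcollapse] at hev'
    ext
    push_cast
    exact hev'
  -- propagate zeros
  have hstep : ∀ j : Fin (2*γ+1), a j = 0 → a (j - 1) = 0 := by
    intro j hj
    have := hdvd j
    rw [hj, zero_add] at this
    exact Nat.eq_zero_of_dvd_of_lt this (hlt _)
  open Fin.NatCast Fin.CommRing in
  obtain ⟨i0, _, hi0⟩ := Finset.exists_of_ssubset haproper
  rw [Finsupp.mem_support_iff, not_not] at hi0
  have hall : ∀ n : ℕ, a (i0 - (n : Fin (2*γ+1))) = 0 := by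
    intro n
    induction n with
    | zero => simpa using hi0
    | succ m ih =>
      have : i0 - ((m+1 : ℕ) : Fin (2*γ+1)) = (i0 - (m : Fin (2*γ+1))) - 1 := by
        push_cast; ring
      rw [this]
      exact hstep _ ih
  obtain ⟨j, hj⟩ := hane
  rw [Finsupp.mem_support_iff] at hj
  apply hj
  have := hall ((i0 - j : Fin (2*γ+1)) : ℕ)
  rwa [Fin.cast_val_eq_self, sub_sub_cancel] at this
end

section
/- Let f = t^a − t^b be a nonzero binomial in I(X*_C) with supp(a) ∩ supp(b) = ∅, such that the degree of f in each variable t_i is strictly less than q−1, and suppose ∅ ≠ supp(a) ⊊ {1,…,k}. Then every nonzero coordinate of a and every nonzero coordinate of b is equal to (q−1)/2. -/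
open MvPolynomial
open Fin.NatCast

/-- Let `f = t^a − t^b` be a nonzero binomial in `I(X*_C)` with
`supp(a) ∩ supp(b) = ∅` whose degree in each variable is strictly less than `q−1`,
and suppose `∅ ≠ supp(a) ⊊ {1,…,k}`. Then every nonzero coordinate of `a` and
every nonzero coordinate of `b` equals `(q−1)/2`. -/
theorem coords_eq_half (q k γ : ℕ) (hγ : 1 ≤ γ) (hk : k = 2 * γ + 1)
    (K : Type) [Field K] [Fintype K] (hq : Fintype.card K = q) (hq2 : 2 ∣ q - 1)
    (a b : Fin k →₀ ℕ) (hdisj : Disjoint a.support b.support)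
    (f : MvPolynomial (Fin k) K)
    (hf : f = (monomial a (1 : K)) - monomial b 1)
    (hf0 : f ≠ 0)
    (hmem : f ∈ MvPolynomial.vanishingIdeal K (cycleToricSet K k))
    (hdeg : ∀ i : Fin k, MvPolynomial.degreeOf i f < q - 1)
    (hane : a.support.Nonempty)
    (haproper : a.support ⊂ Finset.univ) :
    (∀ i ∈ a.support, a i = (q - 1) / 2) ∧ (∀ i ∈ b.support, b i = (q - 1) / 2) := by
  subst hk
  classical
  set m := q - 1 with hm
  have hq2' : 2 ≤ q := by
    have := Fintype.one_lt_card (α := K)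
    omega
  have hm1 : 1 ≤ m := by omega
  -- a ≠ b
  have hab : a ≠ b := by
    intro h; apply hf0; rw [hf, h, sub_self]
  have haf : a ∈ f.support := by
    rw [MvPolynomial.mem_support_iff, hf, coeff_sub, coeff_monomial, coeff_monomial,
      if_pos rfl, if_neg (Ne.symm hab)]
    simp
  have hbf : b ∈ f.support := by
    rw [MvPolynomial.mem_support_iff, hf, coeff_sub, coeff_monomial, coeff_monomial,
      if_pos rfl, if_neg hab]
    simp
  have halt : ∀ i, a i < m := fun i =>
    (MvPolynomial.degreeOf_lt_iff (by omega)).mp (hdeg i) a haf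
  have hblt : ∀ i, b i < m := fun i =>
    (MvPolynomial.degreeOf_lt_iff (by omega)).mp (hdeg i) b hbf
  -- generator of Kˣ
  obtain ⟨g, hg⟩ := IsCyclic.exists_generator (α := Kˣ)
  have hord : orderOf g = m := by
    rw [orderOf_eq_card_of_forall_mem_zpowers hg, Nat.card_units, Nat.card_eq_fintype_card, hq]
  -- key modular relations
  have key : ∀ i : Fin (2 * γ + 1),
      ((a i : ZMod m)) + (a (i - 1) : ZMod m) = (b i : ZMod m) + (b (i - 1) : ZMod m) := by
    intro i
    set x : Fin (2 * γ + 1) → K := fun j => if j = i then (g : K) else 1 with hxdef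
    have hx : ∀ j, x j ≠ 0 := by
      intro j; by_cases h : j = i <;> simp [hxdef, h]
    have hy : (fun j => x j * x (finRotate _ j)) ∈ cycleToricSet K (2 * γ + 1) :=
      ⟨x, hx, fun j => rfl⟩
    have heval : eval (fun j => x j * x (finRotate _ j)) f = 0 :=
      MvPolynomial.mem_vanishingIdeal_iff.mp hmem _ hy
    have prodcal : ∀ c : Fin (2 * γ + 1) →₀ ℕ,
        eval (fun j => x j * x (finRotate _ j)) (monomial c (1 : K))
          = (g : K) ^ (c i + c (i - 1)) := by
      intro c
      rw [eval_monomial, one_mul, Finsupp.prod_fintype _ _ (fun j => pow_zero _)]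
      have hsplit : ∀ j : Fin (2 * γ + 1),
          (x j * x (finRotate _ j)) ^ c j = x j ^ c j * x (j + 1) ^ c j := by
        intro j; rw [finRotate_succ_apply, mul_pow]
      rw [Finset.prod_congr rfl (fun j _ => hsplit j), Finset.prod_mul_distrib]
      have h1 : (∏ j, x j ^ c j) = (g : K) ^ c i := by
        rw [Finset.prod_eq_single i]
        · simp [hxdef]
        · intro j _ hj; simp [hxdef, hj]
        · intro h; exact absurd (Finset.mem_univ i) h
      have h2 : (∏ j, x (j + 1) ^ c j) = (g : K) ^ c (i - 1) := by
        rw [Finset.prod_eq_single (i - 1)]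
        · rw [sub_add_cancel]; simp [hxdef]
        · intro j _ hj
          have : j + 1 ≠ i := by
            intro h; apply hj; rw [← h]; exact (add_sub_cancel_right j 1).symm
          simp [hxdef, this]
        · intro h; exact absurd (Finset.mem_univ _) h
      rw [h1, h2, ← pow_add]
    rw [hf, map_sub, prodcal, prodcal, sub_eq_zero] at heval
    have hu : g ^ (a i + a (i - 1)) = g ^ (b i + b (i - 1)) :=
      Units.ext (by rw [Units.val_pow_eq_pow_val, Units.val_pow_eq_pow_val]; exact heval)
    have hmod : (a i + a (i - 1)) ≡ (b i + b (i - 1)) [MOD m] := by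
      rw [← hord]; exact pow_eq_pow_iff_modEq.mp hu
    have hcast := (ZMod.natCast_eq_natCast_iff _ _ _).mpr hmod
    push_cast at hcast
    exact hcast
  -- Define S and iterate around the cycle
  set S : Fin (2 * γ + 1) → ZMod m := fun i => (a i : ZMod m) - (b i : ZMod m) with hS
  have hstep : ∀ j, S (j + 1) = -S j := by
    intro j
    have h := key (j + 1)
    rw [add_sub_cancel_right] at h
    simp only [hS]
    linear_combination h
  have hiter : ∀ (n : ℕ) (j : Fin (2 * γ + 1)),
      S (j + (n : Fin (2 * γ + 1))) = (-1) ^ n * S j := by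
    intro n
    induction n with
    | zero => intro j; simp
    | succ n ih =>
      intro j
      have hcast : ((n + 1 : ℕ) : Fin (2 * γ + 1)) = (n : Fin (2 * γ + 1)) + 1 := by
        push_cast; ring
      rw [hcast, ← add_assoc, hstep, ih, pow_succ]
      ring
  have hself : ∀ i, S i + S i = 0 := by
    intro i
    have h := hiter (2 * γ + 1) i
    rw [Fin.natCast_self, add_zero] at h
    have hodd : ((-1 : ZMod m)) ^ (2 * γ + 1) = -1 := Odd.neg_one_pow ⟨γ, by ring⟩
    rw [hodd] at h
    linear_combination h
  have main : ∀ (c : ℕ), c ≠ 0 → c < m → m ∣ c + c → c = m / 2 := by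
    intro c hc0 hclt hdvd
    obtain ⟨d, hd⟩ := hdvd
    have hdlt : d < 2 := by
      by_contra hge
      push_neg at hge
      have : m * 2 ≤ m * d := Nat.mul_le_mul_left m hge
      omega
    interval_cases d <;> omega
  constructor
  · intro i hi
    have hbi : b i = 0 :=
      Finsupp.notMem_support_iff.mp (Finset.disjoint_left.mp hdisj hi)
    have hai : a i ≠ 0 := Finsupp.mem_support_iff.mp hi
    have h := hself i
    simp only [hS, hbi, Nat.cast_zero, sub_zero] at h
    have hdvd : m ∣ a i + a i := by
      rw [← ZMod.natCast_eq_zero_iff]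
      push_cast
      exact h
    exact main (a i) hai (halt i) hdvd
  · intro i hi
    have hai : a i = 0 :=
      Finsupp.notMem_support_iff.mp (Finset.disjoint_right.mp hdisj hi)
    have hbi : b i ≠ 0 := Finsupp.mem_support_iff.mp hi
    have h := hself i
    simp only [hS, hai, Nat.cast_zero, zero_sub] at h
    have hdvd : m ∣ b i + b i := by
      rw [← ZMod.natCast_eq_zero_iff]
      push_cast
      linear_combination -h
    exact main (b i) hbi (hblt i) hdvd
end

section
/- Let f = t^a − t^b be a nonzero binomial in I(X*_C) with supp(a) ∩ supp(b) = ∅, such that the degree of f in each variable t_i is strictly less than q−1. Then supp(a) ∪ supp(b) = {1,…,k}. -/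
open MvPolynomial
open Fin.NatCast

/-- Let `f = t^a − t^b` be a nonzero binomial in `I(X*_C)` with
`supp(a) ∩ supp(b) = ∅` whose degree in each variable is strictly less than `q−1`.
Then `supp(a) ∪ supp(b) = {1,…,k}`. -/
theorem support_union_eq_univ (q k γ : ℕ) (hγ : 1 ≤ γ) (hk : k = 2 * γ + 1)
    (K : Type) [Field K] [Fintype K] (hq : Fintype.card K = q) (hq2 : 2 ∣ q - 1)
    (a b : Fin k →₀ ℕ) (hdisj : Disjoint a.support b.support)
    (f : MvPolynomial (Fin k) K)
    (hf : f = (monomial a (1 : K)) - monomial b 1)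
    (hf0 : f ≠ 0)
    (hmem : f ∈ MvPolynomial.vanishingIdeal K (cycleToricSet K k))
    (hdeg : ∀ i : Fin k, MvPolynomial.degreeOf i f < q - 1) :
    a.support ∪ b.support = Finset.univ := by
  haveI : NeZero k := ⟨by omega⟩
  have hab : a ≠ b := by
    rintro rfl
    exact hf0 (by simp [hf])
  -- a, b ∈ f.support
  have ha_mem : a ∈ f.support := by
    rw [MvPolynomial.mem_support_iff, hf]
    simp [MvPolynomial.coeff_monomial, hab.symm]
  have hb_mem : b ∈ f.support := by
    rw [MvPolynomial.mem_support_iff, hf]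
    simp [MvPolynomial.coeff_monomial, hab]
  have hba : ∀ i, a i < q - 1 :=
    fun i => lt_of_le_of_lt (MvPolynomial.monomial_le_degreeOf i ha_mem) (hdeg i)
  have hbb : ∀ i, b i < q - 1 :=
    fun i => lt_of_le_of_lt (MvPolynomial.monomial_le_degreeOf i hb_mem) (hdeg i)
  -- a generator of Kˣ
  obtain ⟨u, hu⟩ := IsCyclic.exists_generator (α := Kˣ)
  have horder : orderOf u = q - 1 := by
    classical
    rw [orderOf_eq_card_of_forall_mem_zpowers hu, Nat.card_eq_fintype_card,
      Fintype.card_units, hq]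
  set e : Equiv.Perm (Fin k) := finRotate k with he
  -- the key congruences
  have key : ∀ i : Fin k,
      a i + a (e.symm i) ≡ b i + b (e.symm i) [MOD (q - 1)] := by
    intro i
    classical
    set g : K := (u : K) with hg
    set x : Fin k → K := fun j => if j = i then g else 1 with hx
    have hxne : ∀ j, x j ≠ 0 := by
      intro j
      simp only [hx]
      split <;> simp [hg]
    have hmem' : (fun j => x j * x (finRotate k j)) ∈ cycleToricSet K k :=
      ⟨x, hxne, fun j => rfl⟩
    have heval := hmem _ hmem'
    have hsingle : ∀ c : Fin k → ℕ, (∏ j, x j ^ c j) = g ^ c i := by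
      intro c
      rw [Finset.prod_eq_single i]
      · simp [hx]
      · intro j _ hj
        simp [hx, hj]
      · simp
    have hprod : ∀ c : Fin k →₀ ℕ,
        (∏ j, (x j * x (e j)) ^ c j) = g ^ (c i + c (e.symm i)) := by
      intro c
      have h2 : (∏ j, x (e j) ^ c j) = ∏ j, x j ^ c (e.symm j) := by
        have := Equiv.prod_comp e (fun j => x j ^ c (e.symm j))
        simpa using this
      calc ∏ j, (x j * x (e j)) ^ c j
          = (∏ j, x j ^ c j) * ∏ j, x (e j) ^ c j := by
            simp [mul_pow, Finset.prod_mul_distrib]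
        _ = g ^ c i * g ^ c (e.symm i) := by
            rw [h2, hsingle c, hsingle (fun j => c (e.symm j))]
        _ = g ^ (c i + c (e.symm i)) := by rw [pow_add]
    have heq : g ^ (a i + a (e.symm i)) = g ^ (b i + b (e.symm i)) := by
      have : eval (fun j => x j * x (e j)) f = 0 := heval
      rw [hf] at this
      simp only [map_sub, MvPolynomial.eval_monomial, one_mul,
        Finsupp.prod_pow] at this
      rw [sub_eq_zero] at this
      rw [← hprod a, ← hprod b]
      exact this
    have hu_eq : u ^ (a i + a (e.symm i)) = u ^ (b i + b (e.symm i)) := by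
      ext
      push_cast
      exact heq
    rw [pow_eq_pow_iff_modEq, horder] at hu_eq
    exact hu_eq
  -- propagation of being outside both supports
  have hzero : ∀ j : Fin k, a j = b j → a j = 0 ∧ b j = 0 := by
    intro j hj
    by_contra h
    have haj : a j ≠ 0 := by
      rcases not_and_or.1 h with h' | h'
      · exact h'
      · rw [hj]; exact h'
    have h1 : j ∈ a.support := Finsupp.mem_support_iff.2 haj
    have h2 : j ∈ b.support := Finsupp.mem_support_iff.2 (hj ▸ haj)
    exact (Finset.disjoint_left.1 hdisj h1) h2
  have hstep : ∀ j : Fin k, a (e.symm j) = 0 → b (e.symm j) = 0 →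
      a j = 0 ∧ b j = 0 := by
    intro j h1 h2
    have hk := key j
    rw [h1, h2, add_zero, add_zero] at hk
    have : a j = b j := by
      rwa [Nat.ModEq, Nat.mod_eq_of_lt (hba j), Nat.mod_eq_of_lt (hbb j)] at hk
    exact hzero j this
  rw [Finset.eq_univ_iff_forall]
  intro j
  by_contra hj
  rw [Finset.mem_union, Finsupp.mem_support_iff, Finsupp.mem_support_iff] at hj
  push_neg at hj
  obtain ⟨haj, hbj⟩ := hj
  -- propagate around the cycle
  have hiter : ∀ n : ℕ, a (j + (n : Fin k)) = 0 ∧ b (j + (n : Fin k)) = 0 := by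
    intro n
    induction n with
    | zero => simpa using ⟨haj, hbj⟩
    | succ n ih =>
      have hcast : ((n + 1 : ℕ) : Fin k) = (n : Fin k) + 1 := by push_cast; ring
      have hrot : e (j + (n : Fin k)) = j + (n : Fin k) + 1 := by
        rw [he]
        obtain ⟨m, rfl⟩ : ∃ m, k = m + 1 := ⟨2 * γ, hk⟩
        exact finRotate_succ_apply _
      have hsym : e.symm (j + ((n + 1 : ℕ) : Fin k)) = j + (n : Fin k) := by
        rw [hcast, ← add_assoc, ← hrot, Equiv.symm_apply_apply]
      have := hstep (j + ((n + 1 : ℕ) : Fin k)) (by rw [hsym]; exact ih.1)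
        (by rw [hsym]; exact ih.2)
      exact this
  have hall : ∀ i : Fin k, a i = 0 ∧ b i = 0 := by
    intro i
    have := hiter ((i - j : Fin k)).val
    rwa [Fin.cast_val_eq_self, add_sub_cancel] at this
  apply hab
  ext i
  rw [(hall i).1, (hall i).2]
end

section
/- Fix i ∈ {1,…,m} and let f = t^a − t^b be a binomial in the variables t_{(i−1)k+1},…,t_{ik} with supp(a) ∩ supp(b) = ∅, such that every nonzero coordinate of a and of b equals (q−1)/2, both supp(a) and supp(b) are nonempty, and supp(a) ∪ supp(b) = {(i−1)k+1,…,ik}. Then f belongs to the ideal J of K[t_1,…,t_{km}] generated by {t_i^{q−1}−1 : 1 ≤ i ≤ km} together with A_1 ∪ ⋯ ∪ A_m. -/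
open MvPolynomial

/-- The ideal `J` generated by `t_p^{q−1} − 1` for all variables `p` together with the
binomials in `A₁ ∪ ⋯ ∪ A_m`. -/
noncomputable def cyclesIdeal (K : Type) [Field K] (q k m γ : ℕ) : Ideal (MvPolynomial (Fin m × Fin k) K) :=
  Ideal.span
    ({p : MvPolynomial (Fin m × Fin k) K | ∃ j : Fin m × Fin k, p = X j ^ (q - 1) - 1} ∪
      ⋃ i : Fin m, cycleBinomials K q k m γ i)

/-- Fix `i` and let `f = t^a − t^b` be a binomial in the variables of the
`i`-th block with disjoint supports, all of whose nonzero exponents equal `(q−1)/2`, with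
both supports nonempty and `supp(a) ∪ supp(b)` equal to the whole `i`-th block.
Then `f ∈ J`. -/
theorem block_binomial_mem_cyclesIdeal (q k m γ : ℕ) (hγ : 1 ≤ γ) (hk : k = 2 * γ + 1)
    (hm : 1 ≤ m) (K : Type) [Field K] [Fintype K] (hq : Fintype.card K = q) (hq2 : 2 ∣ q - 1)
    (i : Fin m) (a b : Fin m × Fin k →₀ ℕ)
    (hablock : ∀ p ∈ a.support ∪ b.support, p.1 = i)
    (hdisj : Disjoint a.support b.support)
    (haval : ∀ p ∈ a.support, a p = (q - 1) / 2)
    (hbval : ∀ p ∈ b.support, b p = (q - 1) / 2)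
    (hane : a.support.Nonempty) (hbne : b.support.Nonempty)
    (hunion : a.support ∪ b.support = {i} ×ˢ (Finset.univ : Finset (Fin k))) :
    (monomial a (1 : K)) - monomial b 1 ∈ cyclesIdeal K q k m γ := by

  classical
  set J := cyclesIdeal K q k m γ with hJ
  set φ := Ideal.Quotient.mk J with hφ
  set h := (q - 1) / 2 with hh
  have h2 : h * 2 = q - 1 := Nat.div_mul_cancel hq2
  -- each variable has image of order dividing q-1
  have hX : ∀ p : Fin m × Fin k, φ (X p) ^ (q - 1) = 1 := by
    intro p
    have hmem : (X p ^ (q - 1) - 1 : MvPolynomial (Fin m × Fin k) K) ∈ J :=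
      Ideal.subset_span (Or.inl ⟨p, rfl⟩)
    have h0 : φ (X p ^ (q - 1) - 1) = 0 := (Ideal.Quotient.eq_zero_iff_mem).mpr hmem
    have h1 : φ (X p) ^ (q - 1) - 1 = 0 := by simpa [map_sub, map_pow] using h0
    linear_combination h1
  -- squares of h-power products are 1
  have sq1 : ∀ T : Finset (Fin m × Fin k), (∏ p ∈ T, φ (X p) ^ h) ^ 2 = 1 := by
    intro T
    rw [← Finset.prod_pow]
    calc ∏ p ∈ T, (φ (X p) ^ h) ^ 2 = ∏ p ∈ T, φ (X p) ^ (q - 1) := by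
          refine Finset.prod_congr rfl fun p _ => ?_
          rw [← pow_mul, h2]
      _ = 1 := by simp [hX]
  have sq1' : ∀ T : Finset (Fin k), (∏ α ∈ T, φ (X ((i, α) : Fin m × Fin k)) ^ h) ^ 2 = 1 := by
    intro T
    rw [← Finset.prod_pow]
    calc ∏ α ∈ T, (φ (X ((i, α) : Fin m × Fin k)) ^ h) ^ 2
        = ∏ α ∈ T, φ (X ((i, α) : Fin m × Fin k)) ^ (q - 1) := by
          refine Finset.prod_congr rfl fun p _ => ?_
          rw [← pow_mul, h2]
      _ = 1 := by simp [hX]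
  -- pick a γ-subset and use the cycle binomial
  obtain ⟨s₀, -, hs₀⟩ := Finset.exists_subset_card_eq
    (show γ ≤ (Finset.univ : Finset (Fin k)).card by
      simp [hk]; omega)
  have hgenmem : ((∏ α ∈ s₀, X ((i, α) : Fin m × Fin k) ^ h) -
      ∏ w ∈ s₀ᶜ, X ((i, w) : Fin m × Fin k) ^ h) ∈ J := by
    refine Ideal.subset_span (Or.inr ?_)
    exact Set.mem_iUnion.mpr ⟨i, ⟨s₀, hs₀, rfl⟩⟩
  have hgen : (∏ α ∈ s₀, φ (X ((i, α) : Fin m × Fin k)) ^ h) =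
      ∏ w ∈ s₀ᶜ, φ (X ((i, w) : Fin m × Fin k)) ^ h := by
    have h0 := (Ideal.Quotient.eq_zero_iff_mem).mpr hgenmem
    have h1 : (∏ α ∈ s₀, φ (X ((i, α) : Fin m × Fin k)) ^ h) -
        ∏ w ∈ s₀ᶜ, φ (X ((i, w) : Fin m × Fin k)) ^ h = 0 := by
      simpa [map_sub, map_prod, map_pow] using h0
    linear_combination h1
  -- the product over the whole block is 1
  have hblock1 : (∏ α : Fin k, φ (X ((i, α) : Fin m × Fin k)) ^ h) = 1 := by
    rw [← Finset.prod_mul_prod_compl s₀, hgen, ← sq1' s₀ᶜ, sq]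
  -- monomials as products
  have monToProd : ∀ c : Fin m × Fin k →₀ ℕ, (∀ p ∈ c.support, c p = h) →
      φ (monomial c (1 : K)) = ∏ p ∈ c.support, φ (X p) ^ h := by
    intro c hc
    rw [monomial_eq, map_one, one_mul, Finsupp.prod, map_prod]
    refine Finset.prod_congr rfl fun p hp => ?_
    rw [map_pow, hc p hp]
  have hA := monToProd a haval
  have hB := monToProd b hbval
  -- product of the two monomial images is 1
  have hAB : φ (monomial a (1 : K)) * φ (monomial b (1 : K)) = 1 := by
    rw [hA, hB, ← Finset.prod_union hdisj, hunion, Finset.prod_product,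
      Finset.prod_singleton, hblock1]
  have hB2 : φ (monomial b (1 : K)) ^ 2 = 1 := by rw [hB]; exact sq1 b.support
  have key : φ (monomial a (1 : K)) = φ (monomial b (1 : K)) := by
    calc φ (monomial a (1 : K))
        = φ (monomial a (1 : K)) * (φ (monomial b (1 : K)) * φ (monomial b (1 : K))) := by
          rw [← sq, hB2, mul_one]
      _ = (φ (monomial a (1 : K)) * φ (monomial b (1 : K))) * φ (monomial b (1 : K)) := by ring
      _ = φ (monomial b (1 : K)) := by rw [hAB, one_mul]
  exact Ideal.Quotient.eq.mp key
end

section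
/- Fix i ∈ {1,…,m}. The binomial f = t_{(i−1)k+1}^{(q−1)/2}⋯t_{ik}^{(q−1)/2} − 1 belongs to the ideal J of K[t_1,…,t_{km}] generated by {t_i^{q−1}−1 : 1 ≤ i ≤ km} together with A_1 ∪ ⋯ ∪ A_m. -/
open MvPolynomial

/-- Fix `i`. The binomial
`t_{(i−1)k+1}^{(q−1)/2} ⋯ t_{ik}^{(q−1)/2} − 1` (the product over all variables of the
`i`-th block) belongs to the ideal `J`. -/
theorem block_product_sub_one_mem_cyclesIdeal (q k m γ : ℕ) (hγ : 1 ≤ γ) (hk : k = 2 * γ + 1)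
    (hm : 1 ≤ m) (K : Type) [Field K] [Fintype K] (hq : Fintype.card K = q) (hq2 : 2 ∣ q - 1)
    (i : Fin m) :
    (∏ j : Fin k, X ((i, j) : Fin m × Fin k) ^ ((q - 1) / 2)) - 1 ∈
      cyclesIdeal K q k m γ := by
  set e := (q - 1) / 2 with he
  have h2e : 2 * e = q - 1 := Nat.mul_div_cancel' hq2
  obtain ⟨s, -, hscard⟩ := Finset.exists_subset_card_eq (s := (Finset.univ : Finset (Fin k))) (n := γ)
    (by simp [hk]; omega)
  have hbin : (∏ α ∈ s, X ((i, α) : Fin m × Fin k) ^ e) -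
      ∏ w ∈ sᶜ, X ((i, w) : Fin m × Fin k) ^ e ∈ cyclesIdeal K q k m γ :=
    Ideal.subset_span (Or.inr (Set.mem_iUnion.2 ⟨i, s, hscard, rfl⟩))
  have hvar : ∀ t : Finset (Fin k),
      (∏ w ∈ t, X ((i, w) : Fin m × Fin k) ^ (q - 1)) - 1 ∈ cyclesIdeal K q k m γ := by
    intro t
    induction t using Finset.induction_on with
    | empty => simp
    | @insert a t ha ih =>
      rw [Finset.prod_insert ha]
      have key : (X ((i, a) : Fin m × Fin k) ^ (q - 1) *
          (∏ w ∈ t, X ((i, w) : Fin m × Fin k) ^ (q - 1)) - 1 :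
          MvPolynomial (Fin m × Fin k) K)
          = X ((i, a) : Fin m × Fin k) ^ (q - 1) *
            ((∏ w ∈ t, X ((i, w) : Fin m × Fin k) ^ (q - 1)) - 1)
            + (X ((i, a) : Fin m × Fin k) ^ (q - 1) - 1) := by ring
      rw [key]
      exact Ideal.add_mem _ (Ideal.mul_mem_left _ _ ih)
        (Ideal.subset_span (Or.inl ⟨(i, a), rfl⟩))
  have h1 : (∏ w ∈ sᶜ, X ((i, w) : Fin m × Fin k) ^ (q - 1) :
        MvPolynomial (Fin m × Fin k) K)
      = (∏ w ∈ sᶜ, X ((i, w) : Fin m × Fin k) ^ e) ^ 2 := by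
    rw [← Finset.prod_pow]
    refine Finset.prod_congr rfl fun x _ => ?_
    rw [← pow_mul, mul_comm e 2, h2e]
  have key : ((∏ j : Fin k, X ((i, j) : Fin m × Fin k) ^ e) - 1 :
        MvPolynomial (Fin m × Fin k) K)
      = (∏ w ∈ sᶜ, X ((i, w) : Fin m × Fin k) ^ e) *
        ((∏ α ∈ s, X ((i, α) : Fin m × Fin k) ^ e) -
          ∏ w ∈ sᶜ, X ((i, w) : Fin m × Fin k) ^ e)
        + ((∏ w ∈ sᶜ, X ((i, w) : Fin m × Fin k) ^ (q - 1)) - 1) := by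
    rw [h1, ← Finset.prod_mul_prod_compl s (fun j => X ((i, j) : Fin m × Fin k) ^ e)]
    ring
  rw [key]
  exact Ideal.add_mem _ (Ideal.mul_mem_left _ _ hbin) (hvar sᶜ)
end

section
/- Let 𝒢 be a graph with m connected components, each of which is a cycle of odd length k = 2γ+1. Then the vanishing ideal of X*_𝒢 equals the ideal of S = K[t_1,…,t_{km}] generated by the polynomials t_i^{q−1}−1 for 1 ≤ i ≤ km together with the binomials in A_1 ∪ ⋯ ∪ A_m; that is, I(X*_𝒢) = ⟨{t_i^{q−1}−1}_{i=1}^{km} ∪ (A_1 ∪ ⋯ ∪ A_m)⟩. -/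
open MvPolynomial

set_option linter.unusedVariables false
set_option linter.unnecessarySimpa false

lemma prod_sub_prod_mem {R ι : Type*} [CommRing R] (I : Ideal R) (s : Finset ι) (a b : ι → R)
    (h : ∀ i ∈ s, a i - b i ∈ I) : (∏ i ∈ s, a i) - (∏ i ∈ s, b i) ∈ I := by
  classical
  induction s using Finset.induction with
  | empty => simpa using I.zero_mem
  | @insert x s hx ih =>
    rw [Finset.prod_insert hx, Finset.prod_insert hx]
    have hkey : a x * ∏ i ∈ s, a i - b x * ∏ i ∈ s, b i
        = a x * ((∏ i ∈ s, a i) - ∏ i ∈ s, b i) + (a x - b x) * ∏ i ∈ s, b i := by ring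
    rw [hkey]
    exact I.add_mem (I.mul_mem_left _ (ih fun i hi => h i (Finset.mem_insert_of_mem hi)))
      (I.mul_mem_right _ (h x (Finset.mem_insert_self _ _)))

lemma mem_fieldIdeal_of_eval_eq_zero {σ K : Type} [Fintype σ] [Field K] [Fintype K]
    (f : MvPolynomial σ K) (h : ∀ a : σ → K, eval a f = 0) :
    f ∈ Ideal.span {g : MvPolynomial σ K | ∃ i, g = X i ^ Fintype.card K - X i} := by
  classical
  set q := Fintype.card K with hq
  have hq1 : 1 < q := Fintype.one_lt_card
  set I := Ideal.span {g : MvPolynomial σ K | ∃ i, g = X i ^ q - X i} with hI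
  set red : ℕ → ℕ := fun n => if n = 0 then 0 else (n - 1) % (q - 1) + 1 with hredd
  have hred0 : red 0 = 0 := by simp [hredd]
  have hredle : ∀ n, red n ≤ q - 1 := by
    intro n
    by_cases hn : n = 0
    · simp [hredd, hn]
    · have := Nat.mod_lt (n - 1) (y := q - 1) (by omega)
      simp only [hredd, if_neg hn]
      omega
  have hred : ∀ (i : σ) (n : ℕ), X (R := K) i ^ n - X i ^ red n ∈ I := by
    intro i n
    by_cases hn : n = 0
    · simp [hn, hred0]
    · set m := (n - 1) % (q - 1) + 1 with hm
      have hrn : red n = m := by simp [hredd, hn, hm]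
      have hmn : m ≤ n := by
        have := Nat.mod_le (n - 1) (q - 1); omega
      have hdm := Nat.div_add_mod (n - 1) (q - 1)
      have ht : n - m = (q - 1) * ((n - 1) / (q - 1)) := by omega
      obtain ⟨c, hcc⟩ := sub_dvd_pow_sub_pow (X (R := K) i ^ (q - 1)) 1 ((n - 1) / (q - 1))
      rw [one_pow] at hcc
      have hXq : X (R := K) i * (X i ^ (q - 1) - 1) = X i ^ q - X i := by
        rw [mul_sub, mul_one, ← pow_succ']
        congr 2
        omega
      have key : X (R := K) i ^ n - X i ^ m = (X i ^ q - X i) * (X i ^ (m - 1) * c) := by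
        have h1 : X (R := K) i ^ n - X i ^ m = X i ^ m * (X i ^ (n - m) - 1) := by
          rw [mul_sub, mul_one, ← pow_add]
          congr 2
          omega
        rw [h1, ht, pow_mul, hcc, ← hXq]
        have h2 : X (R := K) i ^ m = X i ^ (m - 1) * X i := by
          nth_rewrite 1 [show m = m - 1 + 1 from by omega]
          rw [pow_succ]
        rw [h2]; ring
      rw [hrn, key]
      exact I.mul_mem_right _ (Ideal.subset_span ⟨i, rfl⟩)
  have hmono : ∀ (d : σ →₀ ℕ) (cc : K),
      (monomial d cc : MvPolynomial σ K) - monomial (Finsupp.mapRange red hred0 d) cc ∈ I := by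
    intro d cc
    rw [monomial_eq, monomial_eq, Finsupp.prod_mapRange_index (fun a => pow_zero _), ← mul_sub]
    exact I.mul_mem_left _ (prod_sub_prod_mem I d.support _ _ (fun i _ => hred i (d i)))
  set r : MvPolynomial σ K :=
    ∑ d ∈ f.support, monomial (Finsupp.mapRange red hred0 d) (coeff d f) with hr
  have hfr : f - r ∈ I := by
    have hsum : f - r = ∑ d ∈ f.support,
        ((monomial d (coeff d f) : MvPolynomial σ K)
          - monomial (Finsupp.mapRange red hred0 d) (coeff d f)) := by
      rw [Finset.sum_sub_distrib, hr]
      congr 1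
      exact f.as_sum
    rw [hsum]
    exact Ideal.sum_mem _ fun d _ => hmono d _
  have hrmem : r ∈ restrictDegree σ K (q - 1) := by
    rw [hr]
    refine Submodule.sum_mem _ fun d _ => ?_
    rw [mem_restrictDegree]
    intro s hs i
    rw [support_monomial] at hs
    by_cases hc : coeff d f = 0
    · simp [hc] at hs
    · rw [if_neg hc, Finset.mem_singleton] at hs
      subst hs
      simpa [Finsupp.mapRange_apply] using hredle (d i)
  have hIvan : ∀ g ∈ I, ∀ a : σ → K, eval a g = 0 := by
    intro g hg a
    have hle : I ≤ vanishingIdeal K (Set.univ : Set (σ → K)) := by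
      rw [hI, Ideal.span_le]
      rintro g ⟨i, rfl⟩
      intro x _
      rw [hq] at *
      simp [FiniteField.pow_card]
    exact hle hg a (Set.mem_univ a)
  have hrz : r = 0 := by
    refine eq_zero_of_eval_eq_zero σ K r (fun v => ?_) hrmem
    have h2 := hIvan _ hfr v
    rw [map_sub, h v] at h2
    rw [zero_sub, neg_eq_zero] at h2
    exact h2
  have hfin : f = f - r := by rw [hrz, sub_zero]
  rw [hfin]
  exact hfr

lemma vanishingIdeal_zeroLocus_le_of_fieldEqns {σ K : Type} [Fintype σ] [Field K] [Fintype K]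
    (J : Ideal (MvPolynomial σ K)) (hJ : ∀ i : σ, X i ^ Fintype.card K - X i ∈ J) :
    vanishingIdeal K (zeroLocus K J) ≤ J := by
  classical
  intro f hf
  have hvan : ∀ g : MvPolynomial σ K, (∀ a : σ → K, eval a g = 0) → g ∈ J := by
    intro g hg
    refine Ideal.span_le.mpr ?_ (mem_fieldIdeal_of_eval_eq_zero g hg)
    rintro p ⟨i, rfl⟩
    exact hJ i
  have hind : ∀ a : σ → K, a ∉ zeroLocus K J → indicator a ∈ J := by
    intro a ha
    obtain ⟨p, hpJ, hpa⟩ : ∃ p ∈ J, eval a p ≠ 0 := by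
      by_contra hcon
      push_neg at hcon
      exact ha (fun p hp => hcon p hp)
    have key : indicator a - C (eval a p)⁻¹ * p * indicator a ∈ J := by
      refine hvan _ (fun b => ?_)
      by_cases hb : b = a
      · subst hb
        simp [eval_indicator_apply_eq_one, inv_mul_cancel₀ hpa]
      · simp [eval_indicator_apply_eq_zero b a hb]
    have hsplit : indicator a
        = (indicator a - C (eval a p)⁻¹ * p * indicator a) + C (eval a p)⁻¹ * indicator a * p := by
      ring
    rw [hsplit]
    exact J.add_mem key (J.mul_mem_left _ hpJ)
  have hmain : f - ∑ a : σ → K, C (eval a f) * indicator a ∈ J := by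
    refine hvan _ (fun b => ?_)
    simp only [map_sub, map_sum, map_mul, eval_C]
    rw [Finset.sum_eq_single b]
    · rw [eval_indicator_apply_eq_one, mul_one, sub_self]
    · intro a _ hab
      rw [eval_indicator_apply_eq_zero b a (Ne.symm hab), mul_zero]
    · intro hb
      exact absurd (Finset.mem_univ b) hb
  have hterm : ∀ a : σ → K, C (eval a f) * indicator a ∈ J := by
    intro a
    by_cases ha : a ∈ zeroLocus K J
    · have : eval a f = 0 := hf a ha
      rw [this, map_zero, zero_mul]
      exact J.zero_mem
    · exact J.mul_mem_left _ (hind a ha)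
  have : f = (f - ∑ a : σ → K, C (eval a f) * indicator a)
      + ∑ a : σ → K, C (eval a f) * indicator a := by ring
  rw [this]
  exact J.add_mem hmain (Ideal.sum_mem _ fun a _ => hterm a)

lemma cycle_solvable {K : Type} [Field K] {n : ℕ} (hn : Even n)
    (Y : Fin (n + 1) → Kˣ) (c : Kˣ)
    (hc : c ^ 2 = ∏ j : Fin (n + 1), Y j ^ ((-1 : ℤ) ^ (j : ℕ))) :
    ∃ x : Fin (n + 1) → Kˣ, ∀ j, Y j = x j * x (finRotate (n + 1) j) := by
  classical
  set Yn : ℕ → Kˣ := fun l => Y ⟨l % (n + 1), Nat.mod_lt _ (Nat.succ_pos n)⟩ with hYnd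
  have hYn : ∀ j : Fin (n + 1), Yn (j : ℕ) = Y j := by
    intro j
    simp only [hYnd]
    congr 1
    exact Fin.ext (Nat.mod_eq_of_lt j.isLt)
  set xn : ℕ → Kˣ := fun l => Nat.rec c (fun l xl => Yn l * xl⁻¹) l with hxnd
  have hxn0 : xn 0 = c := rfl
  have hxns : ∀ l, xn (l + 1) = Yn l * (xn l)⁻¹ := fun l => rfl
  have hF : ∀ l, xn l = c ^ ((-1 : ℤ) ^ l) *
      ∏ i ∈ Finset.range l, Yn i ^ ((-1 : ℤ) ^ (l + i + 1)) := by
    intro l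
    induction l with
    | zero => simp [hxn0]
    | succ l ih =>
      rw [hxns, ih, Finset.prod_range_succ, mul_inv, ← Finset.prod_inv_distrib]
      simp only [← zpow_neg]
      have h1 : ∀ i : ℕ, -((-1 : ℤ) ^ (l + i + 1)) = (-1 : ℤ) ^ (l + 1 + i + 1) := by
        intro i; ring_nf
      have h2 : -((-1 : ℤ) ^ l) = (-1 : ℤ) ^ (l + 1) := by ring
      have h3 : (-1 : ℤ) ^ (l + 1 + l + 1) = 1 :=
        Even.neg_one_pow ⟨l + 1, by ring⟩
      rw [h2, h3, zpow_one]
      simp only [h1]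
      rw [mul_comm (Yn l), mul_assoc]
  refine ⟨fun j => xn (j : ℕ), fun j => ?_⟩
  rw [finRotate_succ_apply]
  by_cases hj : (j : ℕ) < n
  · have hval : ((j + 1 : Fin (n + 1)) : ℕ) = (j : ℕ) + 1 :=
      Fin.val_add_one_of_lt (by rwa [Fin.lt_iff_val_lt_val, Fin.val_last])
    show Y j = xn (j : ℕ) * xn ((j + 1 : Fin (n + 1)) : ℕ)
    rw [hval, hxns, ← hYn j]
    rw [mul_comm (Yn (j : ℕ)) _, ← mul_assoc, mul_inv_cancel, one_mul]
  · have hjn : (j : ℕ) = n := by omega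
    have hlast : j = Fin.last n := Fin.ext (by simpa using hjn)
    subst hlast
    rw [Fin.last_add_one]
    show Y (Fin.last n) = xn n * xn 0
    obtain ⟨t, rfl⟩ := hn
    have hA : c ^ 2 = (∏ i ∈ Finset.range (t + t), Yn i ^ ((-1 : ℤ) ^ i)) * Yn (t + t) := by
      have hconv : ∏ j : Fin (t + t + 1), Y j ^ ((-1 : ℤ) ^ (j : ℕ))
          = ∏ i ∈ Finset.range (t + t + 1), Yn i ^ ((-1 : ℤ) ^ i) := by
        rw [← Fin.prod_univ_eq_prod_range (fun l => Yn l ^ ((-1 : ℤ) ^ l)) (t + t + 1)]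
        exact Finset.prod_congr rfl (fun j _ => by rw [hYn])
      rw [hc, hconv, Finset.prod_range_succ]
      have he : (-1 : ℤ) ^ (t + t) = 1 := Even.neg_one_pow ⟨t, rfl⟩
      rw [he, zpow_one]
    set B : Kˣ := ∏ i ∈ Finset.range (t + t), Yn i ^ ((-1 : ℤ) ^ i) with hB
    rw [← hYn (Fin.last (t + t)), Fin.val_last, hxn0, hF (t + t)]
    have he : (-1 : ℤ) ^ (t + t) = 1 := Even.neg_one_pow ⟨t, rfl⟩
    have h1 : ∀ i : ℕ, (-1 : ℤ) ^ (t + t + i + 1) = -(-1 : ℤ) ^ i := by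
      intro i
      have hidx : t + t + i + 1 = (t + t) + (i + 1) := by omega
      rw [hidx, pow_add, he, one_mul]; ring
    simp only [h1, he, zpow_one, zpow_neg]
    rw [Finset.prod_inv_distrib, ← hB]
    have hY2 : Yn (t + t) = B⁻¹ * c ^ 2 := by
      rw [hA, ← mul_assoc, inv_mul_cancel, one_mul]
    rw [hY2, pow_two]
    rw [mul_comm B⁻¹ (c * c), mul_assoc]
    rw [← mul_assoc]
    exact (mul_right_comm c B⁻¹ c).symm

/-- Let `G` be a graph with `m` connected components, each an odd cycle of
length `k = 2γ+1`. Then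
`I(X*_G) = ⟨{t_i^{q−1}−1}_{i=1}^{km} ∪ (A₁ ∪ ⋯ ∪ A_m)⟩`. -/
theorem vanishingIdeal_cyclesToricSet (q k m γ : ℕ) (hγ : 1 ≤ γ) (hk : k = 2 * γ + 1)
    (hm : 1 ≤ m) (K : Type) [Field K] [Fintype K] (hq : Fintype.card K = q) (hq2 : 2 ∣ q - 1) :
    MvPolynomial.vanishingIdeal K (cyclesToricSet K k m) =
      Ideal.span
        ({p : MvPolynomial (Fin m × Fin k) K | ∃ j : Fin m × Fin k, p = X j ^ (q - 1) - 1} ∪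
          ⋃ i : Fin m, cycleBinomials K q k m γ i) := by
  classical
  subst hq
  set q : ℕ := Fintype.card K with hqd
  have hq1 : 1 < q := Fintype.one_lt_card
  obtain ⟨u, hu⟩ := id hq2
  have hqodd : q % 2 = 1 := by omega
  have hchar : ringChar K ≠ 2 := by
    intro h
    have := FiniteField.even_card_of_char_two h
    rw [← hqd] at this
    omega
  set d : ℕ := (q - 1) / 2 with hdd
  have h2d : 2 * d = q - 1 := Nat.mul_div_cancel' hq2
  have hd2 : q / 2 = d := by omega
  set J : Ideal (MvPolynomial (Fin m × Fin k) K) := Ideal.span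
    ({p : MvPolynomial (Fin m × Fin k) K | ∃ j : Fin m × Fin k, p = X j ^ (q - 1) - 1} ∪
      ⋃ i : Fin m, cycleBinomials K q k m γ i) with hJ
  have hpow1 : ∀ a : K, a ≠ 0 → (a ^ d) ^ 2 = 1 := by
    intro a ha
    rw [← pow_mul, mul_comm d 2, h2d, hqd]
    exact FiniteField.pow_card_sub_one_eq_one a ha
  refine le_antisymm ?_ ?_
  · -- hard direction
    have hXqJ : ∀ p : Fin m × Fin k, X p ^ q - X p ∈ J := by
      intro p
      have hgen : (X p ^ (q - 1) - 1 : MvPolynomial (Fin m × Fin k) K) ∈ J :=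
        Ideal.subset_span (Or.inl ⟨p, rfl⟩)
      have hid : X (R := K) p ^ q - X p = X p * (X p ^ (q - 1) - 1) := by
        rw [mul_sub, mul_one, ← pow_succ']
        congr 2
        omega
      rw [hid]
      exact J.mul_mem_left _ hgen
    refine le_trans ?_ (vanishingIdeal_zeroLocus_le_of_fieldEqns J hXqJ)
    apply vanishingIdeal_anti_mono
    intro y hy
    have h1 : ∀ p : Fin m × Fin k, y p ^ (q - 1) = 1 := by
      intro p
      have hpj := hy _ (Ideal.subset_span (Or.inl ⟨p, rfl⟩) :
        (X p ^ (q - 1) - 1 : MvPolynomial (Fin m × Fin k) K) ∈ J)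
      simp only [map_sub, map_pow, aeval_X, map_one] at hpj
      exact sub_eq_zero.mp hpj
    have ynz : ∀ p : Fin m × Fin k, y p ≠ 0 := by
      intro p hp
      have := h1 p
      rw [hp, zero_pow (by omega : q - 1 ≠ 0)] at this
      exact zero_ne_one this
    have h2 : ∀ (i : Fin m) (s : Finset (Fin k)), s.card = γ →
        (∏ α ∈ s, y (i, α) ^ d) = ∏ w ∈ sᶜ, y (i, w) ^ d := by
      intro i s hs
      have hmem : ((∏ α ∈ s, X ((i, α) : Fin m × Fin k) ^ d)
          - ∏ w ∈ sᶜ, X ((i, w) : Fin m × Fin k) ^ d) ∈ J :=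
        Ideal.subset_span (Or.inr (Set.mem_iUnion.mpr ⟨i, ⟨s, hs, rfl⟩⟩))
      have heval := hy _ hmem
      simp only [map_sub, map_prod, map_pow, aeval_X] at heval
      exact sub_eq_zero.mp heval
    have hP : ∀ i : Fin m, (∏ j : Fin k, y (i, j) ^ d) = 1 := by
      intro i
      obtain ⟨s, -, hscard⟩ := Finset.exists_subset_card_eq
        (show γ ≤ (Finset.univ : Finset (Fin k)).card by
          rw [Finset.card_univ, Fintype.card_fin]; omega)
      have hsplit : (∏ j : Fin k, y (i, j) ^ d)
          = (∏ j ∈ s, y (i, j) ^ d) * ∏ j ∈ sᶜ, y (i, j) ^ d :=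
        (Finset.prod_mul_prod_compl s _).symm
      rw [hsplit, ← h2 i s hscard, ← Finset.prod_mul_distrib]
      exact Finset.prod_eq_one
        (fun j _ => by rw [← pow_two]; exact hpow1 _ (ynz (i, j)))
    set Y : Fin m → Fin k → Kˣ := fun i j => Units.mk0 (y (i, j)) (ynz (i, j)) with hYd
    have hYsq : ∀ i j, (Y i j ^ d) ^ 2 = 1 := by
      intro i j
      apply Units.ext
      push_cast
      exact hpow1 _ (ynz (i, j))
    have hA1 : ∀ i : Fin m, (∏ j : Fin k, Y i j ^ ((-1 : ℤ) ^ (j : ℕ))) ^ d = 1 := by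
      intro i
      rw [← Finset.prod_pow]
      have heach : ∀ j : Fin k, (Y i j ^ ((-1 : ℤ) ^ (j : ℕ))) ^ d = Y i j ^ d := by
        intro j
        rcases Nat.even_or_odd (j : ℕ) with he | ho
        · rw [he.neg_one_pow, zpow_one]
        · rw [ho.neg_one_pow, zpow_neg, zpow_one, inv_pow]
          exact inv_eq_of_mul_eq_one_left (by rw [← pow_two]; exact hYsq i j)
      rw [show (∏ j : Fin k, (Y i j ^ ((-1 : ℤ) ^ (j : ℕ))) ^ d) = ∏ j : Fin k, Y i j ^ d from
        Finset.prod_congr rfl (fun j _ => heach j)]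
      apply Units.ext
      push_cast
      exact hP i
    have hsquare : ∀ i : Fin m,
        ∃ c : Kˣ, c ^ 2 = ∏ j : Fin k, Y i j ^ ((-1 : ℤ) ^ (j : ℕ)) := by
      intro i
      have hsq : IsSquare (∏ j : Fin k, Y i j ^ ((-1 : ℤ) ^ (j : ℕ))) := by
        refine (FiniteField.unit_isSquare_iff hchar _).mpr ?_
        rw [← hqd, hd2]
        exact hA1 i
      obtain ⟨r, hr⟩ := hsq
      exact ⟨r, by rw [pow_two, ← hr]⟩
    choose cc hcc using hsquare
    have hEven : Even (2 * γ) := ⟨γ, by ring⟩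
    subst hk
    choose xu hxu using fun i => cycle_solvable (n := 2 * γ) hEven (Y i) (cc i) (hcc i)
    refine ⟨fun p => (xu p.1 p.2 : K), fun p => Units.ne_zero _, fun p => ?_⟩
    have h := congrArg Units.val (hxu p.1 p.2)
    simpa [hYd] using h
  · -- easy direction
    rw [Ideal.span_le]
    rintro p hp
    rcases hp with ⟨j, rfl⟩ | hp
    · intro y hy
      obtain ⟨x, hx0, hxy⟩ := hy
      simp only [map_sub, map_pow, aeval_X, map_one]
      have hne : y j ≠ 0 := by
        rw [hxy j]
        exact mul_ne_zero (hx0 _) (hx0 _)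
      rw [hqd, FiniteField.pow_card_sub_one_eq_one _ hne, sub_self]
    · simp only [Set.mem_iUnion] at hp
      obtain ⟨i, s, hscard, rfl⟩ := hp
      intro y hy
      obtain ⟨x, hx0, hxy⟩ := hy
      simp only [map_sub, map_prod, map_pow, aeval_X]
      rw [sub_eq_zero]
      have hynz : ∀ j : Fin k, y (i, j) ≠ 0 := by
        intro j
        rw [hxy (i, j)]
        exact mul_ne_zero (hx0 _) (hx0 _)
      have hPe : (∏ j : Fin k, y (i, j) ^ d) = 1 := by
        rw [Finset.prod_pow]
        have h1 : ∏ j : Fin k, y (i, j) = (∏ j : Fin k, x (i, j)) ^ 2 := by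
          calc (∏ j : Fin k, y (i, j))
              = ∏ j : Fin k, (x (i, j) * x (i, finRotate k j)) :=
                Finset.prod_congr rfl (fun j _ => hxy (i, j))
            _ = (∏ j : Fin k, x (i, j)) * ∏ j : Fin k, x (i, finRotate k j) :=
                Finset.prod_mul_distrib
            _ = (∏ j : Fin k, x (i, j)) * ∏ j : Fin k, x (i, j) := by
                rw [Equiv.prod_comp (finRotate k) (fun j => x (i, j))]
            _ = (∏ j : Fin k, x (i, j)) ^ 2 := (sq _).symm
        rw [h1, ← pow_mul, mul_comm 2 d, mul_comm d 2, h2d, hqd]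
        exact FiniteField.pow_card_sub_one_eq_one _
          (Finset.prod_ne_zero_iff.mpr fun j _ => hx0 (i, j))
      have hsplit : (∏ α ∈ s, y (i, α) ^ d) * (∏ w ∈ sᶜ, y (i, w) ^ d) = 1 := by
        rw [Finset.prod_mul_prod_compl]
        exact hPe
      have hs2 : (∏ α ∈ s, y (i, α) ^ d) ^ 2 = 1 := by
        rw [← Finset.prod_pow]
        exact Finset.prod_eq_one (fun j _ => hpow1 _ (hynz j))
      calc (∏ α ∈ s, y (i, α) ^ d)
          = (∏ α ∈ s, y (i, α) ^ d) * ((∏ α ∈ s, y (i, α) ^ d) * ∏ w ∈ sᶜ, y (i, w) ^ d) := by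
            rw [hsplit, mul_one]
        _ = (∏ α ∈ s, y (i, α) ^ d) ^ 2 * ∏ w ∈ sᶜ, y (i, w) ^ d := by ring
        _ = ∏ w ∈ sᶜ, y (i, w) ^ d := by rw [hs2, one_mul]
end

section
/- Let 𝒢 = 𝒢_1 ∪ ⋯ ∪ 𝒢_r, where for each 1 ≤ i ≤ r the graph 𝒢_i has m_i connected components, each of which is a cycle of odd length k_i = 2γ_i+1. Then the vanishing ideal of X*_𝒢 equals the ideal of the polynomial ring K[t^1_1,…,t^1_{k_1m_1},…,t^r_1,…,t^r_{k_rm_r}] generated by all polynomials (t^i_j)^{q−1}−1 (1 ≤ i ≤ r, 1 ≤ j ≤ k_i m_i) together with the binomials in ⋃_{i=1}^r ⋃_{j=1}^{m_i} A^i_j. -/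
open MvPolynomial

/-- The affine algebraic toric set parameterized by the disjoint union `𝒢 = 𝒢₁ ∪ ⋯ ∪ 𝒢_r`,
where `𝒢_i` is the disjoint union of `mf i` cycles of length `kf i`. The coordinates (one for
each edge of `𝒢`) are indexed by triples `⟨i, j, l⟩` (the `l`-th edge of the `j`-th cycle of
`𝒢_i`), and the coordinate at `⟨i, j, l⟩` is `x ⟨i, j, l⟩ * x ⟨i, j, l+1⟩`, the edge index `l`
being taken cyclically in its cycle. -/
def unionCyclesToricSet (K : Type) [Field K] (r : ℕ) (kf mf : Fin r → ℕ) :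
    Set ((i : Fin r) × (Fin (mf i) × Fin (kf i)) → K) :=
  {y | ∃ x : (i : Fin r) × (Fin (mf i) × Fin (kf i)) → K, (∀ p, x p ≠ 0) ∧
    ∀ p : (i : Fin r) × (Fin (mf i) × Fin (kf i)),
      y p = x p * x ⟨p.1, (p.2.1, finRotate (kf p.1) p.2.2)⟩}

/-- The set `A^i_j` of binomials attached to the `j`-th cycle of `𝒢_i`. -/
def unionCycleBinomials (K : Type) [Field K] (q r : ℕ) (kf mf γf : Fin r → ℕ)
    (i : Fin r) (j : Fin (mf i)) :
    Set (MvPolynomial ((i : Fin r) × (Fin (mf i) × Fin (kf i))) K) :=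
  {f | ∃ s : Finset (Fin (kf i)), s.card = γf i ∧
    f = (∏ α ∈ s, X (⟨i, (j, α)⟩ : (i : Fin r) × (Fin (mf i) × Fin (kf i))) ^ ((q - 1) / 2)) -
        ∏ w ∈ sᶜ, X (⟨i, (j, w)⟩ : (i : Fin r) × (Fin (mf i) × Fin (kf i))) ^ ((q - 1) / 2)}

section Nullstellensatz

variable {σ K : Type} [Field K] [Fintype K]

/-- Reduction of an exponent modulo the relation `X^q = X`. -/
private def redExp (Q e : ℕ) : ℕ := if e = 0 then 0 else (e - 1) % (Q - 1) + 1

private lemma redExp_le {Q e : ℕ} (hQ : 2 ≤ Q) : redExp Q e ≤ Q - 1 := by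
  unfold redExp
  split_ifs with h
  · omega
  · have : (e - 1) % (Q - 1) < Q - 1 := Nat.mod_lt _ (by omega)
    omega

/-- The ideal generated by the field equations. -/
private noncomputable def fieldEqIdeal (σ K : Type) [Field K] [Fintype K] : Ideal (MvPolynomial σ K) :=
  Ideal.span {p | ∃ v, p = X v ^ Fintype.card K - X v}

private lemma pow_redExp_mem (v : σ) (e : ℕ) :
    (X v ^ e - X v ^ redExp (Fintype.card K) e : MvPolynomial σ K) ∈ fieldEqIdeal σ K := by
  set Q := Fintype.card K with hQdef
  have hQ : 2 ≤ Q := Fintype.one_lt_card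
  induction e using Nat.strong_induction_on with
  | _ e ih =>
    rcases le_or_gt e (Q - 1) with he | he
    · have : redExp Q e = e := by
        unfold redExp
        split_ifs with h
        · omega
        · have : (e - 1) % (Q - 1) = e - 1 := Nat.mod_eq_of_lt (by omega)
          omega
      rw [this, sub_self]
      exact zero_mem _
    · -- e ≥ Q
      have heQ : Q ≤ e := by omega
      set e' := e - (Q - 1) with he'
      have h1 : (X v ^ e - X v ^ e' : MvPolynomial σ K) ∈ fieldEqIdeal σ K := by
        have hmem : (X v ^ Q - X v : MvPolynomial σ K) ∈ fieldEqIdeal σ K :=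
          Ideal.subset_span ⟨v, rfl⟩
        have : (X v ^ e - X v ^ e' : MvPolynomial σ K)
            = X v ^ (e - Q) * (X v ^ Q - X v) := by
          rw [mul_sub, ← pow_add, ← pow_succ]
          congr 2 <;> omega
        rw [this]
        exact Ideal.mul_mem_left _ _ hmem
      have hred : redExp Q e = redExp Q e' := by
        unfold redExp
        have h0 : e ≠ 0 := by omega
        have h0' : e' ≠ 0 := by omega
        rw [if_neg h0, if_neg h0']
        have : e - 1 = (e' - 1) + (Q - 1) := by omega
        rw [this, Nat.add_mod_right]
      have h2 := ih e' (by omega)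
      rw [hred]
      have : (X v ^ e - X v ^ redExp Q e' : MvPolynomial σ K)
          = (X v ^ e - X v ^ e') + (X v ^ e' - X v ^ redExp Q e') := by ring
      rw [this]
      exact add_mem h1 h2

private lemma mk_monomial_redExp [Fintype σ] (d : σ →₀ ℕ) (co : K) :
    Ideal.Quotient.mk (fieldEqIdeal σ K) (monomial d co) =
      Ideal.Quotient.mk (fieldEqIdeal σ K)
        (monomial (d.mapRange (redExp (Fintype.card K)) (by simp [redExp])) co) := by
  rw [monomial_eq, monomial_eq]
  rw [Finsupp.prod_fintype _ _ (fun i => pow_zero _), Finsupp.prod_fintype _ _ (fun i => pow_zero _)]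
  rw [map_mul, map_mul, map_prod, map_prod]
  congr 1
  apply Finset.prod_congr rfl
  intro v _
  rw [Finsupp.mapRange_apply]
  exact (Ideal.Quotient.eq).mpr (pow_redExp_mem v (d v))

private lemma exists_restrict [Fintype σ] (f : MvPolynomial σ K) :
    ∃ g ∈ restrictDegree σ K (Fintype.card K - 1),
      Ideal.Quotient.mk (fieldEqIdeal σ K) f = Ideal.Quotient.mk (fieldEqIdeal σ K) g := by
  induction f using MvPolynomial.induction_on' with
  | monomial d co =>
    refine ⟨monomial (d.mapRange (redExp (Fintype.card K)) (by simp [redExp])) co, ?_,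
      mk_monomial_redExp d co⟩
    rw [mem_restrictDegree]
    intro s hs i
    have := MvPolynomial.support_monomial_subset hs
    simp only [Finset.mem_singleton] at this
    subst this
    rw [Finsupp.mapRange_apply]
    exact redExp_le Fintype.one_lt_card
  | add p q hp hq =>
    obtain ⟨g1, hg1, e1⟩ := hp
    obtain ⟨g2, hg2, e2⟩ := hq
    refine ⟨g1 + g2, add_mem hg1 hg2, (Ideal.Quotient.eq).mpr ?_⟩
    have hre : p + q - (g1 + g2) = (p - g1) + (q - g2) := by ring
    rw [hre]
    exact add_mem ((Ideal.Quotient.eq).mp e1) ((Ideal.Quotient.eq).mp e2)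

private lemma fieldEqIdeal_eval_zero {f : MvPolynomial σ K} (hf : f ∈ fieldEqIdeal σ K)
    (x : σ → K) : eval x f = 0 := by
  refine Submodule.span_induction ?_ ?_ ?_ ?_ hf
  · rintro p ⟨v, rfl⟩
    simp [FiniteField.pow_card]
  · simp
  · intro p q _ _ hp hq; simp [hp, hq]
  · intro a p _ hp; simp [hp]

private lemma mem_fieldEqIdeal_of_eval_eq_zero [Fintype σ] (f : MvPolynomial σ K)
    (h : ∀ x : σ → K, eval x f = 0) : f ∈ fieldEqIdeal σ K := by
  obtain ⟨g, hg, e⟩ := exists_restrict f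
  have hfg : f - g ∈ fieldEqIdeal σ K := (Ideal.Quotient.eq).mp e
  have hg0 : g = 0 := by
    refine MvPolynomial.eq_zero_of_eval_eq_zero σ K g (fun x => ?_) hg
    have := fieldEqIdeal_eval_zero hfg x
    rw [map_sub, h x, zero_sub, neg_eq_zero] at this
    exact this
  have : f = f - g := by rw [hg0, sub_zero]
  rw [this]; exact hfg

/-- Finite-field Nullstellensatz for ideals containing the field equations. -/
private lemma mem_of_vanish_zeroLocus [Fintype σ] (J : Ideal (MvPolynomial σ K))
    (hJ : fieldEqIdeal σ K ≤ J) (f : MvPolynomial σ K)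
    (hf : ∀ x ∈ MvPolynomial.zeroLocus K J, eval x f = 0) : f ∈ J := by
  classical
  have hind : ∀ a : σ → K, a ∉ MvPolynomial.zeroLocus K J → indicator a ∈ J := by
    intro a ha
    rw [MvPolynomial.mem_zeroLocus_iff] at ha
    push_neg at ha
    obtain ⟨g, hgJ, hga⟩ := ha
    set h : MvPolynomial σ K := C (eval a g)⁻¹ * g * indicator a with hh
    have hhJ : h ∈ J := Ideal.mul_mem_right _ _ (Ideal.mul_mem_left _ _ hgJ)
    have hdiff : indicator a - h ∈ fieldEqIdeal σ K := by
      apply mem_fieldEqIdeal_of_eval_eq_zero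
      intro b
      rw [map_sub, hh, map_mul, map_mul, eval_C]
      rcases eq_or_ne b a with rfl | hba
      · rw [eval_indicator_apply_eq_one, inv_mul_cancel₀ (show eval b g ≠ 0 from hga)]; ring
      · rw [eval_indicator_apply_eq_zero _ _ hba]; ring
    have : indicator a = (indicator a - h) + h := by ring
    rw [this]
    exact add_mem (hJ hdiff) hhJ
  set Zc : Finset (σ → K) := Finset.univ.filter (· ∉ MvPolynomial.zeroLocus K J) with hZc
  set f' : MvPolynomial σ K := ∑ a ∈ Zc, C (eval a f) * indicator a with hf'
  have hf'J : f' ∈ J := by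
    refine Ideal.sum_mem _ (fun a ha => Ideal.mul_mem_left _ _ ?_)
    rw [hZc, Finset.mem_filter] at ha
    exact hind a ha.2
  have hdiff : f - f' ∈ fieldEqIdeal σ K := by
    apply mem_fieldEqIdeal_of_eval_eq_zero
    intro b
    rw [map_sub, hf', map_sum]
    have hterm : ∀ a ∈ Zc, a ≠ b → eval b (C (eval a f) * indicator a) = 0 := by
      intro a _ hab
      rw [map_mul, eval_indicator_apply_eq_zero b a (Ne.symm hab), mul_zero]
    rcases Classical.em (b ∈ MvPolynomial.zeroLocus K J) with hb | hb
    · rw [hf b hb]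
      rw [Finset.sum_eq_zero, sub_zero]
      intro a ha
      refine hterm a ha ?_
      rintro rfl
      rw [hZc, Finset.mem_filter] at ha
      exact ha.2 hb
    · have hbZc : b ∈ Zc := by rw [hZc, Finset.mem_filter]; exact ⟨Finset.mem_univ _, hb⟩
      rw [Finset.sum_eq_single_of_mem b hbZc hterm]
      rw [map_mul, eval_C, eval_indicator_apply_eq_one, mul_one, sub_self]
  have : f = (f - f') + f' := by ring
  rw [this]
  exact add_mem (hJ hdiff) hf'J

end Nullstellensatz

section Helpers

variable {K : Type} [Field K]

/-- If each `u m` squares to `1`, then `∏_s u = ∏_{sᶜ} u` iff the total product is `1`. -/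
private lemma prod_sq_one_helper {ι : Type} [Fintype ι] [DecidableEq ι] (u : ι → K)
    (hsq : ∀ m, u m * u m = 1) (s : Finset ι) :
    (∏ m ∈ s, u m) = (∏ m ∈ sᶜ, u m) ↔ (∏ m, u m) = 1 := by
  have h2 : (∏ m ∈ s, u m) * (∏ m ∈ s, u m) = 1 := by
    rw [← Finset.prod_mul_distrib]
    exact Finset.prod_eq_one fun m _ => hsq m
  have hne : (∏ m ∈ s, u m) ≠ 0 := by
    intro h0
    rw [h0, mul_zero] at h2
    exact zero_ne_one h2
  constructor
  · intro h
    rw [← Finset.prod_mul_prod_compl s u, ← h]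
    exact h2
  · intro h
    have h1 : (∏ m ∈ s, u m) * (∏ m ∈ sᶜ, u m) = 1 := by
      rw [Finset.prod_mul_prod_compl]; exact h
    exact mul_left_cancel₀ hne (h2.trans h1.symm)

private lemma finRotate_val {n : ℕ} (hn : n ≠ 0) (l : Fin n) :
    ((finRotate n l : Fin n) : ℕ) = (l.val + 1) % n := by
  cases n with
  | zero => omega
  | succ m =>
    rw [finRotate_succ_apply, Fin.val_add, Fin.val_one']
    conv_rhs => rw [Nat.add_mod]
    rw [Nat.mod_eq_of_lt l.isLt]

private lemma mod_two_mul {x k : ℕ} (h0 : 0 < k) (h2 : x < 2 * k) :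
    (x < k ∧ x % k = x) ∨ (k ≤ x ∧ x % k = x - k) := by
  rcases Nat.lt_or_ge x k with h | h
  · exact Or.inl ⟨h, Nat.mod_eq_of_lt h⟩
  · exact Or.inr ⟨h, by rw [Nat.mod_eq_sub_mod h, Nat.mod_eq_of_lt (by omega)]⟩

private lemma cycle_parity {k a b : ℕ} (hk : k % 2 = 1) (ha : a < k) (hb : b < k) :
    ((b + k - a) % k % 2 = 1 ∨ (b + k - (a + 1) % k) % k % 2 = 1 ↔ ¬b = a) ∧
    ¬((b + k - a) % k % 2 = 1 ∧ (b + k - (a + 1) % k) % k % 2 = 1) := by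
  have h0 : 0 < k := by omega
  have e1 := mod_two_mul h0 (show a + 1 < 2 * k by omega)
  generalize hA : (a + 1) % k = a' at e1 ⊢
  have e3 := mod_two_mul h0 (show b + k - a' < 2 * k by omega)
  have e2 := mod_two_mul h0 (show b + k - a < 2 * k by omega)
  generalize hD : (b + k - a) % k = d at e2 ⊢
  generalize hD' : (b + k - a') % k = d' at e3 ⊢
  omega

end Helpers

/-- Let `𝒢 = 𝒢₁ ∪ ⋯ ∪ 𝒢_r`, where `𝒢_i` has `mf i` connected components,
each an odd cycle of length `kf i = 2·γf i + 1`. Then `I(X*_𝒢)` is the ideal generated by all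
`(t^i_j)^{q−1} − 1` together with the binomials in `⋃_i ⋃_j A^i_j`. -/
theorem vanishingIdeal_unionCyclesToricSet (q r : ℕ) (kf mf γf : Fin r → ℕ)
    (hγ : ∀ i, 1 ≤ γf i) (hk : ∀ i, kf i = 2 * γf i + 1) (hm : ∀ i, 1 ≤ mf i)
    (K : Type) [Field K] [Fintype K] (hq : Fintype.card K = q) (hq2 : 2 ∣ q - 1) :
    MvPolynomial.vanishingIdeal K (unionCyclesToricSet K r kf mf) =
      Ideal.span
        ({p : MvPolynomial ((i : Fin r) × (Fin (mf i) × Fin (kf i))) K |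
            ∃ v : (i : Fin r) × (Fin (mf i) × Fin (kf i)), p = X v ^ (q - 1) - 1} ∪
          ⋃ (i : Fin r) (j : Fin (mf i)), unionCycleBinomials K q r kf mf γf i j) := by
  classical
  subst hq
  set Q := Fintype.card K with hQdef
  have hQ2 : 2 ≤ Q := Fintype.one_lt_card
  have hQodd : Q % 2 = 1 := by omega
  set h2 := (Q - 1) / 2 with hh2
  have hhalf : h2 + h2 = Q - 1 := by omega
  refine le_antisymm ?_ ?_
  · -- hard direction: vanishingIdeal ≤ span
    intro f hf
    refine mem_of_vanish_zeroLocus _ ?_ f ?_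
    · -- fieldEqIdeal ≤ span
      rw [fieldEqIdeal]
      rw [Ideal.span_le]
      rintro p ⟨v, rfl⟩
      have hxq : (X v : MvPolynomial _ K) ^ Q = X v ^ (Q - 1) * X v := by
        rw [← pow_succ]
        congr 1
        omega
      have hx : (X v ^ Q - X v : MvPolynomial _ K) = (X v ^ (Q - 1) - 1) * X v := by
        rw [sub_mul, one_mul, ← hxq]
      rw [SetLike.mem_coe, hx]
      exact Ideal.mul_mem_right _ _ (Ideal.subset_span (Or.inl ⟨v, rfl⟩))
    · -- every point of the zero locus is in the toric set
      intro y hy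
      rw [mem_zeroLocus_iff] at hy
      have hy : ∀ p ∈ _, eval y p = 0 := hy
      rw [mem_vanishingIdeal_iff] at hf
      refine hf y ?_
      have hy1 : ∀ v, y v ^ (Q - 1) = 1 := by
        intro v
        have := hy _ (Ideal.subset_span (Or.inl ⟨v, rfl⟩))
        simp only [map_sub, map_pow, map_one, eval_X] at this
        rwa [sub_eq_zero] at this
      have hy0 : ∀ v, y v ≠ 0 := by
        intro v h0
        have := hy1 v
        rw [h0, zero_pow (show Q - 1 ≠ 0 by omega)] at this
        exact zero_ne_one this
      have hchar : ringChar K ≠ 2 := by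
        intro hc
        have := FiniteField.even_card_of_char_two hc
        omega
      have hsq : ∀ (i : Fin r) (j : Fin (mf i)) (m : Fin (kf i)),
          (y ⟨i, (j, m)⟩ ^ h2) * (y ⟨i, (j, m)⟩ ^ h2) = 1 := by
        intro i j m
        rw [← pow_add, hhalf]
        exact hy1 _
      have key : ∀ (i : Fin r) (j : Fin (mf i)),
          ∃ c : K, c ≠ 0 ∧ c * c = ∏ m, y ⟨i, (j, m)⟩ := by
        intro i j
        have hP0 : (∏ m, y ⟨i, (j, m)⟩) ≠ 0 :=
          Finset.prod_ne_zero_iff.mpr fun m _ => hy0 _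
        obtain ⟨s, _, hscard⟩ := Finset.exists_subset_card_eq
          (show γf i ≤ (Finset.univ : Finset (Fin (kf i))).card by
            rw [Finset.card_univ, Fintype.card_fin, hk i]; omega)
        have hbin := hy ((∏ α ∈ s, X (⟨i, (j, α)⟩ : (i : Fin r) × (Fin (mf i) × Fin (kf i))) ^ h2) -
            ∏ w ∈ sᶜ, X (⟨i, (j, w)⟩ : (i : Fin r) × (Fin (mf i) × Fin (kf i))) ^ h2)
          (Ideal.subset_span (Or.inr (by
            simp only [Set.mem_iUnion]
            exact ⟨i, j, s, hscard, rfl⟩)))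
        simp only [map_sub, map_prod, map_pow, eval_X] at hbin
        rw [sub_eq_zero] at hbin
        have hprod1 := (prod_sq_one_helper (fun m => y ⟨i, (j, m)⟩ ^ h2) (hsq i j) s).mp hbin
        rw [Finset.prod_pow] at hprod1
        have hQdiv : Fintype.card K / 2 = h2 := by omega
        have : IsSquare (∏ m, y ⟨i, (j, m)⟩) := by
          rw [FiniteField.isSquare_iff hchar hP0, hQdiv]
          exact hprod1
        obtain ⟨c, hc⟩ := this
        refine ⟨c, ?_, hc.symm⟩
        intro h0
        rw [h0, mul_zero] at hc
        exact hP0 hc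
      choose c hc0 hcc using key
      refine ⟨fun p => c p.1 p.2.1 *
          ∏ m ∈ Finset.univ.filter
            (fun m : Fin (kf p.1) => (m.val + kf p.1 - p.2.2.val) % kf p.1 % 2 = 1),
            (y ⟨p.1, (p.2.1, m)⟩)⁻¹, ?_, ?_⟩
      · intro p
        exact mul_ne_zero (hc0 _ _)
          (Finset.prod_ne_zero_iff.mpr fun m _ => inv_ne_zero (hy0 _))
      · rintro ⟨i, j, l⟩
        dsimp only
        have hk0 : kf i ≠ 0 := by rw [hk i]; omega
        have hkodd : kf i % 2 = 1 := by rw [hk i]; omega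
        have hval : ((finRotate (kf i) l : Fin (kf i)) : ℕ) = (l.val + 1) % kf i :=
          finRotate_val hk0 l
        set S1 := Finset.univ.filter
          (fun m : Fin (kf i) => (m.val + kf i - l.val) % kf i % 2 = 1) with hS1
        set S2 := Finset.univ.filter
          (fun m : Fin (kf i) => (m.val + kf i - (finRotate (kf i) l).val) % kf i % 2 = 1) with hS2
        have hmem : ∀ m : Fin (kf i), (m ∈ S1 ∪ S2 ↔ ¬m = l) ∧ ¬(m ∈ S1 ∧ m ∈ S2) := by
          intro m
          have hpar := cycle_parity hkodd l.isLt m.isLt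
          simp only [hS1, hS2, Finset.mem_union, Finset.mem_filter, Finset.mem_univ, true_and,
            hval, Fin.ext_iff]
          exact hpar
        have hdisj : Disjoint S1 S2 :=
          Finset.disjoint_left.mpr fun m h1 h2 => (hmem m).2 ⟨h1, h2⟩
        have hunion : S1 ∪ S2 = Finset.univ.erase l := by
          ext m
          rw [Finset.mem_erase, (hmem m).1]
          simp
        have hprod : (∏ m ∈ S1, (y ⟨i, (j, m)⟩)⁻¹) * ∏ m ∈ S2, (y ⟨i, (j, m)⟩)⁻¹
            = (∏ m ∈ Finset.univ.erase l, y ⟨i, (j, m)⟩)⁻¹ := by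
          rw [← Finset.prod_union hdisj, hunion, Finset.prod_inv_distrib]
        have hPe : y ⟨i, (j, l)⟩ * ∏ m ∈ Finset.univ.erase l, y ⟨i, (j, m)⟩
            = ∏ m, y ⟨i, (j, m)⟩ :=
          Finset.mul_prod_erase Finset.univ (fun m => y ⟨i, (j, m)⟩) (Finset.mem_univ l)
        have herase0 : (∏ m ∈ Finset.univ.erase l, y ⟨i, (j, m)⟩) ≠ 0 :=
          Finset.prod_ne_zero_iff.mpr fun m _ => hy0 _
        have hre : (c i j * ∏ m ∈ S1, (y ⟨i, (j, m)⟩)⁻¹) *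
              (c i j * ∏ m ∈ S2, (y ⟨i, (j, m)⟩)⁻¹)
            = (c i j * c i j) *
              ((∏ m ∈ S1, (y ⟨i, (j, m)⟩)⁻¹) * ∏ m ∈ S2, (y ⟨i, (j, m)⟩)⁻¹) := by
          ring
        rw [hre, hprod, hcc, ← hPe, mul_assoc, mul_inv_cancel₀ herase0, mul_one]
  · -- easy direction: span ≤ vanishingIdeal
    rw [Ideal.span_le]
    rintro p hp
    rw [SetLike.mem_coe, mem_vanishingIdeal_iff]
    rintro y ⟨x, hx0, hxy⟩
    have hy0 : ∀ v, y v ≠ 0 := by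
      intro v
      rw [hxy v]
      exact mul_ne_zero (hx0 _) (hx0 _)
    rcases hp with ⟨v, rfl⟩ | hp
    · simp only [map_sub, map_pow, map_one, aeval_X]
      rw [FiniteField.pow_card_sub_one_eq_one _ (hy0 v), sub_self]
    · simp only [Set.mem_iUnion] at hp
      obtain ⟨i, j, s, hscard, rfl⟩ := hp
      simp only [map_sub, map_prod, map_pow, aeval_X]
      rw [sub_eq_zero]
      have hsq : ∀ m : Fin (kf i), (y ⟨i, (j, m)⟩ ^ h2) * (y ⟨i, (j, m)⟩ ^ h2) = 1 := by
        intro m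
        rw [← pow_add, hhalf]
        exact FiniteField.pow_card_sub_one_eq_one _ (hy0 _)
      refine (prod_sq_one_helper (fun m => y ⟨i, (j, m)⟩ ^ h2) hsq s).mpr ?_
      have hx2 : ∏ m, y ⟨i, (j, m)⟩
          = (∏ m, x ⟨i, (j, m)⟩) * ∏ m, x ⟨i, (j, m)⟩ := by
        calc ∏ m, y ⟨i, (j, m)⟩
            = ∏ m, (x ⟨i, (j, m)⟩ * x ⟨i, (j, finRotate (kf i) m)⟩) :=
              Finset.prod_congr rfl fun m _ => hxy ⟨i, (j, m)⟩
          _ = (∏ m, x ⟨i, (j, m)⟩) * ∏ m, x ⟨i, (j, finRotate (kf i) m)⟩ :=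
              Finset.prod_mul_distrib
          _ = _ := by
              rw [Equiv.prod_comp (finRotate (kf i)) (fun m => x ⟨i, (j, m)⟩)]
      have hxne : (∏ m, x ⟨i, (j, m)⟩) ≠ 0 :=
        Finset.prod_ne_zero_iff.mpr fun m _ => hx0 _
      rw [Finset.prod_pow, hx2, ← pow_two, ← pow_mul]
      have : 2 * h2 = Q - 1 := by omega
      rw [this]
      exact FiniteField.pow_card_sub_one_eq_one _ hxne
end

section
/- The set G = {t_i^{q−1}−1 : 1 ≤ i ≤ km} ∪ (A_1 ∪ ⋯ ∪ A_m) is a Gröbner basis of I(X*_𝒢) with respect to the graded lexicographic monomial order; that is, G ⊆ I(X*_𝒢) and for every nonzero f ∈ I(X*_𝒢) the leading monomial of f with respect to the graded lexicographic order is divisible by the leading monomial of some element of G. -/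
open MvPolynomial

/-- The natural linear ordering of the variables `t_{(i−1)k+j}`, identifying the pair `(i, j)`
with the number `i·k + j`. -/
def varLT {m k : ℕ} (p p' : Fin m × Fin k) : Prop :=
  (p.1 : ℕ) * k + (p.2 : ℕ) < (p'.1 : ℕ) * k + (p'.2 : ℕ)

/-- The graded lexicographic order on monomials (exponent vectors): first compare total
degrees, then compare lexicographically with respect to the variable ordering. -/
def grlexLT {m k : ℕ} (μ ν : Fin m × Fin k →₀ ℕ) : Prop :=
  (μ.sum fun _ e => e) < (ν.sum fun _ e => e) ∨
    ((μ.sum fun _ e => e) = (ν.sum fun _ e => e) ∧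
      Finsupp.Lex varLT (· < ·) μ ν)

/-- `μ` is the leading monomial of `f` with respect to the graded lexicographic order:
`μ` occurs in `f` and is grlex-larger than every other monomial of `f`. -/
def IsLeadingMonomial {K : Type} [Field K] {m k : ℕ}
    (f : MvPolynomial (Fin m × Fin k) K) (μ : Fin m × Fin k →₀ ℕ) : Prop :=
  μ ∈ f.support ∧ ∀ ν ∈ f.support, ν ≠ μ → grlexLT ν μ

namespace GB

variable {K : Type} [Field K] {m k : ℕ}

/-- total degree of an exponent vector -/
noncomputable def deg (μ : Fin m × Fin k →₀ ℕ) : ℕ := μ.sum fun _ e => e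

lemma deg_eq_sum (μ : Fin m × Fin k →₀ ℕ) : deg μ = ∑ j : Fin m × Fin k, μ j := by
  rw [deg, Finsupp.sum_fintype]
  intro _; rfl

lemma deg_single (j : Fin m × Fin k) (n : ℕ) : deg (Finsupp.single j n) = n := by
  rw [deg, Finsupp.sum_single_index]; rfl

lemma deg_zero : deg (0 : Fin m × Fin k →₀ ℕ) = 0 := by simp [deg]

lemma sumsingle_apply (i : Fin m) (c : Finset (Fin k)) (h : ℕ) (j : Fin m × Fin k) :
    (∑ w ∈ c, Finsupp.single ((i, w) : Fin m × Fin k) h) j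
      = if j.1 = i ∧ j.2 ∈ c then h else 0 := by
  rw [Finsupp.finset_sum_apply]
  obtain ⟨i', a⟩ := j
  rcases eq_or_ne i' i with rfl | hne
  · simp only [Finsupp.single_apply, Prod.mk.injEq, true_and]
    rw [Finset.sum_ite_eq' c a (fun _ => h)]
  · rw [Finset.sum_eq_zero, eq_comm, if_neg (by simp [hne])]
    intro w _
    rw [Finsupp.single_apply, if_neg]
    intro hh
    exact hne (congrArg Prod.fst hh).symm

lemma deg_sumsingle (i : Fin m) (c : Finset (Fin k)) (h : ℕ) :
    deg (∑ w ∈ c, Finsupp.single ((i, w) : Fin m × Fin k) h) = c.card * h := by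
  classical
  rw [deg_eq_sum]
  simp only [sumsingle_apply]
  rw [Finset.sum_ite, Finset.sum_const_zero, add_zero, Finset.sum_const, smul_eq_mul]
  congr 1
  have himg : Finset.filter (fun x : Fin m × Fin k => x.1 = i ∧ x.2 ∈ c) Finset.univ
      = c.image (fun w => ((i, w) : Fin m × Fin k)) := by
    ext ⟨i', a⟩
    simp only [Finset.mem_filter, Finset.mem_univ, true_and, Finset.mem_image,
      Prod.mk.injEq]
    constructor
    · rintro ⟨rfl, ha⟩; exact ⟨a, ha, rfl, rfl⟩
    · rintro ⟨w, hw, rfl, rfl⟩; exact ⟨rfl, hw⟩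
  rw [himg, Finset.card_image_of_injective _ (fun a b hab => by simpa using hab)]

lemma support_monomial_sub (A B : Fin m × Fin k →₀ ℕ) (hAB : A ≠ B) :
    (monomial A 1 - monomial B 1 : MvPolynomial (Fin m × Fin k) K).support = {A, B} := by
  ext x
  rw [MvPolynomial.mem_support_iff, MvPolynomial.coeff_sub, coeff_monomial, coeff_monomial]
  rcases eq_or_ne A x with rfl | hA
  · simp [if_neg (by exact fun hh => hAB hh.symm : B ≠ A)]
  · rcases eq_or_ne B x with rfl | hB
    · simp [if_neg hA]
    · rw [if_neg hA, if_neg hB, sub_zero]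
      constructor
      · intro hh; exact absurd rfl hh
      · intro hmem
        rcases Finset.mem_insert.mp hmem with rfl | hmem2
        · exact absurd rfl hA
        · exact absurd (Finset.mem_singleton.mp hmem2).symm hB

lemma isLeading_monomial_sub (A B : Fin m × Fin k →₀ ℕ) (hd : deg A < deg B) :
    IsLeadingMonomial (monomial A 1 - monomial B 1 : MvPolynomial (Fin m × Fin k) K) B := by
  have hAB : A ≠ B := fun hh => by rw [hh] at hd; exact lt_irrefl _ hd
  rw [IsLeadingMonomial, support_monomial_sub A B hAB]
  constructor
  · simp
  · intro ν hν hνB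
    have : ν = A := by
      rcases Finset.mem_insert.mp hν with rfl | hh
      · rfl
      · exact absurd (Finset.mem_singleton.mp hh) hνB
    subst this
    exact Or.inl hd

lemma isLeading_monomial_sub' (A B : Fin m × Fin k →₀ ℕ) (hd : deg B < deg A) :
    IsLeadingMonomial (monomial A 1 - monomial B 1 : MvPolynomial (Fin m × Fin k) K) A := by
  have hAB : A ≠ B := fun hh => by rw [hh] at hd; exact lt_irrefl _ hd
  rw [IsLeadingMonomial, support_monomial_sub A B hAB]
  constructor
  · simp
  · intro ν hν hνA
    have : ν = B := by
      rcases Finset.mem_insert.mp hν with rfl | hh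
      · exact absurd rfl hνA
      · exact Finset.mem_singleton.mp hh
    subst this
    exact Or.inl hd

/-- the character attached to an exponent vector -/
noncomputable def psi (a : Fin m × Fin k →₀ ℕ) : (Fin m × Fin k → Kˣ) →* K where
  toFun x := ∏ j : Fin m × Fin k, ((x j : K) * (x (j.1, finRotate k j.2) : K)) ^ (a j)
  map_one' := by simp
  map_mul' x y := by
    rw [← Finset.prod_mul_distrib]
    refine Finset.prod_congr rfl fun j _ => ?_
    rw [Pi.mul_apply, Pi.mul_apply, Units.val_mul, Units.val_mul, ← mul_pow,
      mul_mul_mul_comm]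

lemma eval_param (x : Fin m × Fin k → Kˣ) (f : MvPolynomial (Fin m × Fin k) K) :
    eval (fun p => ((x p : K) * (x (p.1, finRotate k p.2) : K))) f
      = ∑ a ∈ f.support, coeff a f * psi a x := by
  rw [eval_eq']
  rfl

lemma param_mem (x : Fin m × Fin k → Kˣ) :
    (fun p => ((x p : K) * (x (p.1, finRotate k p.2) : K))) ∈ cyclesToricSet K k m :=
  ⟨fun p => (x p : K), fun p => Units.ne_zero _, fun _ => rfl⟩

lemma finRotate_ne (hk : 2 ≤ k) (a : Fin k) : finRotate k a ≠ a := by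
  match k, hk with
  | (n+2), _ =>
    rw [finRotate_succ_apply]
    intro hh
    have h1 : (1 : Fin (n+2)) = 0 := by
      have := add_eq_left.mp hh
      exact this
    have := congrArg Fin.val h1
    simp [Fin.val_one] at this

lemma psi_test (a : Fin m × Fin k →₀ ℕ) (hk : 2 ≤ k) (i : Fin m) (p : Fin k) (u : Kˣ) :
    psi a (fun p' => if p' = (i, p) then u else 1)
      = (u : K) ^ (a (i, (finRotate k).symm p) + a (i, p)) := by
  have hk0 : 0 < k := by omega
  set p₀ : Fin k := (finRotate k).symm p with hp₀
  have hrot : finRotate k p₀ = p := Equiv.apply_symm_apply _ _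
  have hp₀ne : p₀ ≠ p := by
    intro hh
    exact finRotate_ne hk p₀ (by rw [hh] at hrot ⊢; exact hrot)
  have hpair : ((i, p₀) : Fin m × Fin k) ≠ (i, p) := by
    simp [hp₀ne]
  rw [psi]
  dsimp only [MonoidHom.coe_mk, OneHom.coe_mk]
  rw [← Finset.prod_subset (Finset.subset_univ ({(i, p₀), (i, p)} : Finset (Fin m × Fin k)))]
  · rw [Finset.prod_pair hpair]
    rw [if_neg hpair, if_pos rfl, if_pos (by rw [hrot] : ((i,p₀).1, finRotate k (i,p₀).2) = (i,p))]
    rw [if_neg (fun hh => finRotate_ne hk p (congrArg Prod.snd hh) : ((i,p).1, finRotate k (i,p).2) ≠ (i,p))]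
    push_cast
    rw [one_mul, mul_one, pow_add]
  · intro j _ hj
    have h1 : j ≠ (i, p) := by
      intro hh; exact hj (by rw [hh]; simp)
    have h2 : (j.1, finRotate k j.2) ≠ ((i, p) : Fin m × Fin k) := by
      intro hh
      apply hj
      have hj1 : j.1 = i := congrArg Prod.fst hh
      have hj2 : finRotate k j.2 = p := congrArg Prod.snd hh
      have : j.2 = p₀ := by rw [hp₀, ← hj2]; exact (Equiv.symm_apply_apply _ _).symm
      exact Finset.mem_insert.mpr (Or.inl (by rw [← hj1, ← this]))
    rw [if_neg h1, if_neg h2]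
    simp

lemma exists_partner (f : MvPolynomial (Fin m × Fin k) K)
    (hzero : ∑ a ∈ f.support, coeff a f •
      ((psi a : (Fin m × Fin k → Kˣ) →* K) : (Fin m × Fin k → Kˣ) → K) = 0)
    (μ : Fin m × Fin k →₀ ℕ) (hμ : μ ∈ f.support) :
    ∃ ν ∈ f.support, ν ≠ μ ∧ (psi ν : (Fin m × Fin k → Kˣ) →* K) = psi μ := by
  classical
  set T := f.support.image (fun a => (psi a : (Fin m × Fin k → Kˣ) →* K)) with hT
  have hfib : ∑ χ ∈ T, (∑ a ∈ f.support.filter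
        (fun a => (psi a : (Fin m × Fin k → Kˣ) →* K) = χ), coeff a f) •
      ((χ : (Fin m × Fin k → Kˣ) →* K) : (Fin m × Fin k → Kˣ) → K) = 0 := by
    have hsplit := Finset.sum_fiberwise_of_maps_to (t := T)
      (fun a (ha : a ∈ f.support) =>
        Finset.mem_image_of_mem (fun a => (psi a : (Fin m × Fin k → Kˣ) →* K)) ha)
      (fun a => coeff a f • ((psi a : (Fin m × Fin k → Kˣ) →* K) : (Fin m × Fin k → Kˣ) → K))
    rw [← hzero, ← hsplit]
    refine Finset.sum_congr rfl fun χ _ => ?_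
    rw [Finset.sum_smul]
    refine Finset.sum_congr rfl fun a ha => ?_
    rw [← (Finset.mem_filter.mp ha).2]
  have hli := linearIndependent_iff'.mp
    (linearIndependent_monoidHom (Fin m × Fin k → Kˣ) K) T _ hfib
  have hμT : (psi μ : (Fin m × Fin k → Kˣ) →* K) ∈ T := Finset.mem_image_of_mem _ hμ
  have hsum0 := hli (psi μ) hμT
  by_contra hcon
  push_neg at hcon
  have hfilter : f.support.filter
      (fun a => (psi a : (Fin m × Fin k → Kˣ) →* K) = psi μ) = {μ} := by
    ext a
    simp only [Finset.mem_filter, Finset.mem_singleton]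
    constructor
    · rintro ⟨ha, hpa⟩
      by_contra hne
      exact (hcon a ha hne) hpa
    · rintro rfl
      exact ⟨hμ, rfl⟩
  rw [hfilter, Finset.sum_singleton] at hsum0
  exact (MvPolynomial.mem_support_iff.mp hμ) hsum0

lemma two_mul_eq_zero {n hlf : ℕ} (hn : n = 2 * hlf) (hpos : 0 < hlf) (x : ZMod n)
    (hx : 2 * x = 0) : x = 0 ∨ x = (hlf : ZMod n) := by
  subst hn
  haveI : NeZero (2 * hlf) := ⟨by omega⟩
  have hval : x.val < 2 * hlf := x.val_lt
  have hxcast : ((x.val : ℕ) : ZMod (2 * hlf)) = x := by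
    rw [ZMod.natCast_val, ZMod.cast_id]
  have hcast : ((2 * x.val : ℕ) : ZMod (2 * hlf)) = 0 := by
    push_cast
    rw [hxcast, hx]
  have hdvd : 2 * hlf ∣ 2 * x.val := (ZMod.natCast_eq_zero_iff _ _).mp hcast
  have hdvd2 : hlf ∣ x.val := by
    obtain ⟨t, ht⟩ := hdvd
    refine ⟨t, Nat.eq_of_mul_eq_mul_left (by norm_num : 0 < 2) ?_⟩
    rw [ht]; ring
  obtain ⟨t, ht⟩ := hdvd2
  have ht1 : t = 0 ∨ t = 1 := by
    rcases Nat.lt_or_ge t 2 with hlt | hge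
    · omega
    · exfalso; nlinarith
  rcases ht1 with rfl | rfl
  · left; rw [← hxcast, ht]; simp
  · right; rw [← hxcast, ht]; simp

open Fin.NatCast in
lemma cycle_dichotomy [Fintype K] {q hlf : ℕ}
    (hq : Fintype.card K = q) (h2 : q - 1 = 2 * hlf) (hpos : 0 < hlf)
    (kodd : k % 2 = 1) (hk2 : 2 ≤ k)
    (μ ν : Fin m × Fin k →₀ ℕ)
    (hψ : (psi ν : (Fin m × Fin k → Kˣ) →* K) = psi μ) (i : Fin m) :
    (∀ a : Fin k, (μ (i,a) : ZMod (q-1)) = (ν (i,a) : ZMod (q-1))) ∨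
    (∀ a : Fin k, (μ (i,a) : ZMod (q-1)) = (ν (i,a) : ZMod (q-1)) + (hlf : ZMod (q-1))) := by
  classical
  obtain ⟨g, hg⟩ := IsCyclic.exists_generator (α := Kˣ)
  have horder : orderOf g = q - 1 := by
    rw [orderOf_eq_card_of_forall_mem_zpowers hg, Nat.card_eq_fintype_card,
      Fintype.card_units, hq]
  have hrel : ∀ p : Fin k,
      (ν (i, (finRotate k).symm p) + ν (i, p))
        ≡ (μ (i, (finRotate k).symm p) + μ (i, p)) [MOD q - 1] := by
    intro p
    have happ := congrArg (fun χ : (Fin m × Fin k → Kˣ) →* K =>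
      χ (fun p' => if p' = (i, p) then g else 1)) hψ
    rw [psi_test ν hk2 i p g, psi_test μ hk2 i p g] at happ
    have hunits : g ^ (ν (i, (finRotate k).symm p) + ν (i, p))
        = g ^ (μ (i, (finRotate k).symm p) + μ (i, p)) := by
      apply Units.ext
      rw [Units.val_pow_eq_pow_val, Units.val_pow_eq_pow_val]
      exact happ
    rw [← horder]
    exact pow_eq_pow_iff_modEq.mp hunits
  set D : Fin k → ZMod (q - 1) :=
    fun a => (μ (i, a) : ZMod (q - 1)) - (ν (i, a) : ZMod (q - 1)) with hD
  obtain ⟨n, rfl⟩ : ∃ n, k = n + 1 := ⟨k - 1, by omega⟩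
  have hDrel : ∀ a : Fin (n + 1), D a + D (a + 1) = 0 := by
    intro a
    have := hrel (finRotate (n + 1) a)
    rw [Equiv.symm_apply_apply] at this
    have hcast := (ZMod.natCast_eq_natCast_iff _ _ _).mpr this
    push_cast at hcast
    rw [finRotate_succ_apply] at hcast
    simp only [hD]
    linear_combination -hcast
  have hiter : ∀ (t : ℕ) (a : Fin (n + 1)), D (a + (t : Fin (n + 1))) = (-1) ^ t * D a := by
    intro t
    induction t with
    | zero => intro a; simp
    | succ t ih =>
      intro a
      have hcast : ((t + 1 : ℕ) : Fin (n + 1)) = (t : Fin (n + 1)) + 1 := by push_cast; ring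
      have hstep := hDrel (a + (t : Fin (n + 1)))
      have : D (a + (t : Fin (n+1)) + 1) = -D (a + (t : Fin (n+1))) := by linear_combination hstep
      rw [hcast, ← add_assoc, this, ih a, pow_succ]
      ring
  have h2D : ∀ a : Fin (n + 1), 2 * D a = 0 := by
    intro a
    have := hiter (n + 1) a
    rw [Fin.natCast_self, add_zero, Odd.neg_one_pow (Nat.odd_iff.mpr kodd)] at this
    linear_combination this
  have hconst : ∀ a : Fin (n + 1), D a = D 0 := by
    intro a
    have := hiter a.val 0
    rw [zero_add, Fin.cast_val_eq_self] at this
    rcases Nat.even_or_odd a.val with he | ho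
    · rw [he.neg_one_pow, one_mul] at this; exact this
    · rw [ho.neg_one_pow, neg_one_mul] at this
      rw [this]
      linear_combination -(h2D 0)
  rcases two_mul_eq_zero h2 hpos (D 0) (h2D 0) with hc | hc
  · left
    intro a
    have := (hconst a).trans hc
    simp only [hD] at this
    linear_combination this
  · right
    intro a
    have := (hconst a).trans hc
    simp only [hD] at this
    linear_combination this

end GB

open GB

/-- The set `G = {t_i^{q−1}−1 : 1 ≤ i ≤ km} ∪ (A₁ ∪ ⋯ ∪ A_m)` is a
Gröbner basis of `I(X*_𝒢)` with respect to the graded lexicographic monomial order: `G` is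
contained in `I(X*_𝒢)` and the leading monomial of every nonzero `f ∈ I(X*_𝒢)` is divisible
by the leading monomial of some element of `G`. -/
theorem groebner_basis_cycles (q k m γ : ℕ) (hγ : 1 ≤ γ) (hk : k = 2 * γ + 1) (hm : 1 ≤ m)
    (K : Type) [Field K] [Fintype K] (hq : Fintype.card K = q) (hq2 : 2 ∣ q - 1) :
    ({p : MvPolynomial (Fin m × Fin k) K | ∃ j : Fin m × Fin k, p = X j ^ (q - 1) - 1} ∪
        ⋃ i : Fin m, cycleBinomials K q k m γ i) ⊆
      (MvPolynomial.vanishingIdeal K (cyclesToricSet K k m) :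
        Set (MvPolynomial (Fin m × Fin k) K)) ∧
    ∀ f ∈ MvPolynomial.vanishingIdeal K (cyclesToricSet K k m), f ≠ 0 →
      ∀ μ : Fin m × Fin k →₀ ℕ, IsLeadingMonomial f μ →
        ∃ g ∈ ({p : MvPolynomial (Fin m × Fin k) K |
                  ∃ j : Fin m × Fin k, p = X j ^ (q - 1) - 1} ∪
                ⋃ i : Fin m, cycleBinomials K q k m γ i),
          ∃ ν : Fin m × Fin k →₀ ℕ, IsLeadingMonomial g ν ∧ ν ≤ μ := by
  classical
  have hq1 : 2 ≤ q := by rw [← hq]; exact Fintype.one_lt_card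
  obtain ⟨hlf, hhlf⟩ := hq2
  have hhval : (q - 1) / 2 = hlf := by omega
  have hlfpos : 0 < hlf := by omega
  have hk2 : 2 ≤ k := by omega
  have kodd : k % 2 = 1 := by omega
  constructor
  · intro g hg
    rcases hg with hg | hg
    · obtain ⟨j, rfl⟩ := hg
      rw [SetLike.mem_coe, mem_vanishingIdeal_iff]
      rintro y ⟨x, hx, hy⟩
      have hyj : y j ≠ 0 := by rw [hy j]; exact mul_ne_zero (hx _) (hx _)
      simp only [map_sub, map_pow, eval_X, aeval_X, map_one]
      rw [← hq, FiniteField.pow_card_sub_one_eq_one _ hyj, sub_self]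
    · rw [Set.mem_iUnion] at hg
      obtain ⟨i, s, hscard, rfl⟩ := hg
      rw [SetLike.mem_coe, mem_vanishingIdeal_iff]
      rintro y ⟨x, hx, hy⟩
      have hy0 : ∀ p, y p ≠ 0 := fun p => by rw [hy p]; exact mul_ne_zero (hx _) (hx _)
      simp only [map_sub, map_prod, map_pow, eval_X, aeval_X]
      rw [Finset.prod_pow, Finset.prod_pow, hhval]
      set P := ∏ α ∈ s, y (i, α) with hP
      set Q := ∏ w ∈ sᶜ, y (i, w) with hQ
      have hP0 : P ≠ 0 := Finset.prod_ne_zero_iff.mpr fun α _ => hy0 _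
      have hc0 : (∏ a : Fin k, x (i, a)) ≠ 0 := Finset.prod_ne_zero_iff.mpr fun a _ => hx _
      have hPQ : P * Q = (∏ a : Fin k, x (i, a)) ^ 2 := by
        rw [hP, hQ, Finset.prod_mul_prod_compl]
        calc ∏ a : Fin k, y (i, a)
            = ∏ a : Fin k, (x (i, a) * x (i, finRotate k a)) :=
              Finset.prod_congr rfl fun a _ => hy _
          _ = (∏ a : Fin k, x (i, a)) * ∏ a : Fin k, x (i, finRotate k a) :=
              Finset.prod_mul_distrib
          _ = (∏ a : Fin k, x (i, a)) ^ 2 := by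
              rw [Equiv.prod_comp (finRotate k) (fun a => x (i, a))]; ring
      have h1 : P ^ hlf * Q ^ hlf = 1 := by
        rw [← mul_pow, hPQ, ← pow_mul,
          show 2 * hlf = Fintype.card K - 1 by omega]
        exact FiniteField.pow_card_sub_one_eq_one _ hc0
      have h2 : P ^ hlf * P ^ hlf = 1 := by
        rw [← pow_add, show hlf + hlf = Fintype.card K - 1 by omega]
        exact FiniteField.pow_card_sub_one_eq_one _ hP0
      rw [sub_eq_zero]
      exact mul_left_cancel₀ (pow_ne_zero _ hP0) (h2.trans h1.symm)
  · intro f hf hf0 μ hμlead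
    obtain ⟨hμsup, hμmax⟩ := hμlead
    have hdegle : ∀ ν ∈ f.support, ν ≠ μ → deg ν ≤ deg μ := by
      intro ν hν hνμ
      rcases hμmax ν hν hνμ with hlt | ⟨heq, _⟩
      · exact le_of_lt hlt
      · exact le_of_eq heq
    by_cases hbig : ∃ j : Fin m × Fin k, q - 1 ≤ μ j
    · obtain ⟨j, hj⟩ := hbig
      refine ⟨X j ^ (q - 1) - 1, Set.mem_union_left _ ⟨j, rfl⟩,
        Finsupp.single j (q - 1), ?_, ?_⟩
      · have hrw : (X j ^ (q - 1) - 1 : MvPolynomial (Fin m × Fin k) K)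
            = monomial (Finsupp.single j (q - 1)) 1 - monomial 0 1 := by
          rw [X_pow_eq_monomial, monomial_zero', C_1]
        rw [hrw]
        exact isLeading_monomial_sub' _ _ (by rw [deg_zero, deg_single]; omega)
      · rw [Finsupp.le_def]
        intro p
        rcases eq_or_ne p j with rfl | hne
        · rw [Finsupp.single_apply, if_pos rfl]; exact hj
        · rw [Finsupp.single_apply, if_neg (fun hh => hne hh.symm)]
          exact Nat.zero_le _
    · push_neg at hbig
      by_cases hgood : ∃ i : Fin m,
          γ + 1 ≤ (Finset.univ.filter fun a : Fin k => hlf ≤ μ (i, a)).card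
      · obtain ⟨i, hi⟩ := hgood
        obtain ⟨c, hcsub, hccard⟩ := Finset.exists_subset_card_eq hi
        have hscard : (cᶜ : Finset (Fin k)).card = γ := by
          rw [Finset.card_compl, hccard, Fintype.card_fin]; omega
        set A := ∑ α ∈ (cᶜ : Finset (Fin k)),
          Finsupp.single ((i, α) : Fin m × Fin k) ((q - 1) / 2) with hA
        set B := ∑ w ∈ c, Finsupp.single ((i, w) : Fin m × Fin k) ((q - 1) / 2) with hB
        have hbinom : (∏ α ∈ (cᶜ : Finset (Fin k)),
              (X ((i, α) : Fin m × Fin k) : MvPolynomial (Fin m × Fin k) K) ^ ((q - 1) / 2))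
            - ∏ w ∈ ((cᶜ : Finset (Fin k))ᶜ : Finset (Fin k)),
              (X ((i, w) : Fin m × Fin k) : MvPolynomial (Fin m × Fin k) K) ^ ((q - 1) / 2)
            = monomial A 1 - monomial B 1 := by
          rw [compl_compl]
          congr 1
          · rw [hA, monomial_sum_one]
            exact Finset.prod_congr rfl fun α _ => X_pow_eq_monomial
          · rw [hB, monomial_sum_one]
            exact Finset.prod_congr rfl fun w _ => X_pow_eq_monomial
        refine ⟨_, Set.mem_union_right _ (Set.mem_iUnion.mpr ⟨i, ⟨cᶜ, hscard, rfl⟩⟩),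
          B, ?_, ?_⟩
        · rw [hbinom]
          apply isLeading_monomial_sub
          rw [hA, hB, deg_sumsingle, deg_sumsingle, hscard, hccard, hhval]
          exact (Nat.mul_lt_mul_right hlfpos).mpr (Nat.lt_succ_self γ)
        · rw [Finsupp.le_def]
          intro p
          obtain ⟨p1, p2⟩ := p
          rw [hB, sumsingle_apply]
          split_ifs with hcond
          · obtain ⟨h1, h2⟩ := hcond
            have hge := (Finset.mem_filter.mp (hcsub h2)).2
            rw [hhval]
            subst h1
            exact hge
          · exact Nat.zero_le _
      · exfalso
        push_neg at hgood
        have hf' : ∀ x : Fin m × Fin k → Kˣ,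
            eval (fun p => ((x p : K) * (x (p.1, finRotate k p.2) : K))) f = 0 :=
          fun x => (mem_vanishingIdeal_iff.mp hf) _ (param_mem x)
        have hzero : ∑ a ∈ f.support, coeff a f •
            ((psi a : (Fin m × Fin k → Kˣ) →* K) : (Fin m × Fin k → Kˣ) → K) = 0 := by
          funext x
          rw [Finset.sum_apply]
          simp only [Pi.smul_apply, smul_eq_mul, Pi.zero_apply]
          rw [← eval_param x f]
          exact hf' x
        obtain ⟨ν, hνsup, hνμ, hψeq⟩ := exists_partner f hzero μ hμsup
        have hdich := fun i => cycle_dichotomy hq (by omega : q - 1 = 2 * hlf)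
          hlfpos kodd hk2 μ ν hψeq i
        have hhz : (hlf : ZMod (q - 1)) + (hlf : ZMod (q - 1)) = 0 := by
          rw [← Nat.cast_add, show hlf + hlf = q - 1 by omega, ZMod.natCast_self]
        have hmain : ∀ i : Fin m,
            ((∀ a, μ (i, a) ≤ ν (i, a)) ∧ (∑ a, μ (i, a)) ≤ ∑ a, ν (i, a)) ∨
            (∑ a, μ (i, a)) + hlf ≤ ∑ a, ν (i, a) := by
          intro i
          rcases hdich i with hcase | hcase
          · left
            have hpt : ∀ a, μ (i, a) ≤ ν (i, a) := by
              intro a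
              have hmod : μ (i, a) ≡ ν (i, a) [MOD q - 1] :=
                (ZMod.natCast_eq_natCast_iff _ _ _).mp (hcase a)
              have hb := hbig (i, a)
              calc μ (i, a) = ν (i, a) % (q - 1) := by
                    rw [← Nat.mod_eq_of_lt hb]; exact hmod
                _ ≤ ν (i, a) := Nat.mod_le _ _
            exact ⟨hpt, Finset.sum_le_sum fun a _ => hpt a⟩
          · right
            have hlow : ∀ a, μ (i, a) < hlf → μ (i, a) + hlf ≤ ν (i, a) := by
              intro a ha
              have hz : ((μ (i, a) + hlf : ℕ) : ZMod (q - 1))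
                  = ((ν (i, a) : ℕ) : ZMod (q - 1)) := by
                push_cast
                rw [hcase a]
                linear_combination hhz
              have hmod : (μ (i, a) + hlf) ≡ ν (i, a) [MOD q - 1] :=
                (ZMod.natCast_eq_natCast_iff _ _ _).mp hz
              have hlt : μ (i, a) + hlf < q - 1 := by omega
              calc μ (i, a) + hlf = ν (i, a) % (q - 1) := by
                    rw [← Nat.mod_eq_of_lt hlt]; exact hmod
                _ ≤ ν (i, a) := Nat.mod_le _ _
            have hhigh : ∀ a : Fin k, μ (i, a) ≤ ν (i, a) + hlf := by
              intro a
              have hz : ((μ (i, a) : ℕ) : ZMod (q - 1))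
                  = ((ν (i, a) + hlf : ℕ) : ZMod (q - 1)) := by
                push_cast
                rw [hcase a]
              have hmod : μ (i, a) ≡ (ν (i, a) + hlf) [MOD q - 1] :=
                (ZMod.natCast_eq_natCast_iff _ _ _).mp hz
              have hb := hbig (i, a)
              calc μ (i, a) = (ν (i, a) + hlf) % (q - 1) := by
                    rw [← Nat.mod_eq_of_lt hb]; exact hmod
                _ ≤ ν (i, a) + hlf := Nat.mod_le _ _
            set L := Finset.univ.filter (fun a : Fin k => μ (i, a) < hlf) with hL
            have hLcompl : (Lᶜ : Finset (Fin k))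
                = Finset.univ.filter (fun a : Fin k => hlf ≤ μ (i, a)) := by
              rw [hL, Finset.compl_filter]
              exact Finset.filter_congr fun a _ => by simp [not_lt]
            have hcards0 : L.card + (Lᶜ : Finset (Fin k)).card = k := by
              rw [Finset.card_add_card_compl, Fintype.card_fin]
            have hLccard : (Lᶜ : Finset (Fin k)).card ≤ γ := by
              rw [hLcompl]
              have := hgood i
              omega
            have hcardL : γ + 1 ≤ L.card := by omega
            have hsplitμ : ∑ a, μ (i, a)
                = ∑ a ∈ L, μ (i, a) + ∑ a ∈ (Lᶜ : Finset (Fin k)), μ (i, a) :=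
              (Finset.sum_add_sum_compl L _).symm
            have hsplitν : ∑ a, ν (i, a)
                = ∑ a ∈ L, ν (i, a) + ∑ a ∈ (Lᶜ : Finset (Fin k)), ν (i, a) :=
              (Finset.sum_add_sum_compl L _).symm
            have h1 : ∑ a ∈ L, μ (i, a) + L.card * hlf ≤ ∑ a ∈ L, ν (i, a) := by
              calc ∑ a ∈ L, μ (i, a) + L.card * hlf
                  = ∑ a ∈ L, (μ (i, a) + hlf) := by
                    rw [Finset.sum_add_distrib, Finset.sum_const, smul_eq_mul]
                _ ≤ ∑ a ∈ L, ν (i, a) :=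
                    Finset.sum_le_sum fun a ha => hlow a (Finset.mem_filter.mp ha).2
            have h2 : ∑ a ∈ (Lᶜ : Finset (Fin k)), μ (i, a)
                ≤ ∑ a ∈ (Lᶜ : Finset (Fin k)), ν (i, a) + (Lᶜ : Finset (Fin k)).card * hlf := by
              calc ∑ a ∈ (Lᶜ : Finset (Fin k)), μ (i, a)
                  ≤ ∑ a ∈ (Lᶜ : Finset (Fin k)), (ν (i, a) + hlf) :=
                    Finset.sum_le_sum fun a _ => hhigh a
                _ = _ := by
                    rw [Finset.sum_add_distrib, Finset.sum_const, smul_eq_mul]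
            have hcards : (Lᶜ : Finset (Fin k)).card * hlf + hlf ≤ L.card * hlf := by
              calc (Lᶜ : Finset (Fin k)).card * hlf + hlf
                  = ((Lᶜ : Finset (Fin k)).card + 1) * hlf := by ring
                _ ≤ L.card * hlf := Nat.mul_le_mul_right hlf (by omega)
            omega
        have hallle : ∀ i : Fin m, (∑ a, μ (i, a)) ≤ ∑ a, ν (i, a) := by
          intro i
          rcases hmain i with ⟨_, hle⟩ | hge
          · exact hle
          · omega
        have hdegνμ : deg ν ≤ deg μ := hdegle ν hνsup hνμ
        have hdegsumμ : deg μ = ∑ i : Fin m, ∑ a : Fin k, μ (i, a) := by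
          rw [deg_eq_sum, Fintype.sum_prod_type]
        have hdegsumν : deg ν = ∑ i : Fin m, ∑ a : Fin k, ν (i, a) := by
          rw [deg_eq_sum, Fintype.sum_prod_type]
        have hcase1 : ∀ i : Fin m, ∀ a : Fin k, μ (i, a) ≤ ν (i, a) := by
          intro i
          rcases hmain i with ⟨hpt, _⟩ | hge
          · exact hpt
          · exfalso
            have hstrict : (∑ i : Fin m, ∑ a : Fin k, μ (i, a))
                < ∑ i : Fin m, ∑ a : Fin k, ν (i, a) :=
              Finset.sum_lt_sum (fun i _ => hallle i)
                ⟨i, Finset.mem_univ i, by omega⟩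
            omega
        have hpt : ∀ j : Fin m × Fin k, μ j ≤ ν j := fun j => hcase1 j.1 j.2
        obtain ⟨j, hj⟩ : ∃ j, μ j ≠ ν j := by
          by_contra hall
          push_neg at hall
          exact hνμ (Finsupp.ext fun j => (hall j).symm)
        have hstrict : deg μ < deg ν := by
          rw [deg_eq_sum, deg_eq_sum]
          exact Finset.sum_lt_sum (fun j _ => hpt j)
            ⟨j, Finset.mem_univ j, lt_of_le_of_ne (hpt j) hj⟩
        omega
end

section
/- Let 𝒢 be a graph with m connected components, each a cycle of odd length k = 2γ+1. The regularity index of I(X*_𝒢) equals m(k+γ)(q−1)/2 − km; that is, the least integer p ≥ 0 such that the affine Hilbert function satisfies H_{X*_𝒢}(d) = |X*_𝒢| for all d ≥ p is p = m(k+γ)(q−1)/2 − km. -/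
open MvPolynomial

/-- The affine Hilbert function of a set `X ⊆ K^σ`:
`H_X(d) = dim_K S_{≤d} / I(X)_{≤d}`, where `S_{≤d}` is the space of polynomials of total
degree at most `d` and `I(X)_{≤d} = I(X) ∩ S_{≤d}`. -/
noncomputable def affineHilbertFunction (K : Type) [Field K] {σ : Type} (X : Set (σ → K))
    (d : ℕ) : ℕ :=
  Module.finrank K
    (↥(MvPolynomial.restrictTotalDegree σ K d) ⧸
      Submodule.comap (MvPolynomial.restrictTotalDegree σ K d).subtype
        (Submodule.restrictScalars K (MvPolynomial.vanishingIdeal K X)))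

set_option linter.unusedSectionVars false
set_option maxHeartbeats 1000000

namespace CyclesAux

open Fin.NatCast Fin.CommRing

/-- even/odd split of a product over `range (2*γ)` -/
lemma prod_range_even_odd {M : Type*} [CommMonoid M] (g : ℕ → M) (γ : ℕ) :
    ∏ t ∈ Finset.range (2*γ), g t
      = (∏ r ∈ Finset.range γ, g (2*r)) * ∏ r ∈ Finset.range γ, g (2*r+1) := by
  induction γ with
  | zero => simp
  | succ γ ih =>
      have h2 : 2 * (γ + 1) = (2 * γ + 1) + 1 := by ring
      rw [h2, Finset.prod_range_succ, Finset.prod_range_succ, Finset.prod_range_succ,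
        Finset.prod_range_succ, ih, mul_mul_mul_comm, mul_assoc]

lemma cycle_prod {M : Type*} [CommMonoid M] {γ : ℕ} (f : Fin (2*γ+1) → M) (i : Fin (2*γ+1)) :
    f i * ((∏ r ∈ Finset.range γ, f (i + ((2*r+1 : ℕ) : Fin (2*γ+1))))
        * ∏ r ∈ Finset.range γ, f ((i+1) + ((2*r+1 : ℕ) : Fin (2*γ+1))))
      = ∏ i', f i' := by
  have hsecond : ∀ r : ℕ, (i+1) + ((2*r+1 : ℕ) : Fin (2*γ+1)) = i + ((2*r+2 : ℕ) : Fin (2*γ+1)) := by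
    intro r
    have : ((2*r+2 : ℕ) : Fin (2*γ+1)) = ((2*r+1 : ℕ) : Fin (2*γ+1)) + 1 := by
      push_cast; ring
    rw [this]; ring
  have hpair : (∏ r ∈ Finset.range γ, f (i + ((2*r+1 : ℕ) : Fin (2*γ+1))))
        * ∏ r ∈ Finset.range γ, f ((i+1) + ((2*r+1 : ℕ) : Fin (2*γ+1)))
      = ∏ t ∈ Finset.range (2*γ), f (i + ((t+1 : ℕ) : Fin (2*γ+1))) := by
    rw [prod_range_even_odd (fun t => f (i + ((t+1 : ℕ) : Fin (2*γ+1)))) γ]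
    congr 1
    exact Finset.prod_congr rfl fun r _ => by rw [hsecond r]
  rw [hpair]
  have h1 : f i * ∏ t ∈ Finset.range (2*γ), f (i + ((t+1 : ℕ) : Fin (2*γ+1)))
      = ∏ t ∈ Finset.range (2*γ+1), f (i + ((t : ℕ) : Fin (2*γ+1))) := by
    rw [Finset.prod_range_succ']
    simp [mul_comm]
  rw [h1]
  have h2 : ∏ t ∈ Finset.range (2*γ+1), f (i + ((t : ℕ) : Fin (2*γ+1)))
      = ∏ i' : Fin (2*γ+1), f (i + i') := by
    rw [← Fin.prod_univ_eq_prod_range (fun t => f (i + ((t : ℕ) : Fin (2*γ+1)))) (2*γ+1)]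
    exact Finset.prod_congr rfl fun i' _ => by simp
  rw [h2]
  exact Equiv.prod_comp (Equiv.addLeft i) f

section desc
variable (K : Type) [Field K]

/-- the description of the toric set as a submonoid -/
def descM (k m : ℕ) : Submonoid (Fin m × Fin k → K) where
  carrier := {y | (∀ p, y p ≠ 0) ∧ ∀ j : Fin m, IsSquare (∏ i : Fin k, y (j, i))}
  one_mem' := ⟨fun _ => one_ne_zero, fun j => by simp⟩
  mul_mem' := fun {y z} hy hz => ⟨fun p => mul_ne_zero (hy.1 p) (hz.1 p), fun j => by
    have := (hy.2 j).mul (hz.2 j)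
    simpa [Finset.prod_mul_distrib] using this⟩

lemma mem_descM {k m : ℕ} (y : Fin m × Fin k → K) :
    y ∈ descM K k m ↔ (∀ p, y p ≠ 0) ∧ ∀ j : Fin m, IsSquare (∏ i : Fin k, y (j, i)) :=
  Iff.rfl

lemma cyclesToricSet_eq (γ m : ℕ) :
    cyclesToricSet K (2*γ+1) m = (descM K (2*γ+1) m : Set (Fin m × Fin (2*γ+1) → K)) := by
  ext y
  constructor
  · rintro ⟨x, hx0, hx⟩
    refine ⟨fun p => by rw [hx p]; exact mul_ne_zero (hx0 p) (hx0 _), fun j => ?_⟩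
    refine ⟨∏ i : Fin (2*γ+1), x (j, i), ?_⟩
    calc ∏ i : Fin (2*γ+1), y (j, i)
        = ∏ i : Fin (2*γ+1), (x (j, i) * x (j, finRotate _ i)) :=
          Finset.prod_congr rfl fun i _ => hx (j, i)
      _ = (∏ i : Fin (2*γ+1), x (j, i)) * ∏ i : Fin (2*γ+1), x (j, finRotate _ i) :=
          Finset.prod_mul_distrib
      _ = _ := by rw [Equiv.prod_comp (finRotate (2*γ+1)) (fun i => x (j, i))]
  · rintro ⟨h0, hsq⟩
    choose s hs using hsq
    -- x (j, i) := s j * (∏_{r<γ} y (j, i + (2r+1)))⁻¹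
    refine ⟨fun p => s p.1 * (∏ r ∈ Finset.range γ, y (p.1, p.2 + ((2*r+1 : ℕ) : Fin (2*γ+1))))⁻¹,
      fun p => ?_, fun p => ?_⟩
    · have hprod : (∏ r ∈ Finset.range γ, y (p.1, p.2 + ((2*r+1 : ℕ) : Fin (2*γ+1)))) ≠ 0 :=
        Finset.prod_ne_zero_iff.2 fun r _ => h0 _
      have hs0 : s p.1 ≠ 0 := by
        intro h
        have := hs p.1
        rw [h, mul_zero] at this
        exact (Finset.prod_ne_zero_iff.2 fun i _ => h0 (p.1, i)) this
      exact mul_ne_zero hs0 (inv_ne_zero hprod)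
    · obtain ⟨j, i⟩ := p
      simp only [finRotate_succ_apply]
      have key := cycle_prod (fun i' => y (j, i')) i
      have hA : (∏ r ∈ Finset.range γ, y (j, i + ((2*r+1 : ℕ) : Fin (2*γ+1)))) ≠ 0 :=
        Finset.prod_ne_zero_iff.2 fun r _ => h0 _
      have hB : (∏ r ∈ Finset.range γ, y (j, (i+1) + ((2*r+1 : ℕ) : Fin (2*γ+1)))) ≠ 0 :=
        Finset.prod_ne_zero_iff.2 fun r _ => h0 _
      have hsj := hs j
      push_cast at key hA hB
      field_simp
      push_cast
      rw [eq_div_iff (mul_ne_zero hA hB), key, hsj, sq]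

end desc

section linalg
variable {K : Type} [Field K] {σ : Type}

/-- evaluation at all points of `X`, as a linear map -/
noncomputable def ev (X : Set (σ → K)) : MvPolynomial σ K →ₗ[K] (X → K) :=
  LinearMap.pi fun y => (MvPolynomial.aeval (y : σ → K)).toLinearMap

lemma ev_apply (X : Set (σ → K)) (p : MvPolynomial σ K) (y : X) :
    ev X p y = eval (y : σ → K) p := by
  simp only [ev, LinearMap.pi_apply, AlgHom.toLinearMap_apply]
  rw [← coe_aeval_eq_eval]
  rfl

lemma hilbert_eq_finrank_range (X : Set (σ → K)) (d : ℕ) :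
    affineHilbertFunction K X d
      = Module.finrank K
          (LinearMap.range ((ev X).comp (restrictTotalDegree σ K d).subtype)) := by
  have hker : Submodule.comap (restrictTotalDegree σ K d).subtype
      (Submodule.restrictScalars K (vanishingIdeal K X))
      = LinearMap.ker ((ev X).comp (restrictTotalDegree σ K d).subtype) := by
    ext x
    simp only [Submodule.mem_comap, Submodule.restrictScalars_mem, mem_vanishingIdeal_iff,
      LinearMap.mem_ker, LinearMap.comp_apply, Submodule.subtype_apply]
    constructor
    · intro h
      funext y
      rw [ev_apply]
      exact h y y.2
    · intro h z hz
      have := congrFun h ⟨z, hz⟩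
      rwa [ev_apply] at this
  rw [affineHilbertFunction, hker]
  exact (LinearMap.quotKerEquivRange _).finrank_eq

variable [Fintype σ]

/-- the monomial function on `X` -/
def psi (X : Set (σ → K)) (a : σ → ℕ) : X → K :=
  fun y => ∏ p, (y : σ → K) p ^ a p

lemma ev_monomial (X : Set (σ → K)) (u : σ →₀ ℕ) (c : K) :
    ev X (monomial u c) = c • psi X u := by
  funext y
  rw [ev_apply, eval_monomial]
  show _ = c * ∏ p, (y : σ → K) p ^ u p
  congr 1
  rw [Finsupp.prod_pow]

lemma range_ev_comp (X : Set (σ → K)) (d : ℕ) :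
    LinearMap.range ((ev X).comp (restrictTotalDegree σ K d).subtype)
      = Submodule.span K (psi X '' {a : σ → ℕ | ∑ p, a p ≤ d}) := by
  apply le_antisymm
  · rintro _ ⟨⟨q, hq⟩, rfl⟩
    rw [mem_restrictTotalDegree] at hq
    simp only [LinearMap.comp_apply, Submodule.subtype_apply]
    have hrep : ev X q = ∑ u ∈ q.support, coeff u q • psi X u := by
      conv_lhs => rw [q.as_sum]
      rw [map_sum]
      exact Finset.sum_congr rfl fun u _ => ev_monomial X u _
    rw [hrep]
    apply Submodule.sum_mem
    intro u hu
    apply Submodule.smul_mem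
    apply Submodule.subset_span
    refine ⟨u, ?_, rfl⟩
    have := le_totalDegree hu
    simp only [Set.mem_setOf_eq]
    calc ∑ p, (u : σ → ℕ) p = u.sum fun _ e => e := by
          rw [Finsupp.sum_fintype _ _ (fun _ => rfl)]
      _ ≤ q.totalDegree := this
      _ ≤ d := hq
  · rw [Submodule.span_le]
    rintro _ ⟨a, ha, rfl⟩
    have hmem : (monomial (Finsupp.equivFunOnFinite.symm a) (1 : K)) ∈
        restrictTotalDegree σ K d := by
      rw [mem_restrictTotalDegree]
      refine le_trans (totalDegree_monomial_le _ _) ?_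
      calc (Finsupp.equivFunOnFinite.symm a).sum (fun _ e => e) = ∑ p, a p := by
            rw [Finsupp.sum_fintype _ _ (fun _ => rfl)]
            simp
        _ ≤ d := ha
    refine ⟨⟨_, hmem⟩, ?_⟩
    simp only [LinearMap.comp_apply, Submodule.subtype_apply]
    rw [ev_monomial, one_smul]
    congr 1

variable [Fintype K]

lemma ev_surjective (X : Set (σ → K)) : Function.Surjective (ev X) := by
  classical
  haveI : Finite X := Subtype.finite
  haveI : Fintype X := Fintype.ofFinite _
  intro f
  refine ⟨∑ y : X, MvPolynomial.C (f y) *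
    ∏ p, (1 - (MvPolynomial.X p - MvPolynomial.C ((y : σ → K) p)) ^ (Fintype.card K - 1)), ?_⟩
  funext z
  rw [map_sum]
  rw [Finset.sum_apply]
  have hterm : ∀ y : X,
      (ev X (MvPolynomial.C (f y) *
        ∏ p, (1 - (MvPolynomial.X p - MvPolynomial.C ((y : σ → K) p)) ^ (Fintype.card K - 1)))) z
      = f y * ∏ p, (1 - ((z : σ → K) p - (y : σ → K) p) ^ (Fintype.card K - 1)) := by
    intro y
    rw [ev_apply]
    simp [eval_prod]
  rw [Finset.sum_congr rfl fun y _ => hterm y]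
  rw [Finset.sum_eq_single z]
  · have : ∀ p : σ, (1 - ((z : σ → K) p - (z : σ → K) p) ^ (Fintype.card K - 1)) = 1 := by
      intro p
      rw [sub_self, zero_pow, sub_zero]
      have : 1 < Fintype.card K := Fintype.one_lt_card
      omega
    rw [Finset.prod_congr rfl fun p _ => this p, Finset.prod_const_one, mul_one]
  · intro y _ hyz
    have : ∃ p, (z : σ → K) p ≠ (y : σ → K) p := by
      by_contra h
      push_neg at h
      exact hyz (Subtype.ext (funext fun p => (h p).symm))
    obtain ⟨p, hp⟩ := this
    rw [Finset.prod_eq_zero (Finset.mem_univ p), mul_zero]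
    rw [FiniteField.pow_card_sub_one_eq_one _ (sub_ne_zero.2 hp), sub_self]
  · intro h
    exact absurd (Finset.mem_univ z) h

lemma ev_eq_sum (X : Set (σ → K)) (q : MvPolynomial σ K) :
    ev X q = ∑ u ∈ q.support, coeff u q • psi X u := by
  conv_lhs => rw [q.as_sum]
  rw [map_sum]
  refine Finset.sum_congr rfl fun u _ => ?_
  funext y
  rw [ev_apply, eval_monomial]
  show _ = coeff u q * ∏ p, (y : σ → K) p ^ u p
  congr 1
  rw [Finsupp.prod_pow]

lemma span_psi_univ (X : Set (σ → K)) :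
    Submodule.span K (Set.range (psi X)) = ⊤ := by
  rw [eq_top_iff]
  intro f _
  obtain ⟨q, rfl⟩ := ev_surjective X f
  rw [ev_eq_sum]
  exact Submodule.sum_mem _ fun u _ => Submodule.smul_mem _ _
    (Submodule.subset_span ⟨u, rfl⟩)

end linalg

lemma flip_eq {h2 v : ℕ} (h1 : 1 ≤ h2) (hv : v < 2*h2) :
    (v + h2) % (2*h2) = if v < h2 then v + h2 else v - h2 := by
  split_ifs with h
  · exact Nat.mod_eq_of_lt (by omega)
  · rw [Nat.mod_eq_sub_mod (by omega)]
    have hh : v + h2 - 2*h2 = v - h2 := by omega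
    rw [hh]
    exact Nat.mod_eq_of_lt (by omega)

section
variable {γ h2 : ℕ} (h1 : 1 ≤ h2) (r : Fin (2*γ+1) → ℕ) (hr : ∀ i, r i < 2*h2)

/-- (B1): coordinatewise sum bound -/
lemma block_sum_bound (h1 : 1 ≤ h2) (hr : ∀ i, r i < 2*h2) :
    (∑ i, r i) + (∑ i, (r i + h2) % (2*h2)) + 2*(2*γ+1) ≤ 3*h2*(2*γ+1) := by
  have key : ∀ i : Fin (2*γ+1), r i + (r i + h2) % (2*h2) + 2 ≤ 3*h2 := by
    intro i
    rw [flip_eq h1 (hr i)]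
    have := hr i
    split_ifs with h <;> omega
  calc (∑ i, r i) + (∑ i, (r i + h2) % (2*h2)) + 2*(2*γ+1)
      = ∑ i : Fin (2*γ+1), (r i + (r i + h2) % (2*h2) + 2) := by
        simp [Finset.sum_add_distrib, Finset.card_univ, mul_comm]
    _ ≤ ∑ _i : Fin (2*γ+1), 3*h2 := Finset.sum_le_sum fun i _ => key i
    _ = 3*h2*(2*γ+1) := by simp [Finset.card_univ, mul_comm]

/-- (B2): the two sums differ by a multiple of h2 with odd coefficient -/
lemma block_exists_e2 (h1 : 1 ≤ h2) (hr : ∀ i, r i < 2*h2) :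
    ∃ e2 : ℕ, (∑ i, (r i + h2) % (2*h2)) + 2*h2 * e2 = (∑ i, r i) + (2*γ+1) * h2 := by
  classical
  refine ⟨(Finset.univ.filter fun i : Fin (2*γ+1) => h2 ≤ r i).card, ?_⟩
  have key : ∀ i : Fin (2*γ+1),
      (r i + h2) % (2*h2) + 2*h2 * (if h2 ≤ r i then 1 else 0) = r i + h2 := by
    intro i
    rw [flip_eq h1 (hr i)]
    have := hr i
    split_ifs <;> omega
  have hsum := Finset.sum_congr rfl fun i (_ : i ∈ Finset.univ) => key i
  rw [Finset.sum_add_distrib] at hsum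
  rw [Finset.sum_add_distrib] at hsum
  rw [← Finset.mul_sum, Finset.sum_boole] at hsum
  simpa [Finset.card_univ, mul_comm, Nat.cast_id] using hsum

/-- (B3): the gap between the two sums is at least h2 -/
lemma block_gap (h1 : 1 ≤ h2) (hr : ∀ i, r i < 2*h2) :
    (∑ i, r i) + h2 ≤ (∑ i, (r i + h2) % (2*h2))
      ∨ (∑ i, (r i + h2) % (2*h2)) + h2 ≤ (∑ i, r i) := by
  obtain ⟨e2, he2⟩ := block_exists_e2 r h1 hr
  rcases le_or_gt e2 γ with h | h
  · left
    have : (2*e2+1) * h2 ≤ (2*γ+1) * h2 := Nat.mul_le_mul_right _ (by omega)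
    nlinarith
  · right
    have : (2*γ+2) * h2 ≤ 2*e2 * h2 := Nat.mul_le_mul_right _ (by omega)
    nlinarith

/-- combined: the min is at most `(k+γ)*h2 - k`, phrased additively -/
lemma block_min_le (h1 : 1 ≤ h2) (hr : ∀ i, r i < 2*h2) :
    min (∑ i, r i) (∑ i, (r i + h2) % (2*h2)) + (2*γ+1) ≤ ((2*γ+1)+γ)*h2 := by
  have hb1 := block_sum_bound r h1 hr
  have hgap := block_gap r h1 hr
  have hprod : 3*h2*(2*γ+1) = 2*(((2*γ+1)+γ)*h2) + h2 := by ring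
  rcases hgap with h | h
  · have hmin : min (∑ i, r i) (∑ i, (r i + h2) % (2*h2)) = ∑ i, r i :=
      min_eq_left (by omega)
    rw [hmin]; linarith
  · have hmin : min (∑ i, r i) (∑ i, (r i + h2) % (2*h2))
        = ∑ i, (r i + h2) % (2*h2) := min_eq_right (by omega)
    rw [hmin]; linarith

end

section fieldnum
variable {K : Type} [Field K] [Fintype K]

section
variable {h2 : ℕ} (hn2 : Fintype.card K - 1 = 2*h2) (h1 : 1 ≤ h2)

include hn2 in
lemma pow_n_eq_one {y : K} (hy : y ≠ 0) : y ^ (2*h2) = 1 := by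
  rw [← hn2]; exact FiniteField.pow_card_sub_one_eq_one y hy

include hn2 h1 in
lemma pow_mod_n {y : K} (hy : y ≠ 0) (a : ℕ) : y ^ a = y ^ (a % (2*h2)) := by
  conv_lhs => rw [← Nat.div_add_mod a (2*h2)]
  rw [pow_add, pow_mul, pow_n_eq_one hn2 hy, one_pow, one_mul]

include hn2 h1 in
/-- flipping a whole block by `h2` does not change the monomial function on `descM` -/
lemma block_flip_prod {γ m : ℕ} {y : Fin m × Fin (2*γ+1) → K}
    (hy : y ∈ descM K (2*γ+1) m) (j : Fin m) (r : Fin (2*γ+1) → ℕ) :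
    ∏ i, y (j, i) ^ ((r i + h2) % (2*h2)) = ∏ i, y (j, i) ^ r i := by
  obtain ⟨h0, hsq⟩ := hy
  obtain ⟨s, hs⟩ := hsq j
  have hs0 : s ≠ 0 := by
    intro h
    rw [h, mul_zero] at hs
    exact (Finset.prod_ne_zero_iff.2 fun i _ => h0 (j, i)) hs
  calc ∏ i, y (j, i) ^ ((r i + h2) % (2*h2))
      = ∏ i, y (j, i) ^ (r i + h2) :=
        Finset.prod_congr rfl fun i _ => (pow_mod_n hn2 h1 (h0 (j, i)) _).symm
    _ = (∏ i, y (j, i) ^ r i) * (∏ i, y (j, i)) ^ h2 := by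
        rw [← Finset.prod_pow]
        rw [← Finset.prod_mul_distrib]
        exact Finset.prod_congr rfl fun i _ => pow_add _ _ _
    _ = ∏ i, y (j, i) ^ r i := by
        have hss : (s * s) ^ h2 = 1 := by
          rw [← sq, ← pow_mul, mul_comm 2 h2, mul_comm h2 2]
          exact pow_n_eq_one hn2 hs0
        rw [hs, hss, mul_one]

include hn2 h1 in
/-- the degree reduction lemma -/
lemma reduce_exponent {γ m : ℕ} (a : Fin m × Fin (2*γ+1) → ℕ) :
    ∃ a' : Fin m × Fin (2*γ+1) → ℕ,
      (∀ y ∈ descM K (2*γ+1) m, ∏ p, y p ^ a' p = ∏ p, y p ^ a p) ∧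
      (∑ p, a' p) + (2*γ+1)*m ≤ m*(((2*γ+1)+γ)*h2) := by
  classical
  set n := 2*h2 with hn
  set r : Fin m × Fin (2*γ+1) → ℕ := fun p => a p % n with hrdef
  set S : Fin m → ℕ := fun j => ∑ i, r (j, i) with hS
  set S' : Fin m → ℕ := fun j => ∑ i, (r (j, i) + h2) % n with hS'
  refine ⟨fun p => if S p.1 ≤ S' p.1 then r p else (r p + h2) % n, fun y hy => ?_, ?_⟩
  · rw [Fintype.prod_prod_type, Fintype.prod_prod_type]
    refine Finset.prod_congr rfl fun j _ => ?_
    by_cases hj : S j ≤ S' j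
    · simp only [hj, if_true]
      exact Finset.prod_congr rfl fun i _ => (pow_mod_n hn2 h1 (hy.1 (j, i)) _).symm
    · simp only [hj, if_false]
      rw [block_flip_prod hn2 h1 hy j]
      exact Finset.prod_congr rfl fun i _ => (pow_mod_n hn2 h1 (hy.1 (j, i)) _).symm
  · rw [Fintype.sum_prod_type]
    have hsum : ∀ j : Fin m, (∑ i, if S (j, i).1 ≤ S' (j, i).1 then r (j, i)
        else (r (j, i) + h2) % n) = min (S j) (S' j) := by
      intro j
      by_cases hj : S j ≤ S' j
      · simp only [hj, if_true]
        exact (min_eq_left hj).symm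
      · simp only [hj, if_false]
        exact (min_eq_right (le_of_not_ge hj)).symm
    rw [Finset.sum_congr rfl fun j (_ : j ∈ Finset.univ) => hsum j]
    have hblock : ∀ j : Fin m, min (S j) (S' j) + (2*γ+1) ≤ ((2*γ+1)+γ)*h2 := by
      intro j
      exact block_min_le (fun i => r (j, i)) h1 fun i => Nat.mod_lt _ (by omega)
    calc (∑ j, min (S j) (S' j)) + (2*γ+1)*m
        = ∑ j : Fin m, (min (S j) (S' j) + (2*γ+1)) := by
          rw [Finset.sum_add_distrib]
          simp [Finset.card_univ, mul_comm]
      _ ≤ ∑ _j : Fin m, ((2*γ+1)+γ)*h2 := Finset.sum_le_sum fun j _ => hblock j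
      _ = m*(((2*γ+1)+γ)*h2) := by simp [Finset.card_univ, mul_comm]


end

section
variable {γ m h2 : ℕ}

def bexp (γ m h2 : ℕ) : Fin m × Fin (2*γ+1) → ℕ :=
  fun p => if (p.2 : ℕ) < γ then 2*h2 - 1 else h2 - 1

/-- single test point -/
lemma single_mem (c : K) (hc : c ≠ 0) (p₀ : Fin m × Fin (2*γ+1)) :
    (fun p => if p = p₀ then c*c else 1) ∈ descM K (2*γ+1) m := by
  constructor
  · intro p
    dsimp only
    split_ifs
    · exact mul_ne_zero hc hc
    · exact one_ne_zero
  · intro j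
    by_cases hj : j = p₀.1
    · subst hj
      have : ∀ i : Fin (2*γ+1), (if ((p₀.1, i) : Fin m × Fin (2*γ+1)) = p₀ then c*c else 1)
          = if i = p₀.2 then c*c else 1 := by
        intro i
        congr 1
        simp [Prod.ext_iff]
      rw [Finset.prod_congr rfl fun i _ => this i, Finset.prod_ite_eq']
      exact ⟨c, by simp⟩
    · have : ∀ i : Fin (2*γ+1), (if ((j, i) : Fin m × Fin (2*γ+1)) = p₀ then c*c else 1)
          = 1 := by
        intro i
        rw [if_neg]
        intro h
        exact hj (congrArg Prod.fst h)
      rw [Finset.prod_congr rfl fun i _ => this i, Finset.prod_const_one]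
      exact ⟨1, (mul_one 1).symm⟩

lemma single_chi (c : K) (a : Fin m × Fin (2*γ+1) → ℕ) (p₀ : Fin m × Fin (2*γ+1)) :
    ∏ p, (if p = p₀ then c*c else 1) ^ a p = c ^ (2 * a p₀) := by
  have : ∀ p : Fin m × Fin (2*γ+1), (if p = p₀ then c*c else 1) ^ a p
      = if p = p₀ then (c*c) ^ a p else 1 := by
    intro p; split_ifs <;> simp
  rw [Finset.prod_congr rfl fun p _ => this p, Finset.prod_ite_eq']
  simp [← mul_pow, ← sq, ← pow_mul, mul_comm]

/-- pair test point -/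
lemma pair_mem (c : K) (hc : c ≠ 0) (p₀ p₁ : Fin m × Fin (2*γ+1)) (hb : p₀.1 = p₁.1) :
    (fun p => (if p = p₀ then c else 1) * (if p = p₁ then c else 1))
      ∈ descM K (2*γ+1) m := by
  constructor
  · intro p
    dsimp only
    apply mul_ne_zero <;> (split_ifs; exacts [hc, one_ne_zero])
  · intro j
    rw [Finset.prod_mul_distrib]
    have h1 : ∀ (p₂ : Fin m × Fin (2*γ+1)),
        (∏ i : Fin (2*γ+1), if ((j, i) : Fin m × Fin (2*γ+1)) = p₂ then c else 1)
        = if j = p₂.1 then c else 1 := by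
      intro p₂
      by_cases hj : j = p₂.1
      · subst hj
        have : ∀ i : Fin (2*γ+1), (if ((p₂.1, i) : Fin m × Fin (2*γ+1)) = p₂ then c else 1)
            = if i = p₂.2 then c else 1 := by
          intro i; congr 1; simp [Prod.ext_iff]
        rw [Finset.prod_congr rfl fun i _ => this i, Finset.prod_ite_eq']
        simp
      · have : ∀ i : Fin (2*γ+1), (if ((j, i) : Fin m × Fin (2*γ+1)) = p₂ then c else 1)
            = 1 := by
          intro i; rw [if_neg]; intro h; exact hj (congrArg Prod.fst h)
        rw [Finset.prod_congr rfl fun i _ => this i, Finset.prod_const_one, if_neg hj]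
    rw [h1 p₀, h1 p₁, hb]
    exact ⟨if j = p₁.1 then c else 1, rfl⟩

lemma pair_chi (c : K) (a : Fin m × Fin (2*γ+1) → ℕ) (p₀ p₁ : Fin m × Fin (2*γ+1)) :
    ∏ p, ((if p = p₀ then c else 1) * (if p = p₁ then c else 1)) ^ a p
      = c ^ (a p₀ + a p₁) := by
  have : ∀ p : Fin m × Fin (2*γ+1), ((if p = p₀ then c else 1) * (if p = p₁ then c else 1)) ^ a p
      = (if p = p₀ then c ^ a p else 1) * (if p = p₁ then c ^ a p else 1) := by
    intro p
    rw [mul_pow]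
    congr 1 <;> (split_ifs <;> simp)
  rw [Finset.prod_congr rfl fun p _ => this p, Finset.prod_mul_distrib,
    Finset.prod_ite_eq', Finset.prod_ite_eq']
  simp [pow_add]


variable (hn2 : Fintype.card K - 1 = 2*h2) (h1 : 1 ≤ h2) (hγ : 1 ≤ γ)

/-- sum of the special exponent over one block -/
lemma bexp_block_sum (j : Fin m) (h1 : 1 ≤ h2) :
    ∑ i : Fin (2*γ+1), bexp γ m h2 (j, i) = γ*(2*h2-1) + (γ+1)*(h2-1) := by
  show ∑ i : Fin (2*γ+1), (if ((i : Fin (2*γ+1)) : ℕ) < γ then 2*h2-1 else h2-1) = _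
  rw [Fin.sum_univ_eq_sum_range (fun t => if t < γ then 2*h2-1 else h2-1) (2*γ+1)]
  rw [Finset.range_eq_Ico, ← Finset.sum_Ico_consecutive _ (Nat.zero_le γ) (by omega : γ ≤ 2*γ+1)]
  congr 1
  · rw [Finset.sum_congr rfl fun t ht => if_pos (Finset.mem_Ico.mp ht).2]
    simp
  · rw [Finset.sum_congr rfl fun t ht => if_neg (by
      have := (Finset.mem_Ico.mp ht).1; omega)]
    simp [Nat.card_Ico]
    omega

/-- the sum of the flip of the special exponent over one block -/
lemma bexp_flip_block_sum (j : Fin m) (h1 : 1 ≤ h2) :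
    ∑ i : Fin (2*γ+1), (if ((i : Fin (2*γ+1)) : ℕ) < γ then h2-1 else 2*h2-1)
      = γ*(h2-1) + (γ+1)*(2*h2-1) := by
  rw [Fin.sum_univ_eq_sum_range (fun t => if t < γ then h2-1 else 2*h2-1) (2*γ+1)]
  rw [Finset.range_eq_Ico, ← Finset.sum_Ico_consecutive _ (Nat.zero_le γ) (by omega : γ ≤ 2*γ+1)]
  congr 1
  · rw [Finset.sum_congr rfl fun t ht => if_pos (Finset.mem_Ico.mp ht).2]
    simp
  · rw [Finset.sum_congr rfl fun t ht => if_neg (by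
      have := (Finset.mem_Ico.mp ht).1; omega)]
    simp [Nat.card_Ico]
    omega

variable (hn2 : Fintype.card K - 1 = 2*h2) (h1 : 1 ≤ h2) (hγ : 1 ≤ γ)

include hn2 h1 hγ in
/-- **rigidity**: any exponent vector with the same monomial function as `bexp` on the
toric set has total degree at least `m*((k+γ)*h2) - k*m` -/
lemma rigidity (a : Fin m × Fin (2*γ+1) → ℕ)
    (hab : ∀ y ∈ descM K (2*γ+1) m, ∏ p, y p ^ a p = ∏ p, y p ^ bexp γ m h2 p) :
    m * (((2*γ+1)+γ)*h2) ≤ (∑ p, a p) + (2*γ+1)*m := by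
  classical
  -- the generator of Kˣ
  obtain ⟨g, hg⟩ := IsCyclic.exists_generator (α := Kˣ)
  have horder : orderOf g = 2*h2 := by
    rw [orderOf_eq_card_of_forall_mem_zpowers hg, Nat.card_eq_fintype_card,
      Fintype.card_units, hn2]
  have hg0 : (g : K) ≠ 0 := Units.ne_zero g
  -- congruence extraction
  have hcong : ∀ s t : ℕ, (g : K) ^ s = (g : K) ^ t → s ≡ t [MOD 2*h2] := by
    intro s t hst
    have : g ^ s = g ^ t := Units.ext (by
      rw [Units.val_pow_eq_pow_val, Units.val_pow_eq_pow_val]; exact hst)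
    rw [← horder]
    exact pow_eq_pow_iff_modEq.mp this
  -- single-point congruences
  have hsingle : ∀ p₀ : Fin m × Fin (2*γ+1), a p₀ % h2 = bexp γ m h2 p₀ % h2 := by
    intro p₀
    have h := hab _ (single_mem (g : K) hg0 p₀)
    rw [single_chi, single_chi] at h
    have := hcong _ _ h
    have h2' : (2 * (a p₀)) % (2*h2) = (2 * (bexp γ m h2 p₀)) % (2*h2) := this
    rw [Nat.mul_mod_mul_left, Nat.mul_mod_mul_left] at h2'
    omega
  -- pair congruences
  have hpair : ∀ p₀ p₁ : Fin m × Fin (2*γ+1), p₀.1 = p₁.1 →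
      (a p₀ + a p₁) % (2*h2) = (bexp γ m h2 p₀ + bexp γ m h2 p₁) % (2*h2) := by
    intro p₀ p₁ hb
    have h := hab _ (pair_mem (g : K) hg0 p₀ p₁ hb)
    rw [pair_chi, pair_chi] at h
    exact hcong _ _ h
  -- per-block bound
  have hblock : ∀ j : Fin m, ((2*γ+1)+γ)*h2 ≤ (∑ i, a (j, i)) + (2*γ+1) := by
    intro j
    set u : Fin (2*γ+1) → ℕ := fun i => a (j, i) % (2*h2) with hu
    have hun : ∀ i, u i < 2*h2 := fun i => Nat.mod_lt _ (by omega)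
    have hau : ∀ i, u i ≤ a (j, i) := fun i => Nat.mod_le _ _
    have hmod : ∀ i, u i % h2 = bexp γ m h2 (j, i) % h2 := by
      intro i
      rw [hu]
      rw [Nat.mod_mod_of_dvd _ ⟨2, by ring⟩]
      exact hsingle (j, i)
    -- each u i is either the b-value or its flip
    have hopt : ∀ i : Fin (2*γ+1), u i = bexp γ m h2 (j, i)
        ∨ (bexp γ m h2 (j, i) = 2*h2-1 ∧ u i = h2-1)
        ∨ (bexp γ m h2 (j, i) = h2-1 ∧ u i = 2*h2-1) := by
      intro i
      have hv : bexp γ m h2 (j, i) = 2*h2-1 ∨ bexp γ m h2 (j, i) = h2-1 := by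
        unfold bexp; split_ifs <;> simp
      have hmodi := hmod i
      have huilt := hun i
      have hdm := Nat.div_add_mod (u i) h2
      have hlt2 : u i / h2 < 2 := by
        rw [Nat.div_lt_iff_lt_mul (by omega)]; omega
      have hbm : bexp γ m h2 (j, i) % h2 = h2 - 1 := by
        rcases hv with hv | hv <;> rw [hv]
        · have : 2*h2-1 = h2 + (h2-1) := by omega
          rw [this, Nat.add_mod_left]
          exact Nat.mod_eq_of_lt (by omega)
        · exact Nat.mod_eq_of_lt (by omega)
      rw [hbm] at hmodi
      interval_cases hui : (u i / h2) <;> rcases hv with hv | hv <;> omega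
    -- pair rigidity: the choice is consistent across the block
    have hpairu : ∀ i i' : Fin (2*γ+1), (u i + u i') % (2*h2)
        = (bexp γ m h2 (j, i) + bexp γ m h2 (j, i')) % (2*h2) := by
      intro i i'
      have := hpair (j, i) (j, i') rfl
      calc (u i + u i') % (2*h2) = (a (j,i) + a (j,i')) % (2*h2) := by
            rw [hu]; simp [Nat.add_mod]
        _ = _ := this
    by_cases hall : ∀ i, u i = bexp γ m h2 (j, i)
    · -- unflipped case
      have : ∑ i, u i = γ*(2*h2-1) + (γ+1)*(h2-1) := by
        rw [Finset.sum_congr rfl fun i _ => hall i]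
        exact bexp_block_sum j h1
      have hle : γ*(2*h2-1) + (γ+1)*(h2-1) ≤ ∑ i, a (j, i) := by
        rw [← this]; exact Finset.sum_le_sum fun i _ => hau i
      obtain ⟨c, rfl⟩ : ∃ c, h2 = c + 1 := ⟨h2-1, by omega⟩
      have hring : ((2*γ+1)+γ)*(c+1) = γ*(2*(c+1)-1) + (γ+1)*((c+1)-1) + (2*γ+1) := by
        have e1 : 2*(c+1)-1 = 2*c+1 := by omega
        have e2 : (c+1)-1 = c := by omega
        rw [e1, e2]; ring
      omega
    · -- flipped case
      push_neg at hall
      obtain ⟨i₀, hi₀⟩ := hall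
      have hflip : ∀ i, u i = (if ((i : Fin (2*γ+1)) : ℕ) < γ then h2-1 else 2*h2-1) := by
        intro i
        have hfi : ∀ i', u i' ≠ bexp γ m h2 (j, i') →
            u i' = (if ((i' : Fin (2*γ+1)) : ℕ) < γ then h2-1 else 2*h2-1) := by
          intro i' hne
          rcases hopt i' with h | ⟨hb', hu'⟩ | ⟨hb', hu'⟩
          · exact absurd h hne
          · rw [hu']
            unfold bexp at hb'
            split_ifs with hcond
            · rfl
            · unfold bexp at hne
              rw [if_neg hcond] at hne
              exfalso
              rw [if_neg hcond] at hb'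
              omega
          · rw [hu']
            unfold bexp at hb'
            split_ifs with hcond
            · rw [if_pos hcond] at hb'
              exfalso; omega
            · rfl
        by_cases hne : u i = bexp γ m h2 (j, i)
        · -- show this case is impossible unless i = i₀ pattern matches; use pair with i₀
          exfalso
          have hp := hpairu i i₀
          have hui₀ := hfi i₀ hi₀
          -- u i = b i, u i₀ = flip b i₀, b i + flip b i₀ ≢ b i + b i₀
          rw [hne, hui₀] at hp
          have hblt₀ : bexp γ m h2 (j, i₀) < 2*h2 := by
            unfold bexp; split_ifs <;> omega
          have hfltt : (if ((i₀ : Fin (2*γ+1)) : ℕ) < γ then h2-1 else 2*h2-1) < 2*h2 := by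
            split_ifs <;> omega
          have hmodeq : (if ((i₀ : Fin (2*γ+1)) : ℕ) < γ then h2-1 else 2*h2-1)
              ≡ bexp γ m h2 (j, i₀) [MOD 2*h2] :=
            Nat.ModEq.add_left_cancel' _ hp
          have hbneq : (if ((i₀ : Fin (2*γ+1)) : ℕ) < γ then h2-1 else 2*h2-1) ≠
              bexp γ m h2 (j, i₀) := by
            intro h
            apply hi₀
            rw [hui₀, h]
          exact hbneq (hmodeq.eq_of_lt_of_lt hfltt hblt₀)
        · exact hfi i hne
      have : ∑ i, u i = γ*(h2-1) + (γ+1)*(2*h2-1) := by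
        rw [Finset.sum_congr rfl fun i _ => hflip i]
        exact bexp_flip_block_sum j h1
      have hle : γ*(h2-1) + (γ+1)*(2*h2-1) ≤ ∑ i, a (j, i) := by
        rw [← this]; exact Finset.sum_le_sum fun i _ => hau i
      obtain ⟨c, rfl⟩ : ∃ c, h2 = c + 1 := ⟨h2-1, by omega⟩
      have e1 : 2*(c+1)-1 = 2*c+1 := by omega
      have e2 : (c+1)-1 = c := by omega
      rw [e1, e2] at hle
      nlinarith [hle]
  -- sum over blocks
  rw [Fintype.sum_prod_type]
  calc m * (((2*γ+1)+γ)*h2) = ∑ _j : Fin m, ((2*γ+1)+γ)*h2 := by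
        simp [Finset.card_univ, mul_comm]
    _ ≤ ∑ j : Fin m, ((∑ i, a (j, i)) + (2*γ+1)) := Finset.sum_le_sum fun j _ => hblock j
    _ = (∑ j : Fin m, ∑ i, a (j, i)) + (2*γ+1)*m := by
      rw [Finset.sum_add_distrib]
      simp [Finset.card_univ, mul_comm]


end

/-- the monomial character on the toric submonoid -/
def chiHom (k m : ℕ) (a : Fin m × Fin k → ℕ) : ↥(descM K k m) →* K where
  toFun y := ∏ p, (y : Fin m × Fin k → K) p ^ a p
  map_one' := by simp
  map_mul' y z := by
    simp only [Submonoid.coe_mul, Pi.mul_apply, mul_pow]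
    rw [Finset.prod_mul_distrib]

end fieldnum

end CyclesAux

/-- Let `𝒢` be a graph with `m` connected components, each an odd cycle of
length `k = 2γ+1`. The regularity index of `I(X*_𝒢)` — the least `p ≥ 0` such that
`H_{X*_𝒢}(d) = |X*_𝒢|` for all `d ≥ p` — equals `m(k+γ)(q−1)/2 − km`. -/
theorem regularity_cyclesToricSet (q k m γ : ℕ) (hγ : 1 ≤ γ) (hk : k = 2 * γ + 1) (hm : 1 ≤ m)
    (K : Type) [Field K] [Fintype K] (hq : Fintype.card K = q) (hq2 : 2 ∣ q - 1) :
    IsLeast {p : ℕ | ∀ d : ℕ, p ≤ d →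
        affineHilbertFunction K (cyclesToricSet K k m) d = (cyclesToricSet K k m).ncard}
      (m * (k + γ) * ((q - 1) / 2) - k * m) := by
  classical
  subst hk
  subst hq
  obtain ⟨h2, hh2⟩ := hq2
  have hcard : 2 ≤ Fintype.card K := Fintype.one_lt_card
  have h1 : 1 ≤ h2 := by omega
  have hdiv : (Fintype.card K - 1) / 2 = h2 := by omega
  rw [hdiv, CyclesAux.cyclesToricSet_eq K γ m]
  set X : Set (Fin m × Fin (2*γ+1) → K) := ↑(CyclesAux.descM K (2*γ+1) m) with hX
  haveI : Fintype ↥X := Fintype.ofFinite _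
  have hassoc : m * ((2*γ+1) + γ) * h2 = m * (((2*γ+1)+γ) * h2) := by ring
  have hcardX : X.ncard = Module.finrank K (↥X → K) := by
    rw [Module.finrank_pi, ← Nat.card_eq_fintype_card, Nat.card_coe_set_eq]
  have hPpos : (2*γ+1)*m + 1 ≤ m * (((2*γ+1)+γ)*h2) := by
    have hb : (2*γ+1) + 1 ≤ ((2*γ+1)+γ)*h2 := by nlinarith
    calc (2*γ+1)*m + 1 ≤ ((2*γ+1)+1)*m := by nlinarith
      _ ≤ (((2*γ+1)+γ)*h2)*m := Nat.mul_le_mul_right _ (by omega)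
      _ = m * (((2*γ+1)+γ)*h2) := Nat.mul_comm _ _
  constructor
  · -- membership: the Hilbert function stabilizes from the claimed degree on
    intro d hd
    rw [CyclesAux.hilbert_eq_finrank_range, CyclesAux.range_ev_comp]
    have hspan : Submodule.span K (CyclesAux.psi X '' {a | ∑ p, a p ≤ d}) = ⊤ := by
      rw [eq_top_iff, ← CyclesAux.span_psi_univ X]
      apply Submodule.span_le.mpr
      rintro _ ⟨a, rfl⟩
      obtain ⟨a', ha'eq, ha'deg⟩ := CyclesAux.reduce_exponent hh2 h1 (γ := γ) (m := m) a
      have hpsieq : CyclesAux.psi X a = CyclesAux.psi X a' := by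
        funext y
        exact (ha'eq _ y.2).symm
      rw [hpsieq]
      apply Submodule.subset_span
      refine ⟨a', ?_, rfl⟩
      simp only [Set.mem_setOf_eq]
      rw [hassoc] at hd
      omega
    rw [hspan, finrank_top]
    exact hcardX.symm
  · -- lower bound: below the claimed degree the Hilbert function is strictly smaller
    intro p' hp'
    by_contra hlt
    push_neg at hlt
    have hd := hp' (m * ((2*γ+1) + γ) * h2 - (2*γ+1) * m - 1) (by omega)
    rw [CyclesAux.hilbert_eq_finrank_range, CyclesAux.range_ev_comp] at hd
    set chib := CyclesAux.chiHom (K := K) (2*γ+1) m (CyclesAux.bexp γ m h2) with hchib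
    have hsub : CyclesAux.psi X '' {a | ∑ p, a p ≤ m * ((2*γ+1) + γ) * h2 - (2*γ+1) * m - 1}
        ⊆ (fun χ : ↥(CyclesAux.descM K (2*γ+1) m) →* K => ⇑χ) '' {χ | χ ≠ chib} := by
      rintro _ ⟨a, ha, rfl⟩
      refine ⟨CyclesAux.chiHom (2*γ+1) m a, ?_, rfl⟩
      simp only [Set.mem_setOf_eq]
      intro heq
      have hab : ∀ y ∈ CyclesAux.descM K (2*γ+1) m,
          ∏ p, y p ^ a p = ∏ p, y p ^ CyclesAux.bexp γ m h2 p := fun y hy =>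
        DFunLike.congr_fun heq (⟨y, hy⟩ : ↥(CyclesAux.descM K (2*γ+1) m))
      have hrig := CyclesAux.rigidity hh2 h1 hγ a hab
      simp only [Set.mem_setOf_eq] at ha
      rw [hassoc] at ha
      clear hd hp'
      omega
    have hnotmem : ⇑chib ∉ Submodule.span K
        (CyclesAux.psi X '' {a | ∑ p, a p ≤ m * ((2*γ+1) + γ) * h2 - (2*γ+1) * m - 1}) := by
      intro hmem
      exact (linearIndependent_monoidHom (↥(CyclesAux.descM K (2*γ+1) m)) K).notMem_span_image
        (s := {χ | χ ≠ chib}) (by simp) (Submodule.span_mono hsub hmem)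
    have hlt2 : Submodule.span K
        (CyclesAux.psi X '' {a | ∑ p, a p ≤ m * ((2*γ+1) + γ) * h2 - (2*γ+1) * m - 1}) < ⊤ := by
      rw [lt_top_iff_ne_top]
      intro htop
      exact hnotmem (htop ▸ Submodule.mem_top)
    have hfr := Submodule.finrank_lt (K := K) (V := ↥X → K) hlt2.ne
    rw [← hcardX] at hfr
    exact ne_of_lt hfr hd
end
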